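/- arXiv:1405.4693 — 7 statements merged into one kernel-verified Lean document; each statement's English description precedes it below -/
import Mathlib

section
/- For every x ∈ [0,1] and every n ∈ ℕ the following estimates hold: p_{2n+1}(x) ≤ q_2(x)^n / n!, q_{2n+1}(x) ≤ p_2(x)^n / n!, p_{2n}(x) ≤ p_2(x)^n / n!, and q_{2n}(x) ≤ q_2(x)^n / n!. -/
open MeasureTheory Set ENNReal

section Aux

lemma aux_intOn {ν : Measure ℝ} [IsFiniteMeasure ν] {f : ℝ → ℝ} {s : Set ℝ}
    (hs : MeasurableSet s) (hfm : Measurable f) (C : ℝ) (hC : ∀ t ∈ s, |f t| ≤ C) :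
    IntegrableOn f s ν :=
  Integrable.mono' (integrable_const C) hfm.aestronglyMeasurable
    ((ae_restrict_iff' hs).2 (Filter.Eventually.of_forall fun t ht => by
      rw [Real.norm_eq_abs]; exact hC t ht))

lemma aux_intOn_mono {ν : Measure ℝ} [IsFiniteMeasure ν] {f : ℝ → ℝ}
    (hf : Monotone f) (y : ℝ) : IntegrableOn f (Set.Icc 0 y) ν :=
  aux_intOn measurableSet_Icc hf.measurable (max |f 0| |f y|)
    (fun t ht => abs_le_max_abs_abs (hf ht.1) (hf ht.2))

lemma aux_mu_step (μ : Measure ℝ) [IsFiniteMeasure μ] {f : ℝ → ℝ}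
    (hf : Monotone f) (h0 : ∀ t, 0 ≤ t → 0 ≤ f t) :
    Monotone (fun x => ∫ t in Set.Icc 0 x, f t ∂μ) ∧
      (∀ x : ℝ, 0 ≤ ∫ t in Set.Icc 0 x, f t ∂μ) := by
  constructor
  · intro x y hxy
    exact setIntegral_mono_set (aux_intOn_mono hf y)
      ((ae_restrict_iff' measurableSet_Icc).2 (Filter.Eventually.of_forall fun t ht => h0 t ht.1))
      (HasSubset.Subset.eventuallyLE (Set.Icc_subset_Icc le_rfl hxy))
  · intro x
    exact setIntegral_nonneg measurableSet_Icc fun t ht => h0 t ht.1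

lemma aux_leb_step {f : ℝ → ℝ} (hf : Monotone f) (h0 : ∀ t, 0 ≤ f t) :
    Monotone (fun x => ∫ t in (0:ℝ)..x, f t) ∧
      (∀ x : ℝ, 0 ≤ x → 0 ≤ ∫ t in (0:ℝ)..x, f t) := by
  constructor
  · intro x y hxy
    show (∫ t in (0:ℝ)..x, f t) ≤ ∫ t in (0:ℝ)..y, f t
    have h1 := intervalIntegral.integral_add_adjacent_intervals
      (hf.intervalIntegrable (μ := volume) (a := 0) (b := x)) (hf.intervalIntegrable (μ := volume) (a := x) (b := y))
    have h2 : 0 ≤ ∫ t in x..y, f t := intervalIntegral.integral_nonneg hxy fun t _ => h0 t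
    linarith
  · intro x hx
    exact intervalIntegral.integral_nonneg hx fun t _ => h0 t

lemma aux_p_struct (μ : Measure ℝ) [IsFiniteMeasure μ] (p : ℕ → ℝ → ℝ)
    (hp0 : ∀ x : ℝ, p 0 x = 1)
    (hpodd : ∀ (n : ℕ) (x : ℝ), p (2*n+1) x = ∫ t in Set.Icc (0:ℝ) x, p (2*n) t ∂μ)
    (hpeven : ∀ (n : ℕ) (x : ℝ), p (2*n+2) x = ∫ t in (0:ℝ)..x, p (2*n+1) t) :
    ∀ n : ℕ, (Monotone (p (2*n)) ∧ ∀ x : ℝ, 0 ≤ x → 0 ≤ p (2*n) x) ∧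
      (Monotone (p (2*n+1)) ∧ ∀ x : ℝ, 0 ≤ p (2*n+1) x) := by
  intro n
  induction n with
  | zero =>
    have h0 : p 0 = fun _ => 1 := funext hp0
    have hbase : Monotone (p (2*0)) ∧ ∀ x : ℝ, 0 ≤ x → 0 ≤ p (2*0) x := by
      rw [show 2*0 = 0 from rfl, h0]
      exact ⟨monotone_const, fun x _ => zero_le_one⟩
    refine ⟨hbase, ?_⟩
    have h1 : p (2*0+1) = fun x => ∫ t in Set.Icc (0:ℝ) x, p (2*0) t ∂μ := funext (hpodd 0)
    rw [h1]
    exact aux_mu_step μ hbase.1 hbase.2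
  | succ n ih =>
    have h2 : Monotone (p (2*(n+1))) ∧ ∀ x : ℝ, 0 ≤ x → 0 ≤ p (2*(n+1)) x := by
      have he : p (2*(n+1)) = fun x => ∫ t in (0:ℝ)..x, p (2*n+1) t := by
        funext x; rw [show 2*(n+1) = 2*n+2 from by ring]; exact hpeven n x
      rw [he]
      exact aux_leb_step ih.2.1 ih.2.2
    refine ⟨h2, ?_⟩
    have ho : p (2*(n+1)+1) = fun x => ∫ t in Set.Icc (0:ℝ) x, p (2*(n+1)) t ∂μ :=
      funext (hpodd (n+1))
    rw [ho]
    exact aux_mu_step μ h2.1 h2.2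

lemma aux_q_struct (μ : Measure ℝ) [IsFiniteMeasure μ] (q : ℕ → ℝ → ℝ)
    (hq0 : ∀ x : ℝ, q 0 x = 1)
    (hqodd : ∀ (n : ℕ) (x : ℝ), q (2*n+1) x = ∫ t in (0:ℝ)..x, q (2*n) t)
    (hqeven : ∀ (n : ℕ) (x : ℝ), q (2*n+2) x = ∫ t in Set.Icc (0:ℝ) x, q (2*n+1) t ∂μ) :
    ∀ n : ℕ, (Monotone (q (2*n)) ∧ ∀ x : ℝ, 0 ≤ q (2*n) x) ∧
      (Monotone (q (2*n+1)) ∧ ∀ x : ℝ, 0 ≤ x → 0 ≤ q (2*n+1) x) := by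
  intro n
  induction n with
  | zero =>
    have h0 : q 0 = fun _ => 1 := funext hq0
    have hbase : Monotone (q (2*0)) ∧ ∀ x : ℝ, 0 ≤ q (2*0) x := by
      rw [show 2*0 = 0 from rfl, h0]
      exact ⟨monotone_const, fun x => zero_le_one⟩
    refine ⟨hbase, ?_⟩
    have h1 : q (2*0+1) = fun x => ∫ t in (0:ℝ)..x, q (2*0) t := funext (hqodd 0)
    rw [h1]
    exact aux_leb_step hbase.1 hbase.2
  | succ n ih =>
    have h2 : Monotone (q (2*(n+1))) ∧ ∀ x : ℝ, 0 ≤ q (2*(n+1)) x := by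
      have he : q (2*(n+1)) = fun x => ∫ t in Set.Icc (0:ℝ) x, q (2*n+1) t ∂μ := by
        funext x; rw [show 2*(n+1) = 2*n+2 from by ring]; exact hqeven n x
      rw [he]
      exact aux_mu_step μ ih.2.1 ih.2.2
    refine ⟨h2, ?_⟩
    have ho : q (2*(n+1)+1) = fun x => ∫ t in (0:ℝ)..x, q (2*(n+1)) t := funext (hqodd (n+1))
    rw [ho]
    exact aux_leb_step h2.1 h2.2

end Aux
open MeasureTheory Set ENNReal

lemma aux_key (ν : Measure ℝ) [SFinite ν] [NullSingletonClass ν] (x : ℝ) :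
    ∀ (n : ℕ) (a : ℝ), 0 ≤ a → a ≤ x →
      (n + 1 : ℝ≥0∞) * (∫⁻ t in Set.Ioc a x, (ν (Set.Icc 0 t)) ^ n ∂ν)
          + (ν (Set.Icc 0 a)) ^ (n + 1)
        ≤ (ν (Set.Icc 0 x)) ^ (n + 1) := by
  have hgm : Monotone fun t => ν (Set.Icc 0 t) :=
    fun s t hst => measure_mono (Set.Icc_subset_Icc le_rfl hst)
  have hg : Measurable fun t => ν (Set.Icc 0 t) := hgm.measurable
  have hsplit : ∀ a t : ℝ, 0 ≤ a → a ≤ t →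
      ν (Set.Icc 0 t) = ν (Set.Icc 0 a) + ν (Set.Ioc a t) := by
    intro a t ha hat
    rw [← Set.Icc_union_Ioc_eq_Icc ha hat]
    exact measure_union (by
      rw [Set.disjoint_left]; intro s hs hs'; exact absurd hs.2 (not_le.2 hs'.1))
      measurableSet_Ioc
  intro n
  induction n with
  | zero =>
    intro a ha hax
    simp only [pow_zero, pow_one, Nat.cast_zero, zero_add, one_mul, lintegral_one,
      Measure.restrict_apply_univ]
    rw [hsplit a x ha hax, add_comm]
  | succ n ih =>
    intro a ha hax
    have hAm : MeasurableSet (Set.Ioc a x) := measurableSet_Ioc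
    set K : ℝ≥0∞ := ∫⁻ t in Set.Ioc a x, (ν (Set.Icc 0 t)) ^ n ∂ν with hK
    set I : ℝ≥0∞ := ∫⁻ t in Set.Ioc a x, (ν (Set.Icc 0 t)) ^ (n + 1) ∂ν with hI
    set J : ℝ≥0∞ := ∫⁻ t in Set.Ioc a x, (ν (Set.Icc 0 t)) ^ n * ν (Set.Ioc a t) ∂ν with hJ
    -- Step 1 : I = K * ν (Icc 0 a) + J
    have step1 : I = K * ν (Set.Icc 0 a) + J := by
      have hpt : ∀ t ∈ Set.Ioc a x, (ν (Set.Icc 0 t)) ^ (n + 1)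
          = (ν (Set.Icc 0 t)) ^ n * ν (Set.Icc 0 a)
            + (ν (Set.Icc 0 t)) ^ n * ν (Set.Ioc a t) := by
        intro t ht
        rw [← mul_add, ← hsplit a t ha ht.1.le, ← pow_succ]
      rw [hI, setLIntegral_congr_fun hAm hpt,
        lintegral_add_left ((hg.pow_const n).mul_const _)]
      congr 1
      rw [hK, lintegral_mul_const _ (hg.pow_const n)]
    -- Step 2 : J as iterated integral, swapped
    have hswap : J = ∫⁻ s in Set.Ioc a x, (∫⁻ t in Set.Ioc s x, (ν (Set.Icc 0 t)) ^ n ∂ν) ∂ν := by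
      have e1 : J = ∫⁻ t in Set.Ioc a x, ∫⁻ s in Set.Ioc a x,
          ((Set.Iic t).indicator (fun _ => (ν (Set.Icc 0 t)) ^ n)) s ∂ν ∂ν := by
        rw [hJ]
        refine setLIntegral_congr_fun hAm (fun t ht => ?_)
        have hint : Set.Iic t ∩ Set.Ioc a x = Set.Ioc a t := by
          ext s; constructor
          · rintro ⟨h1, h2, h3⟩; exact ⟨h2, h1⟩
          · rintro ⟨h1, h2⟩; exact ⟨h2, h1, h2.trans ht.2⟩
        rw [lintegral_indicator measurableSet_Iic, setLIntegral_const,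
          Measure.restrict_apply measurableSet_Iic, hint]
      have e2 : (∫⁻ t in Set.Ioc a x, ∫⁻ s in Set.Ioc a x,
            ((Set.Iic t).indicator (fun _ => (ν (Set.Icc 0 t)) ^ n)) s ∂ν ∂ν)
          = ∫⁻ s in Set.Ioc a x, ∫⁻ t in Set.Ioc a x,
            ((Set.Iic t).indicator (fun _ => (ν (Set.Icc 0 t)) ^ n)) s ∂ν ∂ν := by
        apply lintegral_lintegral_swap
        have : (Function.uncurry fun t s =>
              ((Set.Iic t).indicator (fun _ => (ν (Set.Icc 0 t)) ^ n)) s)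
            = ({p : ℝ × ℝ | p.2 ≤ p.1}).indicator (fun p => (ν (Set.Icc 0 p.1)) ^ n) := by
          ext p
          by_cases h : p.2 ≤ p.1 <;>
            simp [Function.uncurry, Set.indicator_apply, h, Set.mem_Iic]
        rw [this]
        exact (Measurable.indicator ((hg.comp measurable_fst).pow_const n)
          (measurableSet_le measurable_snd measurable_fst)).aemeasurable
      rw [e1, e2]
      refine setLIntegral_congr_fun hAm (fun s hs => ?_)
      have hfun : ∀ t : ℝ, ((Set.Iic t).indicator (fun _ => (ν (Set.Icc 0 t)) ^ n)) s
          = (Set.Ici s).indicator (fun t => (ν (Set.Icc 0 t)) ^ n) t := by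
        intro t
        by_cases h : s ≤ t <;> simp [Set.indicator_apply, h, Set.mem_Iic, Set.mem_Ici]
      have h1 : Set.Ici s ∩ Set.Ioc a x = Set.Icc s x := by
        ext t; constructor
        · rintro ⟨u1, _, u3⟩; exact ⟨u1, u3⟩
        · rintro ⟨u1, u2⟩; exact ⟨u1, hs.1.trans_le u1, u2⟩
      rw [lintegral_congr hfun, lintegral_indicator measurableSet_Ici,
        Measure.restrict_restrict measurableSet_Ici, h1,
        Measure.restrict_congr_set Ioc_ae_eq_Icc.symm]
    have step2 : (n + 1 : ℝ≥0∞) * J + I ≤ ν (Set.Ioc a x) * (ν (Set.Icc 0 x)) ^ (n + 1) := by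
      have h1 : ∀ s ∈ Set.Ioc a x,
          (n + 1 : ℝ≥0∞) * (∫⁻ t in Set.Ioc s x, (ν (Set.Icc 0 t)) ^ n ∂ν)
            + (ν (Set.Icc 0 s)) ^ (n + 1)
          ≤ (ν (Set.Icc 0 x)) ^ (n + 1) := fun s hs => ih s (ha.trans hs.1.le) hs.2
      calc (n + 1 : ℝ≥0∞) * J + I
          = ∫⁻ s in Set.Ioc a x,
              ((n + 1 : ℝ≥0∞) * (∫⁻ t in Set.Ioc s x, (ν (Set.Icc 0 t)) ^ n ∂ν)
                + (ν (Set.Icc 0 s)) ^ (n + 1)) ∂ν := by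
            rw [lintegral_add_right _ (hg.pow_const (n + 1)),
              lintegral_const_mul' _ _ (by simp : (n + 1 : ℝ≥0∞) ≠ ⊤), ← hswap, hI]
        _ ≤ ∫⁻ _ in Set.Ioc a x, (ν (Set.Icc 0 x)) ^ (n + 1) ∂ν := setLIntegral_mono' hAm h1
        _ = ν (Set.Ioc a x) * (ν (Set.Icc 0 x)) ^ (n + 1) := by
            rw [setLIntegral_const, mul_comm]
    -- assembly
    have hsum : ν (Set.Icc 0 a) + ν (Set.Ioc a x) = ν (Set.Icc 0 x) := (hsplit a x ha hax).symm
    have iha : (n + 1 : ℝ≥0∞) * K + (ν (Set.Icc 0 a)) ^ (n + 1)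
        ≤ (ν (Set.Icc 0 x)) ^ (n + 1) := ih a ha hax
    have main : ((n : ℝ≥0∞) + 1 + 1) * I + (ν (Set.Icc 0 a)) ^ (n + 1 + 1)
        ≤ (ν (Set.Icc 0 x)) ^ (n + 1 + 1) := by
      calc ((n : ℝ≥0∞) + 1 + 1) * I + (ν (Set.Icc 0 a)) ^ (n + 1 + 1)
          = ((n + 1 : ℝ≥0∞) * K) * ν (Set.Icc 0 a) + (((n : ℝ≥0∞) + 1) * J + I)
              + (ν (Set.Icc 0 a)) ^ (n + 1) * ν (Set.Icc 0 a) := by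
            rw [step1]; ring
        _ ≤ ((n + 1 : ℝ≥0∞) * K) * ν (Set.Icc 0 a)
              + ν (Set.Ioc a x) * (ν (Set.Icc 0 x)) ^ (n + 1)
              + (ν (Set.Icc 0 a)) ^ (n + 1) * ν (Set.Icc 0 a) := by
            gcongr
        _ = ((n + 1 : ℝ≥0∞) * K + (ν (Set.Icc 0 a)) ^ (n + 1)) * ν (Set.Icc 0 a)
              + ν (Set.Ioc a x) * (ν (Set.Icc 0 x)) ^ (n + 1) := by ring
        _ ≤ (ν (Set.Icc 0 x)) ^ (n + 1) * ν (Set.Icc 0 a)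
              + ν (Set.Ioc a x) * (ν (Set.Icc 0 x)) ^ (n + 1) := by gcongr
        _ = (ν (Set.Icc 0 x)) ^ (n + 1) * (ν (Set.Icc 0 a) + ν (Set.Ioc a x)) := by ring
        _ = (ν (Set.Icc 0 x)) ^ (n + 1) * ν (Set.Icc 0 x) := by rw [hsum]
        _ = (ν (Set.Icc 0 x)) ^ (n + 1 + 1) := by ring
    convert main using 2 <;> push_cast <;> ring

lemma aux_bridge (ρ : Measure ℝ) [IsFiniteMeasure ρ] [NullSingletonClass ρ]
    (w : ℝ → ℝ) (hwm : Measurable w) (hw0 : ∀ t, 0 ≤ t → 0 ≤ w t)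
    (hint : ∀ t, IntegrableOn w (Set.Icc 0 t) ρ)
    (x : ℝ) (hx : 0 ≤ x) (n : ℕ) :
    (n + 1 : ℝ) * ∫ t in Set.Icc 0 x, w t * (∫ s in Set.Icc 0 t, w s ∂ρ) ^ n ∂ρ
      ≤ (∫ s in Set.Icc 0 x, w s ∂ρ) ^ (n + 1) := by
  set G : ℝ → ℝ := fun t => ∫ s in Set.Icc 0 t, w s ∂ρ with hGdef
  have hnnres : ∀ t : ℝ, 0 ≤ᵐ[ρ.restrict (Set.Icc 0 t)] w := fun t =>
    (ae_restrict_iff' measurableSet_Icc).2 (Filter.Eventually.of_forall fun s hs => hw0 s hs.1)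
  have hG0 : ∀ t, 0 ≤ G t := fun t =>
    setIntegral_nonneg measurableSet_Icc fun s hs => hw0 s hs.1
  have hGmono : Monotone G := by
    intro s t hst
    exact setIntegral_mono_set (hint t) (hnnres t)
      (HasSubset.Subset.eventuallyLE (Set.Icc_subset_Icc le_rfl hst))
  have hGmeas : Measurable G := hGmono.measurable
  set ν : Measure ℝ := ρ.withDensity (fun t => ENNReal.ofReal (w t)) with hνdef
  haveI : SFinite ν := by rw [hνdef]; infer_instance
  haveI : NullSingletonClass ν := by
    constructor
    intro a
    rw [hνdef, withDensity_apply _ (measurableSet_singleton a),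
      Measure.restrict_eq_zero.2 (measure_singleton a), lintegral_zero_measure]
  have hν : ∀ t : ℝ, ν (Set.Icc 0 t) = ENNReal.ofReal (G t) := by
    intro t
    rw [hνdef, withDensity_apply _ measurableSet_Icc,
      ← ofReal_integral_eq_lintegral_ofReal (hint t) (hnnres t)]
  have hkey := aux_key ν x n 0 le_rfl hx
  rw [Set.Icc_self, measure_singleton, zero_pow (Nat.succ_ne_zero n), add_zero] at hkey
  -- rewrite the lintegral
  have hmonoν : Measurable fun t => ν (Set.Icc 0 t) :=
    (Monotone.measurable fun s t hst => measure_mono (Set.Icc_subset_Icc le_rfl hst))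
  have hL : (∫⁻ t in Set.Ioc 0 x, (ν (Set.Icc 0 t)) ^ n ∂ν)
      = ENNReal.ofReal (∫ t in Set.Ioc 0 x, w t * G t ^ n ∂ρ) := by
    have hint2 : IntegrableOn (fun t => w t * G t ^ n) (Set.Ioc 0 x) ρ := by
      have hb : ∀ᵐ t ∂(ρ.restrict (Set.Ioc 0 x)), ‖G t ^ n‖ ≤ G x ^ n := by
        refine (ae_restrict_iff' measurableSet_Ioc).2 (Filter.Eventually.of_forall fun t ht => ?_)
        rw [Real.norm_eq_abs, abs_of_nonneg (pow_nonneg (hG0 t) n)]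
        exact pow_le_pow_left₀ (hG0 t) (hGmono ht.2) n
      have := Integrable.bdd_mul ((hint x).mono_set Set.Ioc_subset_Icc_self)
        ((hGmeas.pow_const n).aestronglyMeasurable) hb
      simpa [mul_comm, IntegrableOn] using this
    have hnn2 : 0 ≤ᵐ[ρ.restrict (Set.Ioc 0 x)] fun t => w t * G t ^ n := by
      refine (ae_restrict_iff' measurableSet_Ioc).2 (Filter.Eventually.of_forall fun t ht => ?_)
      exact mul_nonneg (hw0 t ht.1.le) (pow_nonneg (hG0 t) n)
    rw [hνdef, restrict_withDensity measurableSet_Ioc,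
      lintegral_withDensity_eq_lintegral_mul _ hwm.ennreal_ofReal (hmonoν.pow_const n),
      ofReal_integral_eq_lintegral_ofReal hint2 hnn2]
    refine setLIntegral_congr_fun measurableSet_Ioc (fun t ht => ?_)
    simp only [Pi.mul_apply]
    rw [hν t, ← ENNReal.ofReal_pow (hG0 t), ← ENNReal.ofReal_mul (hw0 t ht.1.le)]
  rw [hL, hν x] at hkey
  have hcast : (n + 1 : ℝ≥0∞) = ENNReal.ofReal ((n : ℝ) + 1) := by
    rw [ENNReal.ofReal_add (by positivity) zero_le_one, ENNReal.ofReal_natCast,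
      ENNReal.ofReal_one]
  rw [hcast, ← ENNReal.ofReal_mul (by positivity : (0:ℝ) ≤ (n:ℝ) + 1), ← ENNReal.ofReal_pow (hG0 x)] at hkey
  have := (ENNReal.ofReal_le_ofReal_iff (pow_nonneg (hG0 x) _)).1 hkey
  rwa [integral_Icc_eq_integral_Ioc]
theorem stmt_0
    (μ : Measure ℝ) [IsProbabilityMeasure μ] [NullSingletonClass μ]
    (hsupp : μ (Set.Icc (0:ℝ) 1)ᶜ = 0)
    (p q : ℕ → ℝ → ℝ)
    (hp0 : ∀ x : ℝ, p 0 x = 1) (hq0 : ∀ x : ℝ, q 0 x = 1)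
    (hpodd : ∀ (n : ℕ) (x : ℝ), p (2*n+1) x = ∫ t in Set.Icc (0:ℝ) x, p (2*n) t ∂μ)
    (hpeven : ∀ (n : ℕ) (x : ℝ), p (2*n+2) x = ∫ t in (0:ℝ)..x, p (2*n+1) t)
    (hqodd : ∀ (n : ℕ) (x : ℝ), q (2*n+1) x = ∫ t in (0:ℝ)..x, q (2*n) t)
    (hqeven : ∀ (n : ℕ) (x : ℝ), q (2*n+2) x = ∫ t in Set.Icc (0:ℝ) x, q (2*n+1) t ∂μ) :
    ∀ x ∈ Set.Icc (0:ℝ) 1, ∀ n : ℕ,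
      p (2*n+1) x ≤ q 2 x ^ n / (n.factorial : ℝ) ∧
      q (2*n+1) x ≤ p 2 x ^ n / (n.factorial : ℝ) ∧
      p (2*n) x ≤ p 2 x ^ n / (n.factorial : ℝ) ∧
      q (2*n) x ≤ q 2 x ^ n / (n.factorial : ℝ) := by
  have hstructp := aux_p_struct μ p hp0 hpodd hpeven
  have hstructq := aux_q_struct μ q hq0 hqodd hqeven
  set F : ℝ → ℝ := fun t => (μ (Set.Icc 0 t)).toReal with hFdef
  have hFmono : Monotone F := fun a b hab =>
    ENNReal.toReal_mono (measure_ne_top μ _) (measure_mono (Set.Icc_subset_Icc le_rfl hab))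
  have hFmeas : Measurable F := hFmono.measurable
  have hF0 : ∀ t, 0 ≤ F t := fun t => ENNReal.toReal_nonneg
  have hF1 : ∀ t, F t ≤ 1 := by
    intro t
    have h := ENNReal.toReal_mono (measure_ne_top μ Set.univ) (measure_mono (Set.subset_univ (Set.Icc 0 t)))
    simpa [measure_univ] using h
  have hp1 : ∀ t : ℝ, p 1 t = F t := by
    intro t
    have h := hpodd 0 t
    norm_num at h
    have h' : p 1 t = μ.real (Set.Icc 0 t) := by simpa [hp0] using h
    exact h'
  have hq1 : ∀ t : ℝ, q 1 t = t := by
    intro t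
    have h := hqodd 0 t
    norm_num at h
    simpa [hq0] using h
  have hP2 : ∀ t : ℝ, p 2 t = ∫ u in (0:ℝ)..t, F u := by
    intro t
    have h := hpeven 0 t
    norm_num at h
    simp only [hp1] at h
    exact h
  have hQ2 : ∀ t : ℝ, q 2 t = ∫ s in Set.Icc (0:ℝ) t, s ∂μ := by
    intro t
    have h := hqeven 0 t
    norm_num at h
    simp only [hq1] at h
    exact h
  have hPmono : Monotone (p 2) := (hstructp 1).1.1
  have hP0 : ∀ t : ℝ, 0 ≤ t → 0 ≤ p 2 t := (hstructp 1).1.2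
  have hQmono : Monotone (q 2) := (hstructq 1).1.1
  have hQ0 : ∀ t : ℝ, 0 ≤ q 2 t := (hstructq 1).1.2
  -- bridge 1
  have hbridge1 : ∀ x ∈ Set.Icc (0:ℝ) 1, ∀ n : ℕ,
      (n + 1 : ℝ) * ∫ t in (0:ℝ)..x, F t * p 2 t ^ n ≤ p 2 x ^ (n+1) := by
    intro x hx n
    set ρ : Measure ℝ := volume.restrict (Set.Icc (0:ℝ) 1) with hρdef
    haveI : IsFiniteMeasure ρ := ⟨by
      rw [hρdef, Measure.restrict_apply_univ]
      simp [Real.volume_Icc]⟩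
    have hrr : ∀ t : ℝ, 0 ≤ t → t ≤ 1 →
        ρ.restrict (Set.Icc 0 t) = volume.restrict (Set.Icc 0 t) := by
      intro t ht0 ht1
      rw [hρdef, Measure.restrict_restrict measurableSet_Icc,
        Set.inter_eq_left.2 (Set.Icc_subset_Icc le_rfl ht1)]
    have hGF : ∀ t : ℝ, 0 ≤ t → t ≤ 1 → (∫ s in Set.Icc (0:ℝ) t, F s ∂ρ) = p 2 t := by
      intro t ht0 ht1
      rw [show (∫ s in Set.Icc (0:ℝ) t, F s ∂ρ) = ∫ s in Set.Icc (0:ℝ) t, F s from by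
          rw [hrr t ht0 ht1],
        integral_Icc_eq_integral_Ioc, ← intervalIntegral.integral_of_le ht0, ← hP2 t]
    have h := aux_bridge ρ F hFmeas (fun t _ => hF0 t) (fun t => aux_intOn_mono hFmono t)
      x hx.1 n
    rw [hGF x hx.1 hx.2] at h
    have h2 : (∫ t in Set.Icc (0:ℝ) x, F t * (∫ s in Set.Icc (0:ℝ) t, F s ∂ρ) ^ n ∂ρ)
        = ∫ t in (0:ℝ)..x, F t * p 2 t ^ n := by
      rw [setIntegral_congr_fun measurableSet_Icc
        (fun t ht => by
          show F t * (∫ s in Set.Icc (0:ℝ) t, F s ∂ρ) ^ n = F t * p 2 t ^ n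
          rw [hGF t ht.1 (ht.2.trans hx.2)] : Set.EqOn
          (fun t => F t * (∫ s in Set.Icc (0:ℝ) t, F s ∂ρ) ^ n)
          (fun t => F t * p 2 t ^ n) (Set.Icc 0 x)),
        show (∫ t in Set.Icc (0:ℝ) x, F t * p 2 t ^ n ∂ρ)
          = ∫ t in Set.Icc (0:ℝ) x, F t * p 2 t ^ n from by rw [hrr x hx.1 hx.2],
        integral_Icc_eq_integral_Ioc, ← intervalIntegral.integral_of_le hx.1]
    rw [h2] at h
    exact h
  -- bridge 2
  have hbridge2 : ∀ x ∈ Set.Icc (0:ℝ) 1, ∀ n : ℕ,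
      (n + 1 : ℝ) * ∫ t in Set.Icc (0:ℝ) x, t * q 2 t ^ n ∂μ ≤ q 2 x ^ (n+1) := by
    intro x hx n
    have h := aux_bridge μ (fun t => t) measurable_id (fun t ht => ht)
      (fun t => aux_intOn_mono monotone_id t) x hx.1 n
    rw [show (∫ s in Set.Icc (0:ℝ) x, s ∂μ) = q 2 x from (hQ2 x).symm] at h
    have h2 : (∫ t in Set.Icc (0:ℝ) x, t * (∫ s in Set.Icc (0:ℝ) t, s ∂μ) ^ n ∂μ)
        = ∫ t in Set.Icc (0:ℝ) x, t * q 2 t ^ n ∂μ :=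
      setIntegral_congr_fun measurableSet_Icc
        (fun t _ => by
          show t * (∫ s in Set.Icc (0:ℝ) t, s ∂μ) ^ n = t * q 2 t ^ n
          rw [show (∫ s in Set.Icc (0:ℝ) t, s ∂μ) = q 2 t from (hQ2 t).symm])
    rw [h2] at h
    exact h
  -- combined two-step estimates
  have hfacpos : ∀ n : ℕ, (0:ℝ) < n.factorial := fun n => by
    exact_mod_cast n.factorial_pos
  have helper1 : ∀ (n : ℕ) (f : ℝ → ℝ), Monotone f → (∀ s, 0 ≤ s → 0 ≤ f s) →
      (∀ s ∈ Set.Icc (0:ℝ) 1, f s ≤ p 2 s ^ n / (n.factorial : ℝ)) →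
      ∀ x ∈ Set.Icc (0:ℝ) 1,
        (∫ t in (0:ℝ)..x, (fun t => ∫ s in Set.Icc (0:ℝ) t, f s ∂μ) t)
          ≤ p 2 x ^ (n+1) / ((n+1).factorial : ℝ) := by
    intro n f hfm hf0 hb x hx
    have hg := aux_mu_step μ hfm hf0
    have hpt : ∀ t ∈ Set.Icc (0:ℝ) x,
        (∫ s in Set.Icc (0:ℝ) t, f s ∂μ) ≤ F t * p 2 t ^ n / n.factorial := by
      intro t ht
      have ht1 : t ∈ Set.Icc (0:ℝ) 1 := ⟨ht.1, ht.2.trans hx.2⟩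
      have hmono_on : ∀ s ∈ Set.Icc (0:ℝ) t, f s ≤ p 2 t ^ n / n.factorial := by
        intro s hs
        refine (hb s ⟨hs.1, hs.2.trans ht1.2⟩).trans ?_
        exact (div_le_div_iff_of_pos_right (hfacpos n)).2
          (pow_le_pow_left₀ (hP0 s hs.1) (hPmono hs.2) n)
      calc (∫ s in Set.Icc (0:ℝ) t, f s ∂μ)
          ≤ ∫ _ in Set.Icc (0:ℝ) t, (p 2 t ^ n / n.factorial : ℝ) ∂μ :=
            setIntegral_mono_on (aux_intOn_mono hfm t)
              integrableOn_const measurableSet_Icc hmono_on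
        _ = F t * p 2 t ^ n / n.factorial := by
            rw [setIntegral_const, smul_eq_mul, ← mul_div_assoc]; rfl
    have hII : IntervalIntegrable (fun t => ∫ s in Set.Icc (0:ℝ) t, f s ∂μ) volume 0 x :=
      hg.1.intervalIntegrable
    have hII2 : IntervalIntegrable (fun t => F t * p 2 t ^ n / n.factorial) volume 0 x := by
      apply MonotoneOn.intervalIntegrable
      rw [Set.uIcc_of_le hx.1]
      intro s hs t ht hst
      have h2 : p 2 s ^ n ≤ p 2 t ^ n := pow_le_pow_left₀ (hP0 s hs.1) (hPmono hst) n
      exact (div_le_div_iff_of_pos_right (hfacpos n)).2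
        (mul_le_mul (hFmono hst) h2 (pow_nonneg (hP0 s hs.1) n) (hF0 t))
    calc (∫ t in (0:ℝ)..x, (fun t => ∫ s in Set.Icc (0:ℝ) t, f s ∂μ) t)
        ≤ ∫ t in (0:ℝ)..x, F t * p 2 t ^ n / n.factorial :=
          intervalIntegral.integral_mono_on hx.1 hII hII2 hpt
      _ = (∫ t in (0:ℝ)..x, F t * p 2 t ^ n) / n.factorial := by
          rw [intervalIntegral.integral_div]
      _ ≤ (p 2 x ^ (n+1) / (n+1)) / n.factorial := by
          refine (div_le_div_iff_of_pos_right (hfacpos n)).2 ?_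
          rw [le_div_iff₀ (by positivity : (0:ℝ) < (n:ℝ)+1), mul_comm]
          exact hbridge1 x hx n
      _ = p 2 x ^ (n+1) / ((n+1).factorial : ℝ) := by
          rw [div_div, Nat.factorial_succ]
          push_cast
          ring
  have helper2 : ∀ (n : ℕ) (f : ℝ → ℝ), Monotone f → (∀ s, 0 ≤ f s) →
      (∀ s ∈ Set.Icc (0:ℝ) 1, f s ≤ q 2 s ^ n / (n.factorial : ℝ)) →
      ∀ x ∈ Set.Icc (0:ℝ) 1,
        (∫ t in Set.Icc (0:ℝ) x, (fun t => ∫ u in (0:ℝ)..t, f u) t ∂μ)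
          ≤ q 2 x ^ (n+1) / ((n+1).factorial : ℝ) := by
    intro n f hfm hf0 hb x hx
    have hg := aux_leb_step hfm hf0
    have hpt : ∀ t ∈ Set.Icc (0:ℝ) x,
        (∫ u in (0:ℝ)..t, f u) ≤ t * q 2 t ^ n / n.factorial := by
      intro t ht
      have ht1 : t ∈ Set.Icc (0:ℝ) 1 := ⟨ht.1, ht.2.trans hx.2⟩
      have hmono_on : ∀ u ∈ Set.Icc (0:ℝ) t, f u ≤ q 2 t ^ n / n.factorial := by
        intro u hu
        refine (hb u ⟨hu.1, hu.2.trans ht1.2⟩).trans ?_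
        exact (div_le_div_iff_of_pos_right (hfacpos n)).2
          (pow_le_pow_left₀ (hQ0 u) (hQmono hu.2) n)
      calc (∫ u in (0:ℝ)..t, f u)
          ≤ ∫ _ in (0:ℝ)..t, (q 2 t ^ n / n.factorial : ℝ) :=
            intervalIntegral.integral_mono_on ht.1 (hfm.intervalIntegrable (μ := volume))
              intervalIntegrable_const hmono_on
        _ = t * q 2 t ^ n / n.factorial := by
            rw [intervalIntegral.integral_const, smul_eq_mul, sub_zero, ← mul_div_assoc]
    have hint1 : IntegrableOn (fun t => ∫ u in (0:ℝ)..t, f u) (Set.Icc 0 x) μ :=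
      aux_intOn_mono hg.1 x
    have hint2 : IntegrableOn (fun t => t * q 2 t ^ n / n.factorial) (Set.Icc 0 x) μ := by
      refine aux_intOn measurableSet_Icc
        ((measurable_id.mul (hQmono.measurable.pow_const n)).div_const _)
        (x * q 2 x ^ n / n.factorial) (fun t ht => ?_)
      rw [abs_of_nonneg (div_nonneg (mul_nonneg ht.1 (pow_nonneg (hQ0 t) n)) (hfacpos n).le)]
      exact (div_le_div_iff_of_pos_right (hfacpos n)).2
        (mul_le_mul ht.2 (pow_le_pow_left₀ (hQ0 t) (hQmono ht.2) n)
          (pow_nonneg (hQ0 t) n) hx.1)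
    calc (∫ t in Set.Icc (0:ℝ) x, (fun t => ∫ u in (0:ℝ)..t, f u) t ∂μ)
        ≤ ∫ t in Set.Icc (0:ℝ) x, t * q 2 t ^ n / n.factorial ∂μ :=
          setIntegral_mono_on hint1 hint2 measurableSet_Icc hpt
      _ = (∫ t in Set.Icc (0:ℝ) x, t * q 2 t ^ n ∂μ) / n.factorial := by rw [integral_div]
      _ ≤ (q 2 x ^ (n+1) / (n+1)) / n.factorial := by
          refine (div_le_div_iff_of_pos_right (hfacpos n)).2 ?_
          rw [le_div_iff₀ (by positivity : (0:ℝ) < (n:ℝ)+1), mul_comm]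
          exact hbridge2 x hx n
      _ = q 2 x ^ (n+1) / ((n+1).factorial : ℝ) := by
          rw [div_div, Nat.factorial_succ]
          push_cast
          ring
  -- main induction
  have key : ∀ n : ℕ, ∀ x ∈ Set.Icc (0:ℝ) 1,
      p (2*n+1) x ≤ q 2 x ^ n / (n.factorial : ℝ) ∧
      q (2*n+1) x ≤ p 2 x ^ n / (n.factorial : ℝ) ∧
      p (2*n) x ≤ p 2 x ^ n / (n.factorial : ℝ) ∧
      q (2*n) x ≤ q 2 x ^ n / (n.factorial : ℝ) := by
    intro n
    induction n with
    | zero =>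
      intro x hx
      refine ⟨?_, ?_, ?_, ?_⟩ <;> norm_num
      · rw [hp1 x]; exact hF1 x
      · rw [hq1 x]; exact hx.2
      · exact (hp0 x).le
      · exact (hq0 x).le
    | succ n ih =>
      intro x hx
      refine ⟨?_, ?_, ?_, ?_⟩
      · -- p (2(n+1)+1) ≤ q2^(n+1)/(n+1)!
        rw [hpodd (n+1) x,
          setIntegral_congr_fun measurableSet_Icc
            (fun t _ => by
              rw [show 2*(n+1) = 2*n+2 from by ring]
              exact hpeven n t : Set.EqOn (p (2*(n+1)))
              (fun t => ∫ u in (0:ℝ)..t, p (2*n+1) u) (Set.Icc 0 x))]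
        exact helper2 n (p (2*n+1)) (hstructp n).2.1 (hstructp n).2.2
          (fun s hs => (ih s hs).1) x hx
      · -- q (2(n+1)+1) ≤ p2^(n+1)/(n+1)!
        rw [hqodd (n+1) x,
          intervalIntegral.integral_congr
            (fun t _ => by
              rw [show 2*(n+1) = 2*n+2 from by ring]
              exact hqeven n t : Set.EqOn (q (2*(n+1)))
              (fun t => ∫ s in Set.Icc (0:ℝ) t, q (2*n+1) s ∂μ) (Set.uIcc 0 x))]
        exact helper1 n (q (2*n+1)) (hstructq n).2.1
          (fun s hs => (hstructq n).2.2 s hs)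
          (fun s hs => (ih s hs).2.1) x hx
      · -- p (2(n+1)) ≤ p2^(n+1)/(n+1)!
        rw [show 2*(n+1) = 2*n+2 from by ring, hpeven n x,
          intervalIntegral.integral_congr
            (fun t _ => hpodd n t : Set.EqOn (p (2*n+1))
              (fun t => ∫ s in Set.Icc (0:ℝ) t, p (2*n) s ∂μ) (Set.uIcc 0 x))]
        exact helper1 n (p (2*n)) (hstructp n).1.1 (hstructp n).1.2
          (fun s hs => (ih s hs).2.2.1) x hx
      · -- q (2(n+1)) ≤ q2^(n+1)/(n+1)!
        rw [show 2*(n+1) = 2*n+2 from by ring, hqeven n x,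
          setIntegral_congr_fun measurableSet_Icc
            (fun t _ => hqodd n t : Set.EqOn (q (2*n+1))
              (fun t => ∫ u in (0:ℝ)..t, q (2*n) u) (Set.Icc 0 x))]
        exact helper2 n (q (2*n)) (hstructq n).1.1 (hstructq n).1.2
          (fun s hs => (ih s hs).2.2.2) x hx
  intro x hx n
  exact key n x hx
end

section
/- For every z ∈ ℝ the series Σ_{n≥0} |z|^{2n+1} p_{2n+1}(x), Σ_{n≥0} |z|^{2n+1} q_{2n+1}(x), Σ_{n≥0} |z|^{2n} p_{2n}(x) and Σ_{n≥0} |z|^{2n} q_{2n}(x) converge uniformly in x ∈ [0,1], and for all z ∈ ℝ and x ∈ [0,1] the following integral identities (encoding the differentiation rules d/dμ s_{μ,λ} = z c_{λ,μ}, s_{λ,μ}' = z c_{μ,λ}, c_{λ,μ}' = −z s_{μ,λ}, d/dμ c_{μ,λ} = −z s_{λ,μ}) hold: s_{μ,λ}(z,x) = z ∫_{[0,x]} c_{λ,μ}(z,t) dμ(t); s_{λ,μ}(z,x) = z ∫_0^x c_{μ,λ}(z,t) dt; c_{λ,μ}(z,x) = 1 − z ∫_0^x s_{μ,λ}(z,t)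 dt; c_{μ,λ}(z,x) = 1 − z ∫_{[0,x]} s_{λ,μ}(z,t) dμ(t). -/
open MeasureTheory

lemma auxStepMu (μ : Measure ℝ) [IsProbabilityMeasure μ] (f g : ℝ → ℝ) (n : ℕ)
    (hg : ∀ x, g x = ∫ t in Set.Icc (0:ℝ) x, f t ∂μ)
    (hm : Monotone f) (h0 : ∀ x, 0 ≤ x → 0 ≤ f x)
    (hb : ∀ x ∈ Set.Icc (0:ℝ) 1, f x ≤ x ^ n / n.factorial) :
    Monotone g ∧ (∀ x, 0 ≤ g x) ∧
      (∀ x ∈ Set.Icc (0:ℝ) 1, g x ≤ x ^ n / n.factorial) := by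
  have hmeas : Measurable f := hm.measurable
  have hint : ∀ b : ℝ, IntegrableOn f (Set.Icc 0 b) μ := fun b => by
    refine Measure.integrableOn_of_bounded (measure_ne_top _ _) hmeas.aestronglyMeasurable
      (M := max |f 0| |f b|) ?_
    refine ae_restrict_of_forall_mem measurableSet_Icc fun t ht => ?_
    exact abs_le_max_abs_abs (hm ht.1) (hm ht.2)
  refine ⟨?_, ?_, ?_⟩
  · intro a b hab
    rw [hg, hg]
    exact setIntegral_mono_set (hint b)
      (ae_restrict_of_forall_mem measurableSet_Icc fun t ht => h0 t ht.1)
      (HasSubset.Subset.eventuallyLE (Set.Icc_subset_Icc_right hab))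
  · intro x
    rw [hg]
    exact setIntegral_nonneg measurableSet_Icc fun t ht => h0 t ht.1
  · rintro x ⟨hx0, hx1⟩
    have hC : (0:ℝ) ≤ x ^ n / n.factorial := by positivity
    rw [hg]
    calc ∫ t in Set.Icc (0:ℝ) x, f t ∂μ
        ≤ ∫ _t in Set.Icc (0:ℝ) x, (x ^ n / n.factorial) ∂μ := by
          refine setIntegral_mono_on (hint x)
            (integrableOn_const (measure_ne_top _ _))
            measurableSet_Icc fun t ht => ?_
          refine (hb t ⟨ht.1, ht.2.trans hx1⟩).trans ?_
          gcongr
          · exact ht.1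
          · exact ht.2
      _ = (μ (Set.Icc (0:ℝ) x)).toReal • (x ^ n / n.factorial) := setIntegral_const _
      _ ≤ x ^ n / n.factorial := by
          rw [smul_eq_mul]
          refine mul_le_of_le_one_left hC ?_
          have h := ENNReal.toReal_mono (a := μ (Set.Icc (0:ℝ) x)) (b := 1) (by simp) prob_le_one
          simpa using h

lemma auxStepInt (f g : ℝ → ℝ) (n : ℕ)
    (hg : ∀ x, g x = ∫ t in (0:ℝ)..x, f t)
    (hm : Monotone f) (h0 : ∀ x, 0 ≤ f x)
    (hb : ∀ x ∈ Set.Icc (0:ℝ) 1, f x ≤ x ^ n / n.factorial) :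
    Monotone g ∧ (∀ x, 0 ≤ x → 0 ≤ g x) ∧
      (∀ x ∈ Set.Icc (0:ℝ) 1, g x ≤ x ^ (n+1) / (n+1).factorial) := by
  have hii : ∀ a b : ℝ, IntervalIntegrable f volume a b := fun a b =>
    (hm.monotoneOn _).intervalIntegrable
  refine ⟨?_, ?_, ?_⟩
  · intro a b hab
    have h1 : g b - g a = ∫ t in a..b, f t := by
      rw [hg, hg]; exact intervalIntegral.integral_interval_sub_left (hii 0 b) (hii 0 a)
    have h2 : 0 ≤ ∫ t in a..b, f t := intervalIntegral.integral_nonneg hab fun t _ => h0 t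
    linarith
  · intro x hx
    rw [hg]
    exact intervalIntegral.integral_nonneg hx fun t _ => h0 t
  · rintro x ⟨hx0, hx1⟩
    rw [hg]
    have key : ∫ t in (0:ℝ)..x, f t ≤ ∫ t in (0:ℝ)..x, t ^ n / n.factorial :=
      intervalIntegral.integral_mono_on hx0 (hii 0 x)
        (Continuous.intervalIntegrable (by continuity) 0 x)
        (fun t ht => hb t ⟨ht.1, ht.2.trans hx1⟩)
    have hcomp : (∫ t in (0:ℝ)..x, t ^ n / (n.factorial:ℝ)) = x ^ (n+1) / (n+1).factorial := by
      rw [intervalIntegral.integral_div, integral_pow, Nat.factorial_succ]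
      have h1 : ((n:ℝ)+1) ≠ 0 := by positivity
      have h2 : ((n.factorial:ℕ):ℝ) ≠ 0 := by positivity
      push_cast
      field_simp
      simp
    linarith

lemma auxChainP (μ : Measure ℝ) [IsProbabilityMeasure μ] (p : ℕ → ℝ → ℝ)
    (hp0 : ∀ x, p 0 x = 1)
    (hpodd : ∀ (n : ℕ) (x : ℝ), p (2*n+1) x = ∫ t in Set.Icc (0:ℝ) x, p (2*n) t ∂μ)
    (hpeven : ∀ (n : ℕ) (x : ℝ), p (2*n+2) x = ∫ t in (0:ℝ)..x, p (2*n+1) t) :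
    ∀ n : ℕ, (Monotone (p (2*n)) ∧ (∀ x, 0 ≤ x → 0 ≤ p (2*n) x) ∧
          (∀ x ∈ Set.Icc (0:ℝ) 1, p (2*n) x ≤ x ^ n / n.factorial)) ∧
         (Monotone (p (2*n+1)) ∧ (∀ x, 0 ≤ p (2*n+1) x) ∧
          (∀ x ∈ Set.Icc (0:ℝ) 1, p (2*n+1) x ≤ x ^ n / n.factorial)) := by
  intro n
  induction n with
  | zero =>
    have he1 : Monotone (p (2*0)) := fun a b _ => by rw [show p (2*0) = p 0 from rfl, hp0, hp0]
    have he2 : ∀ x, 0 ≤ x → 0 ≤ p (2*0) x := fun x _ => by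
      rw [show p (2*0) = p 0 from rfl, hp0]; norm_num
    have he3 : ∀ x ∈ Set.Icc (0:ℝ) 1, p (2*0) x ≤ x ^ 0 / (0:ℕ).factorial := fun x _ => by
      rw [show p (2*0) = p 0 from rfl, hp0]; norm_num
    exact ⟨⟨he1, he2, he3⟩, auxStepMu μ (p (2*0)) (p (2*0+1)) 0 (hpodd 0) he1 he2 he3⟩
  | succ n ih =>
    obtain ⟨_, hm1, hn1, hb1⟩ := ih
    have heven := auxStepInt (p (2*n+1)) (p (2*n+2)) n (hpeven n) hm1 hn1 hb1
    obtain ⟨km, kn, kb⟩ := heven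
    have heq : 2*(n+1) = 2*n+2 := by ring
    rw [heq]
    exact ⟨⟨km, kn, kb⟩,
      auxStepMu μ (p (2*n+2)) (p (2*n+2+1)) (n+1)
        (fun x => by rw [show 2*n+2+1 = 2*(n+1)+1 from by ring, hpodd (n+1),
          show 2*(n+1) = 2*n+2 from by ring]) km kn kb⟩

lemma auxChainQ (μ : Measure ℝ) [IsProbabilityMeasure μ] (q : ℕ → ℝ → ℝ)
    (hq0 : ∀ x, q 0 x = 1)
    (hqodd : ∀ (n : ℕ) (x : ℝ), q (2*n+1) x = ∫ t in (0:ℝ)..x, q (2*n) t)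
    (hqeven : ∀ (n : ℕ) (x : ℝ), q (2*n+2) x = ∫ t in Set.Icc (0:ℝ) x, q (2*n+1) t ∂μ) :
    ∀ n : ℕ, (Monotone (q (2*n)) ∧ (∀ x, 0 ≤ q (2*n) x) ∧
          (∀ x ∈ Set.Icc (0:ℝ) 1, q (2*n) x ≤ x ^ n / n.factorial)) ∧
         (Monotone (q (2*n+1)) ∧ (∀ x, 0 ≤ x → 0 ≤ q (2*n+1) x) ∧
          (∀ x ∈ Set.Icc (0:ℝ) 1, q (2*n+1) x ≤ x ^ (n+1) / (n+1).factorial)) := by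
  intro n
  induction n with
  | zero =>
    have he1 : Monotone (q (2*0)) := fun a b _ => by rw [show q (2*0) = q 0 from rfl, hq0, hq0]
    have he2 : ∀ x, 0 ≤ q (2*0) x := fun x => by
      rw [show q (2*0) = q 0 from rfl, hq0]; norm_num
    have he3 : ∀ x ∈ Set.Icc (0:ℝ) 1, q (2*0) x ≤ x ^ 0 / (0:ℕ).factorial := fun x _ => by
      rw [show q (2*0) = q 0 from rfl, hq0]; norm_num
    exact ⟨⟨he1, he2, he3⟩, auxStepInt (q (2*0)) (q (2*0+1)) 0 (hqodd 0) he1 he2 he3⟩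
  | succ n ih =>
    obtain ⟨_, hm1, hn1, hb1⟩ := ih
    have heven := auxStepMu μ (q (2*n+1)) (q (2*n+2)) (n+1) (hqeven n) hm1 hn1 hb1
    obtain ⟨km, kn, kb⟩ := heven
    have heq : 2*(n+1) = 2*n+2 := by ring
    rw [heq]
    refine ⟨⟨km, kn, kb⟩, ?_⟩
    exact auxStepInt (q (2*n+2)) (q (2*n+2+1)) (n+1)
      (fun x => by rw [show 2*n+2+1 = 2*(n+1)+1 from by ring, hqodd (n+1),
        show 2*(n+1) = 2*n+2 from by ring]) km kn kb

lemma auxSummable (z : ℝ) (k : ℕ) :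
    Summable (fun n : ℕ => |z| ^ (2*n+k) * ((1:ℝ) / n.factorial)) := by
  have h := (Real.summable_pow_div_factorial (z^2)).mul_left (|z|^k)
  refine h.congr fun n => ?_
  rw [pow_add, pow_mul, sq_abs]
  ring

lemma auxSwap (ν : Measure ℝ) (hν : ν Set.univ ≤ 1)
    (f : ℕ → ℝ → ℝ) (hfm : ∀ n, AEStronglyMeasurable (f n) ν)
    (u : ℕ → ℝ) (hu0 : ∀ n, 0 ≤ u n) (hu : Summable u)
    (hb : ∀ n, ∀ᵐ t ∂ν, ‖f n t‖ ≤ u n) :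
    ∫ t, ∑' n, f n t ∂ν = ∑' n, ∫ t, f n t ∂ν := by
  refine integral_tsum hfm ?_
  have h1 : ∀ n, ∫⁻ t, ‖f n t‖₊ ∂ν ≤ ENNReal.ofReal (u n) := by
    intro n
    calc ∫⁻ t, (‖f n t‖₊ : ENNReal) ∂ν
        ≤ ∫⁻ _t, ENNReal.ofReal (u n) ∂ν := by
          refine lintegral_mono_ae ((hb n).mono fun t ht => ?_)
          rw [← enorm_eq_nnnorm, ← ofReal_norm]
          exact ENNReal.ofReal_le_ofReal ht
      _ = ENNReal.ofReal (u n) * ν Set.univ := lintegral_const _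
      _ ≤ ENNReal.ofReal (u n) * 1 := mul_le_mul_right hν _
      _ = _ := mul_one _
  refine ne_top_of_le_ne_top ?_ (ENNReal.tsum_le_tsum h1)
  rw [← ENNReal.ofReal_tsum_of_nonneg hu0 hu]
  exact ENNReal.ofReal_ne_top
theorem stmt_1
    (μ : Measure ℝ) [IsProbabilityMeasure μ] [NullSingletonClass μ]
    (hsupp : μ (Set.Icc (0:ℝ) 1)ᶜ = 0)
    (p q : ℕ → ℝ → ℝ)
    (hp0 : ∀ x : ℝ, p 0 x = 1) (hq0 : ∀ x : ℝ, q 0 x = 1)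
    (hpodd : ∀ (n : ℕ) (x : ℝ), p (2*n+1) x = ∫ t in Set.Icc (0:ℝ) x, p (2*n) t ∂μ)
    (hpeven : ∀ (n : ℕ) (x : ℝ), p (2*n+2) x = ∫ t in (0:ℝ)..x, p (2*n+1) t)
    (hqodd : ∀ (n : ℕ) (x : ℝ), q (2*n+1) x = ∫ t in (0:ℝ)..x, q (2*n) t)
    (hqeven : ∀ (n : ℕ) (x : ℝ), q (2*n+2) x = ∫ t in Set.Icc (0:ℝ) x, q (2*n+1) t ∂μ)
    (Sp Sq Cp Cq : ℝ → ℝ → ℝ)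
    (hSp : ∀ (z x : ℝ), Sp z x = ∑' n : ℕ, (-1:ℝ)^n * z^(2*n+1) * p (2*n+1) x)
    (hSq : ∀ (z x : ℝ), Sq z x = ∑' n : ℕ, (-1:ℝ)^n * z^(2*n+1) * q (2*n+1) x)
    (hCp : ∀ (z x : ℝ), Cp z x = ∑' n : ℕ, (-1:ℝ)^n * z^(2*n) * p (2*n) x)
    (hCq : ∀ (z x : ℝ), Cq z x = ∑' n : ℕ, (-1:ℝ)^n * z^(2*n) * q (2*n) x) :
    (∀ z : ℝ,
      TendstoUniformlyOn
        (fun (N : ℕ) (x : ℝ) => ∑ n ∈ Finset.range N, |z|^(2*n+1) * p (2*n+1) x)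
        (fun x : ℝ => ∑' n : ℕ, |z|^(2*n+1) * p (2*n+1) x) Filter.atTop (Set.Icc (0:ℝ) 1) ∧
      TendstoUniformlyOn
        (fun (N : ℕ) (x : ℝ) => ∑ n ∈ Finset.range N, |z|^(2*n+1) * q (2*n+1) x)
        (fun x : ℝ => ∑' n : ℕ, |z|^(2*n+1) * q (2*n+1) x) Filter.atTop (Set.Icc (0:ℝ) 1) ∧
      TendstoUniformlyOn
        (fun (N : ℕ) (x : ℝ) => ∑ n ∈ Finset.range N, |z|^(2*n) * p (2*n) x)
        (fun x : ℝ => ∑' n : ℕ, |z|^(2*n) * p (2*n) x) Filter.atTop (Set.Icc (0:ℝ) 1) ∧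
      TendstoUniformlyOn
        (fun (N : ℕ) (x : ℝ) => ∑ n ∈ Finset.range N, |z|^(2*n) * q (2*n) x)
        (fun x : ℝ => ∑' n : ℕ, |z|^(2*n) * q (2*n) x) Filter.atTop (Set.Icc (0:ℝ) 1)) ∧
    (∀ z : ℝ, ∀ x ∈ Set.Icc (0:ℝ) 1,
      Sp z x = z * ∫ t in Set.Icc (0:ℝ) x, Cp z t ∂μ ∧
      Sq z x = z * ∫ t in (0:ℝ)..x, Cq z t ∧
      Cp z x = 1 - z * ∫ t in (0:ℝ)..x, Sp z t ∧
      Cq z x = 1 - z * ∫ t in Set.Icc (0:ℝ) x, Sq z t ∂μ) := by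
  have Pf := auxChainP μ p hp0 hpodd hpeven
  have Qf := auxChainQ μ q hq0 hqodd hqeven
  have pm_even : ∀ n : ℕ, Monotone (p (2*n)) := fun n => (Pf n).1.1
  have pnn_even : ∀ (n : ℕ) (x : ℝ), 0 ≤ x → 0 ≤ p (2*n) x := fun n => (Pf n).1.2.1
  have pb_even : ∀ n : ℕ, ∀ x ∈ Set.Icc (0:ℝ) 1, p (2*n) x ≤ x^n / n.factorial :=
    fun n => (Pf n).1.2.2
  have pm_odd : ∀ n : ℕ, Monotone (p (2*n+1)) := fun n => (Pf n).2.1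
  have pnn_odd : ∀ (n : ℕ) (x : ℝ), 0 ≤ p (2*n+1) x := fun n => (Pf n).2.2.1
  have pb_odd : ∀ n : ℕ, ∀ x ∈ Set.Icc (0:ℝ) 1, p (2*n+1) x ≤ x^n / n.factorial :=
    fun n => (Pf n).2.2.2
  have qm_even : ∀ n : ℕ, Monotone (q (2*n)) := fun n => (Qf n).1.1
  have qnn_even : ∀ (n : ℕ) (x : ℝ), 0 ≤ q (2*n) x := fun n => (Qf n).1.2.1
  have qb_even : ∀ n : ℕ, ∀ x ∈ Set.Icc (0:ℝ) 1, q (2*n) x ≤ x^n / n.factorial :=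
    fun n => (Qf n).1.2.2
  have qm_odd : ∀ n : ℕ, Monotone (q (2*n+1)) := fun n => (Qf n).2.1
  have qnn_odd : ∀ (n : ℕ) (x : ℝ), 0 ≤ x → 0 ≤ q (2*n+1) x := fun n => (Qf n).2.2.1
  have qb_odd : ∀ n : ℕ, ∀ x ∈ Set.Icc (0:ℝ) 1, q (2*n+1) x ≤ x^(n+1) / (n+1).factorial :=
    fun n => (Qf n).2.2.2
  -- bounds by 1/n!
  have hxn : ∀ x ∈ Set.Icc (0:ℝ) 1, ∀ n : ℕ, x^n / (n.factorial:ℝ) ≤ 1 / n.factorial := by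
    rintro x ⟨hx0, hx1⟩ n
    have hf : (0:ℝ) < n.factorial := by positivity
    exact (div_le_div_iff_of_pos_right hf).2 (pow_le_one₀ hx0 hx1)
  have hfact : ∀ n : ℕ, (1:ℝ)/((n+1).factorial) ≤ 1/(n.factorial) := by
    intro n
    refine one_div_le_one_div_of_le (by positivity) ?_
    exact_mod_cast Nat.factorial_le (Nat.le_succ n)
  have pb1_even : ∀ n : ℕ, ∀ x ∈ Set.Icc (0:ℝ) 1, p (2*n) x ≤ 1 / n.factorial :=
    fun n x hx => (pb_even n x hx).trans (hxn x hx n)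
  have pb1_odd : ∀ n : ℕ, ∀ x ∈ Set.Icc (0:ℝ) 1, p (2*n+1) x ≤ 1 / n.factorial :=
    fun n x hx => (pb_odd n x hx).trans (hxn x hx n)
  have qb1_even : ∀ n : ℕ, ∀ x ∈ Set.Icc (0:ℝ) 1, q (2*n) x ≤ 1 / n.factorial :=
    fun n x hx => (qb_even n x hx).trans (hxn x hx n)
  have qb1_odd : ∀ n : ℕ, ∀ x ∈ Set.Icc (0:ℝ) 1, q (2*n+1) x ≤ 1 / n.factorial :=
    fun n x hx => (qb_odd n x hx).trans ((hxn x hx (n+1)).trans (hfact n))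
  constructor
  · -- uniform convergence
    intro z
    have hS1 : Summable (fun n : ℕ => |z| ^ (2*n+1) * ((1:ℝ) / n.factorial)) := auxSummable z 1
    have hS0 : Summable (fun n : ℕ => |z| ^ (2*n) * ((1:ℝ) / n.factorial)) := by
      have := auxSummable z 0
      simpa using this
    have hterm2 : ∀ (m n : ℕ) (v : ℝ), 0 ≤ v → v ≤ 1/(n.factorial:ℝ) →
        ‖|z|^m * v‖ ≤ |z|^m * (1/(n.factorial:ℝ)) := by
      intro m n v h0 h1
      rw [Real.norm_eq_abs, abs_of_nonneg (by positivity)]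
      exact mul_le_mul_of_nonneg_left h1 (by positivity)
    refine ⟨tendstoUniformlyOn_tsum_nat hS1 fun n x hx =>
        hterm2 (2*n+1) n _ (pnn_odd n x) (pb1_odd n x hx),
      tendstoUniformlyOn_tsum_nat hS1 fun n x hx =>
        hterm2 (2*n+1) n _ (qnn_odd n x hx.1) (qb1_odd n x hx),
      tendstoUniformlyOn_tsum_nat hS0 fun n x hx =>
        hterm2 (2*n) n _ (pnn_even n x hx.1) (pb1_even n x hx),
      tendstoUniformlyOn_tsum_nat hS0 fun n x hx =>
        hterm2 (2*n) n _ (qnn_even n x) (qb1_even n x hx)⟩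
  · rintro z x ⟨hx0, hx1⟩
    have hS1 : Summable (fun n : ℕ => |z| ^ (2*n+1) * ((1:ℝ) / n.factorial)) := auxSummable z 1
    have hS0 : Summable (fun n : ℕ => |z| ^ (2*n) * ((1:ℝ) / n.factorial)) := by
      have := auxSummable z 0
      simpa using this
    have hterm : ∀ (m n : ℕ) (v : ℝ), 0 ≤ v → v ≤ 1/(n.factorial:ℝ) →
        ‖(-1:ℝ)^n * z^m * v‖ ≤ |z|^m * (1/(n.factorial:ℝ)) := by
      intro m n v h0 h1
      rw [norm_mul, norm_mul]
      simp only [norm_pow, Real.norm_eq_abs, abs_neg, abs_one, one_pow, one_mul,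
        abs_of_nonneg h0]
      exact mul_le_mul_of_nonneg_left h1 (by positivity)
    have hmuν : (μ.restrict (Set.Icc (0:ℝ) x)) Set.univ ≤ 1 := by
      rw [Measure.restrict_apply_univ]; exact prob_le_one
    have hvolν : (volume.restrict (Set.Ioc (0:ℝ) x)) Set.univ ≤ 1 := by
      rw [Measure.restrict_apply_univ, Real.volume_Ioc]
      exact ENNReal.ofReal_le_one.mpr (by linarith)
    have hmem : ∀ t ∈ Set.Icc (0:ℝ) x, t ∈ Set.Icc (0:ℝ) 1 :=
      fun t ht => ⟨ht.1, ht.2.trans hx1⟩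
    have hmem' : ∀ t ∈ Set.Ioc (0:ℝ) x, t ∈ Set.Icc (0:ℝ) 1 :=
      fun t ht => ⟨ht.1.le, ht.2.trans hx1⟩
    refine ⟨?_, ?_, ?_, ?_⟩
    · -- Sp z x = z * ∫ Cp dμ
      have swap1 : (∫ t in Set.Icc (0:ℝ) x, (∑' n : ℕ, (-1:ℝ)^n * z^(2*n) * p (2*n) t) ∂μ)
          = ∑' n : ℕ, ∫ t in Set.Icc (0:ℝ) x, (-1:ℝ)^n * z^(2*n) * p (2*n) t ∂μ := by
        refine auxSwap _ hmuν _
          (fun n => (((pm_even n).measurable).const_mul _).aestronglyMeasurable)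
          (fun n => |z|^(2*n) * ((1:ℝ)/n.factorial)) (fun n => by positivity) hS0 ?_
        intro n
        refine ae_restrict_of_forall_mem measurableSet_Icc fun t ht => ?_
        exact hterm (2*n) n _ (pnn_even n t ht.1) (pb1_even n t (hmem t ht))
      have e1 : (∫ t in Set.Icc (0:ℝ) x, Cp z t ∂μ)
          = ∑' n : ℕ, (-1:ℝ)^n * z^(2*n) * p (2*n+1) x := by
        simp only [hCp]
        rw [swap1]
        exact tsum_congr fun n => by rw [integral_const_mul, ← hpodd n x]
      rw [hSp, e1, ← tsum_mul_left]
      exact tsum_congr fun n => by ring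
    · -- Sq z x = z * ∫_0^x Cq
      have swap2 : (∫ t in Set.Ioc (0:ℝ) x, (∑' n : ℕ, (-1:ℝ)^n * z^(2*n) * q (2*n) t))
          = ∑' n : ℕ, ∫ t in Set.Ioc (0:ℝ) x, (-1:ℝ)^n * z^(2*n) * q (2*n) t := by
        refine auxSwap _ hvolν _
          (fun n => (((qm_even n).measurable).const_mul _).aestronglyMeasurable)
          (fun n => |z|^(2*n) * ((1:ℝ)/n.factorial)) (fun n => by positivity) hS0 ?_
        intro n
        refine ae_restrict_of_forall_mem measurableSet_Ioc fun t ht => ?_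
        exact hterm (2*n) n _ (qnn_even n t) (qb1_even n t (hmem' t ht))
      have e2 : (∫ t in (0:ℝ)..x, Cq z t)
          = ∑' n : ℕ, (-1:ℝ)^n * z^(2*n) * q (2*n+1) x := by
        rw [intervalIntegral.integral_of_le hx0]
        simp only [hCq]
        rw [swap2]
        refine tsum_congr fun n => ?_
        rw [integral_const_mul, ← intervalIntegral.integral_of_le hx0, ← hqodd n x]
      rw [hSq, e2, ← tsum_mul_left]
      exact tsum_congr fun n => by ring
    · -- Cp z x = 1 - z * ∫_0^x Sp
      have swap3 : (∫ t in Set.Ioc (0:ℝ) x, (∑' n : ℕ, (-1:ℝ)^n * z^(2*n+1) * p (2*n+1) t))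
          = ∑' n : ℕ, ∫ t in Set.Ioc (0:ℝ) x, (-1:ℝ)^n * z^(2*n+1) * p (2*n+1) t := by
        refine auxSwap _ hvolν _
          (fun n => (((pm_odd n).measurable).const_mul _).aestronglyMeasurable)
          (fun n => |z|^(2*n+1) * ((1:ℝ)/n.factorial)) (fun n => by positivity) hS1 ?_
        intro n
        refine ae_restrict_of_forall_mem measurableSet_Ioc fun t ht => ?_
        exact hterm (2*n+1) n _ (pnn_odd n t) (pb1_odd n t (hmem' t ht))
      have e3 : (∫ t in (0:ℝ)..x, Sp z t)
          = ∑' n : ℕ, (-1:ℝ)^n * z^(2*n+1) * p (2*n+2) x := by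
        rw [intervalIntegral.integral_of_le hx0]
        simp only [hSp]
        rw [swap3]
        refine tsum_congr fun n => ?_
        rw [integral_const_mul, ← intervalIntegral.integral_of_le hx0, ← hpeven n x]
      have hsum_a : Summable (fun n : ℕ => (-1:ℝ)^n * z^(2*n) * p (2*n) x) := by
        refine Summable.of_norm (Summable.of_nonneg_of_le (fun n => norm_nonneg _)
          (fun n => hterm (2*n) n _ (pnn_even n x hx0) (pb1_even n x ⟨hx0, hx1⟩)) hS0)
      have ha0 : (-1:ℝ)^0 * z^(2*0) * p (2*0) x = 1 := by norm_num [hp0 x]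
      rw [hCp, e3, hsum_a.tsum_eq_zero_add, ha0, ← tsum_mul_left, sub_eq_add_neg, ← tsum_neg]
      congr 1
      refine tsum_congr fun n => ?_
      have h2 : 2*(n+1) = 2*n+2 := by ring
      rw [h2]
      ring
    · -- Cq z x = 1 - z * ∫ Sq dμ
      have swap4 : (∫ t in Set.Icc (0:ℝ) x, (∑' n : ℕ, (-1:ℝ)^n * z^(2*n+1) * q (2*n+1) t) ∂μ)
          = ∑' n : ℕ, ∫ t in Set.Icc (0:ℝ) x, (-1:ℝ)^n * z^(2*n+1) * q (2*n+1) t ∂μ := by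
        refine auxSwap _ hmuν _
          (fun n => (((qm_odd n).measurable).const_mul _).aestronglyMeasurable)
          (fun n => |z|^(2*n+1) * ((1:ℝ)/n.factorial)) (fun n => by positivity) hS1 ?_
        intro n
        refine ae_restrict_of_forall_mem measurableSet_Icc fun t ht => ?_
        exact hterm (2*n+1) n _ (qnn_odd n t ht.1) (qb1_odd n t (hmem t ht))
      have e4 : (∫ t in Set.Icc (0:ℝ) x, Sq z t ∂μ)
          = ∑' n : ℕ, (-1:ℝ)^n * z^(2*n+1) * q (2*n+2) x := by
        simp only [hSq]
        rw [swap4]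
        exact tsum_congr fun n => by rw [integral_const_mul, ← hqeven n x]
      have hsum_a : Summable (fun n : ℕ => (-1:ℝ)^n * z^(2*n) * q (2*n) x) := by
        refine Summable.of_norm (Summable.of_nonneg_of_le (fun n => norm_nonneg _)
          (fun n => hterm (2*n) n _ (qnn_even n x) (qb1_even n x ⟨hx0, hx1⟩)) hS0)
      have ha0 : (-1:ℝ)^0 * z^(2*0) * q (2*0) x = 1 := by norm_num [hq0 x]
      rw [hCq, e4, hsum_a.tsum_eq_zero_add, ha0, ← tsum_mul_left, sub_eq_add_neg, ← tsum_neg]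
      congr 1
      refine tsum_congr fun n => ?_
      have h2 : 2*(n+1) = 2*n+2 := by ring
      rw [h2]
      ring
end

section
/- For all k, n ∈ ℕ with k ≤ n and all x ∈ [0,1]: ∫_{[0,x]} p_{2k}(t) p_{2n−2k}(t) dμ(t) = Σ_{j=0}^{2k} (−1)^j p_j(x) p_{2n+1−j}(x), and ∫_{[0,x]} q_{2k+1}(t) q_{2n+1−2k}(t) dμ(t) = Σ_{j=0}^{2k+1} (−1)^{j+1} q_j(x) q_{2n+3−j}(x). -/
open MeasureTheory Set

lemma abs_le_max_of_monotone {f : ℝ → ℝ} (hf : Monotone f) {a b t : ℝ} (ht : t ∈ Icc a b) :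
    |f t| ≤ max |f a| |f b| := by
  rw [abs_le]
  constructor
  · calc -(max |f a| |f b|) ≤ -|f a| := by simp [le_max_left]
      _ ≤ f a := neg_abs_le _
      _ ≤ f t := hf ht.1
  · calc f t ≤ f b := hf ht.2
      _ ≤ |f b| := le_abs_self _
      _ ≤ _ := le_max_right _ _

lemma integrableOn_of_bounded' {α : Type*} [MeasurableSpace α] {ν : Measure α} {s : Set α}
    (hνs : ν s ≠ ⊤) (hs : MeasurableSet s)
    {f : α → ℝ} (hm : Measurable f) {C : ℝ} (hC : ∀ t ∈ s, |f t| ≤ C) :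
    IntegrableOn f s ν := by
  have hconst : IntegrableOn (fun _ => C) s ν := integrableOn_const hνs
  refine hconst.mono' hm.aestronglyMeasurable ?_
  exact (ae_restrict_iff' hs).mpr (ae_of_all _ fun t ht => by
    simpa [Real.norm_eq_abs] using hC t ht)

lemma mono_integrableOn {ν : Measure ℝ} {f : ℝ → ℝ} (hf : Monotone f) {a b : ℝ}
    (hνs : ν (Icc a b) ≠ ⊤) : IntegrableOn f (Icc a b) ν :=
  integrableOn_of_bounded' hνs measurableSet_Icc hf.measurable
    (fun _ ht => abs_le_max_of_monotone hf ht)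

lemma ibp (μ : Measure ℝ) [IsFiniteMeasure μ] [NullSingletonClass μ]
    {f g : ℝ → ℝ} (hf : Monotone f) (hg : Monotone g) (hf0 : 0 ≤ᵐ[μ] f)
    {x : ℝ} (hx : 0 ≤ x) :
    ∫ t in Icc (0:ℝ) x, f t * (∫ s in (0:ℝ)..t, g s) ∂μ
      = (∫ t in Icc (0:ℝ) x, f t ∂μ) * (∫ s in (0:ℝ)..x, g s)
        - ∫ s in (0:ℝ)..x, g s * (∫ t in Icc (0:ℝ) s, f t ∂μ) := by
  have hfi : ∀ a b : ℝ, IntegrableOn f (Icc a b) μ :=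
    fun a b => mono_integrableOn hf (measure_ne_top μ _)
  have hFmono : Monotone (fun s => ∫ t in Icc (0:ℝ) s, f t ∂μ) := by
    intro a b hab
    exact setIntegral_mono_set (hfi 0 b) (ae_restrict_of_ae hf0)
      ((Icc_subset_Icc_right hab).eventuallyLE)
  have stepAB : ∫ t in Icc (0:ℝ) x, f t * (∫ s in (0:ℝ)..t, g s) ∂μ
      = ∫ t in Icc (0:ℝ) x, ∫ s in Ioc (0:ℝ) x, f t * (Iic t).indicator g s ∂volume ∂μ := by
    refine setIntegral_congr_fun measurableSet_Icc (fun t ht => ?_)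
    rw [integral_const_mul]
    congr 1
    rw [intervalIntegral.integral_of_le ht.1, setIntegral_indicator measurableSet_Iic,
      Set.Ioc_inter_Iic, min_eq_right ht.2]
  have hint : Integrable (Function.uncurry fun t s => f t * (Iic t).indicator g s)
      ((μ.restrict (Icc 0 x)).prod (volume.restrict (Ioc 0 x))) := by
    have heq : (Function.uncurry fun t s => f t * (Iic t).indicator g s)
        = ({z : ℝ × ℝ | z.2 ≤ z.1}).indicator (fun z => f z.1 * g z.2) := by
      funext z
      rcases z with ⟨t, s⟩
      by_cases h : s ≤ t <;> simp [Function.uncurry, Set.indicator, h]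
    rw [heq, Measure.prod_restrict]
    refine integrableOn_of_bounded' ?_ (measurableSet_Icc.prod measurableSet_Ioc)
      (Measurable.indicator ((hf.measurable.comp measurable_fst).mul
        (hg.measurable.comp measurable_snd)) (measurableSet_le measurable_snd measurable_fst))
      (C := max |f 0| |f x| * max |g 0| |g x|) ?_
    · rw [Measure.prod_prod]
      exact ENNReal.mul_ne_top (measure_ne_top μ _) (by simp [Real.volume_Ioc])
    · rintro ⟨t, s⟩ hz
      rw [Set.mem_prod] at hz
      have h1 : |f t| ≤ max |f 0| |f x| := abs_le_max_of_monotone hf hz.1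
      have h2 : |g s| ≤ max |g 0| |g x| :=
        abs_le_max_of_monotone hg ⟨hz.2.1.le, hz.2.2⟩
      by_cases h : s ≤ t
      · simp only [Set.indicator, mem_setOf_eq, h, if_true]
        rw [abs_mul]
        exact mul_le_mul h1 h2 (abs_nonneg _) (le_trans (abs_nonneg _) (le_max_left _ _))
      · simp only [Set.indicator, mem_setOf_eq, h, if_false, abs_zero]
        exact mul_nonneg (le_trans (abs_nonneg _) (le_max_left _ _))
          (le_trans (abs_nonneg _) (le_max_left _ _))
  have stepD : ∫ s in Ioc (0:ℝ) x, (∫ t in Icc (0:ℝ) x, f t * (Iic t).indicator g s ∂μ) ∂volume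
      = ∫ s in Ioc (0:ℝ) x,
          g s * ((∫ t in Icc (0:ℝ) x, f t ∂μ) - ∫ t in Icc (0:ℝ) s, f t ∂μ) ∂volume := by
    refine setIntegral_congr_fun measurableSet_Ioc (fun s hs => ?_)
    have h1 : ∫ t in Icc (0:ℝ) x, f t * (Iic t).indicator g s ∂μ
        = ∫ t in Icc (0:ℝ) x, (Ici s).indicator (fun u => f u * g s) t ∂μ :=
      setIntegral_congr_fun measurableSet_Icc (fun t _ => by
        by_cases h : s ≤ t <;> simp [Set.indicator, h])
    rw [h1, setIntegral_indicator measurableSet_Ici]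
    have h2 : Icc (0:ℝ) x ∩ Ici s = Icc s x := by
      ext u
      simp only [mem_inter_iff, mem_Icc, mem_Ici]
      constructor
      · rintro ⟨⟨_, hb⟩, hc⟩; exact ⟨hc, hb⟩
      · rintro ⟨ha, hb⟩; exact ⟨⟨hs.1.le.trans ha, hb⟩, ha⟩
    rw [h2, integral_mul_const]
    have h3 : ∫ t in Icc (0:ℝ) x, f t ∂μ
        = (∫ t in Icc (0:ℝ) s, f t ∂μ) + ∫ t in Icc s x, f t ∂μ := by
      rw [← setIntegral_congr_set (Ioc_ae_eq_Icc (μ := μ) (a := s) (b := x)),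
        ← setIntegral_union (disjoint_left.mpr fun u hu1 hu2 => absurd hu2.1 (not_lt.mpr hu1.2))
          measurableSet_Ioc (hfi 0 s) ((hfi s x).mono_set Ioc_subset_Icc_self),
        Icc_union_Ioc_eq_Icc hs.1.le hs.2]
    rw [h3]; ring
  rw [stepAB, integral_integral_swap hint, stepD,
    intervalIntegral.integral_of_le hx, intervalIntegral.integral_of_le hx]
  have hgi : IntegrableOn g (Ioc (0:ℝ) x) volume :=
    (mono_integrableOn hg (by simp [Real.volume_Icc])).mono_set Ioc_subset_Icc_self
  have hgFi : IntegrableOn (fun s => g s * (∫ t in Icc (0:ℝ) s, f t ∂μ)) (Ioc (0:ℝ) x) volume := by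
    refine (integrableOn_of_bounded' (by simp [Real.volume_Icc]) measurableSet_Icc
      (hg.measurable.mul hFmono.measurable)
      (C := max |g 0| |g x| * max |∫ t in Icc (0:ℝ) 0, f t ∂μ| |∫ t in Icc (0:ℝ) x, f t ∂μ|)
      ?_).mono_set Ioc_subset_Icc_self
    intro s hsx
    rw [Pi.mul_apply, abs_mul]
    exact mul_le_mul (abs_le_max_of_monotone hg hsx) (abs_le_max_of_monotone hFmono hsx)
      (abs_nonneg _) (le_trans (abs_nonneg _) (le_max_left _ _))
  have hsplit : ∫ s in Ioc (0:ℝ) x,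
      g s * ((∫ t in Icc (0:ℝ) x, f t ∂μ) - ∫ t in Icc (0:ℝ) s, f t ∂μ) ∂volume
      = ∫ s in Ioc (0:ℝ) x,
        (g s * (∫ t in Icc (0:ℝ) x, f t ∂μ) - g s * (∫ t in Icc (0:ℝ) s, f t ∂μ)) ∂volume := by
    refine setIntegral_congr_fun measurableSet_Ioc (fun s _ => ?_)
    ring
  rw [hsplit, integral_sub (hgi.mul_const _) hgFi, integral_mul_const]
  ring

lemma primitive_mono {g : ℝ → ℝ} (hg : Monotone g) (hg0 : ∀ t, 0 ≤ g t) :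
    Monotone fun x => ∫ s in (0:ℝ)..x, g s := by
  intro a b hab
  have h1 : 0 ≤ ∫ s in a..b, g s :=
    intervalIntegral.integral_nonneg hab (fun u _ => hg0 u)
  have h2 := intervalIntegral.integral_add_adjacent_intervals (a := (0:ℝ)) (b := a) (c := b)
    ((hg.monotoneOn _).intervalIntegrable (μ := volume))
    ((hg.monotoneOn _).intervalIntegrable (μ := volume))
  simp only
  linarith

lemma primitive_zero {g : ℝ → ℝ} (hgz : ∀ t ≤ 0, g t = 0) {x : ℝ} (hx : x ≤ 0) :
    (∫ s in (0:ℝ)..x, g s) = 0 := by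
  rw [intervalIntegral.integral_symm, intervalIntegral.integral_of_le hx]
  have : ∫ s in Ioc x 0, g s = ∫ s in Ioc x 0, (0:ℝ) :=
    setIntegral_congr_fun measurableSet_Ioc (fun u hu => hgz u hu.2)
  rw [this]
  simp

lemma primitive_nonneg {g : ℝ → ℝ} (hg0 : ∀ t, 0 ≤ g t) (hgz : ∀ t ≤ 0, g t = 0) (x : ℝ) :
    0 ≤ ∫ s in (0:ℝ)..x, g s := by
  rcases le_or_gt 0 x with h | h
  · exact intervalIntegral.integral_nonneg h (fun u _ => hg0 u)
  · rw [primitive_zero hgz h.le]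

lemma muprim_zero (μ : Measure ℝ) [NullSingletonClass μ] (f : ℝ → ℝ) {x : ℝ} (hx : x ≤ 0) :
    (∫ t in Icc (0:ℝ) x, f t ∂μ) = 0 := by
  have h : μ (Icc (0:ℝ) x) = 0 := by
    rcases eq_or_lt_of_le hx with h | h
    · subst h; rw [Icc_self]; exact measure_singleton 0
    · rw [Icc_eq_empty (not_le.mpr h)]; exact measure_empty
  rw [Measure.restrict_eq_zero.mpr h, integral_zero_measure]

lemma muprim_mono (μ : Measure ℝ) [IsFiniteMeasure μ] {f : ℝ → ℝ} (hf : Monotone f)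
    (hf0 : 0 ≤ᵐ[μ] f) : Monotone fun x => ∫ t in Icc (0:ℝ) x, f t ∂μ := fun a b hab =>
  setIntegral_mono_set (mono_integrableOn hf (measure_ne_top μ _)) (ae_restrict_of_ae hf0)
    ((Icc_subset_Icc_right hab).eventuallyLE)

lemma muprim_nonneg (μ : Measure ℝ) {f : ℝ → ℝ} (hf0 : 0 ≤ᵐ[μ] f) (x : ℝ) :
    0 ≤ ∫ t in Icc (0:ℝ) x, f t ∂μ :=
  integral_nonneg_of_ae (ae_restrict_of_ae hf0)

theorem stmt_2
    (μ : Measure ℝ) [IsProbabilityMeasure μ] [NullSingletonClass μ]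
    (hsupp : μ (Set.Icc (0:ℝ) 1)ᶜ = 0)
    (p q : ℕ → ℝ → ℝ)
    (hp0 : ∀ x : ℝ, p 0 x = 1) (hq0 : ∀ x : ℝ, q 0 x = 1)
    (hpodd : ∀ (n : ℕ) (x : ℝ), p (2*n+1) x = ∫ t in Set.Icc (0:ℝ) x, p (2*n) t ∂μ)
    (hpeven : ∀ (n : ℕ) (x : ℝ), p (2*n+2) x = ∫ t in (0:ℝ)..x, p (2*n+1) t)
    (hqodd : ∀ (n : ℕ) (x : ℝ), q (2*n+1) x = ∫ t in (0:ℝ)..x, q (2*n) t)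
    (hqeven : ∀ (n : ℕ) (x : ℝ), q (2*n+2) x = ∫ t in Set.Icc (0:ℝ) x, q (2*n+1) t ∂μ) :
    ∀ (k n : ℕ), k ≤ n → ∀ x ∈ Set.Icc (0:ℝ) 1,
      (∫ t in Set.Icc (0:ℝ) x, p (2*k) t * p (2*n-2*k) t ∂μ) =
        ∑ j ∈ Finset.range (2*k+1), (-1:ℝ)^j * p j x * p (2*n+1-j) x ∧
      (∫ t in Set.Icc (0:ℝ) x, q (2*k+1) t * q (2*n+1-2*k) t ∂μ) =
        ∑ j ∈ Finset.range (2*k+2), (-1:ℝ)^(j+1) * q j x * q (2*n+3-j) x := by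
  have hμae : ∀ᵐ t ∂μ, t ∈ Icc (0:ℝ) 1 := by
    rw [ae_iff]; exact hsupp
  -- facts about p
  have ppair : ∀ j : ℕ, (Monotone (p (2*j)) ∧ (∀ t, 0 ≤ p (2*j) t))
      ∧ (Monotone (p (2*j+1)) ∧ (∀ t, 0 ≤ p (2*j+1) t)) := by
    intro j
    induction j with
    | zero =>
      have h0 : Monotone (p 0) ∧ ∀ t, 0 ≤ p 0 t :=
        ⟨fun a b _ => by rw [hp0, hp0], fun t => by rw [hp0]; norm_num⟩
      have h1 : Monotone (p 1) ∧ ∀ t, 0 ≤ p 1 t := by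
        have he : ∀ y : ℝ, p 1 y = ∫ t in Icc (0:ℝ) y, p 0 t ∂μ := fun y => by
          simpa using hpodd 0 y
        constructor
        · intro a b hab
          rw [he, he]
          exact muprim_mono μ h0.1 (ae_of_all _ h0.2) hab
        · intro t
          rw [he]
          exact muprim_nonneg μ (ae_of_all _ h0.2) t
      simpa using ⟨h0, h1⟩
    | succ j ih =>
      have e1 : 2*(j+1) = 2*j+2 := by omega
      have e2 : 2*(j+1)+1 = 2*(j+1)+1 := rfl
      rw [e1]
      have hzero : ∀ t ≤ 0, p (2*j+1) t = 0 := fun t ht => by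
        rw [hpodd]; exact muprim_zero μ _ ht
      have heven : Monotone (p (2*j+2)) ∧ ∀ t, 0 ≤ p (2*j+2) t := by
        constructor
        · intro a b hab
          rw [hpeven, hpeven]
          exact primitive_mono ih.2.1 ih.2.2 hab
        · intro t
          rw [hpeven]
          exact primitive_nonneg ih.2.2 hzero t
      refine ⟨heven, ?_⟩
      have he : ∀ y : ℝ, p (2*j+2+1) y = ∫ t in Icc (0:ℝ) y, p (2*j+2) t ∂μ := fun y => by
        have := hpodd (j+1) y
        rw [show 2*(j+1)+1 = 2*j+2+1 from by omega, show 2*(j+1) = 2*j+2 from by omega] at this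
        exact this
      constructor
      · intro a b hab
        rw [he, he]
        exact muprim_mono μ heven.1 (ae_of_all _ heven.2) hab
      · intro t
        rw [he]
        exact muprim_nonneg μ (ae_of_all _ heven.2) t
  have pmono : ∀ m, Monotone (p m) := by
    intro m
    rcases Nat.even_or_odd m with ⟨j, hj⟩ | ⟨j, hj⟩
    · rw [show m = 2*j from by omega]; exact (ppair j).1.1
    · rw [show m = 2*j+1 from by omega]; exact (ppair j).2.1
  have pnn : ∀ m t, 0 ≤ p m t := by
    intro m
    rcases Nat.even_or_odd m with ⟨j, hj⟩ | ⟨j, hj⟩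
    · rw [show m = 2*j from by omega]; exact (ppair j).1.2
    · rw [show m = 2*j+1 from by omega]; exact (ppair j).2.2
  have qpair : ∀ j : ℕ, (Monotone (q (2*j)) ∧ (∀ t, 0 ≤ q (2*j) t))
      ∧ (Monotone (q (2*j+1)) ∧ (∀ t, 0 ≤ t → 0 ≤ q (2*j+1) t)) := by
    intro j
    induction j with
    | zero =>
      have h0 : Monotone (q 0) ∧ ∀ t, 0 ≤ q 0 t :=
        ⟨fun a b _ => by rw [hq0, hq0], fun t => by rw [hq0]; norm_num⟩
      have he : ∀ y : ℝ, q 1 y = ∫ t in (0:ℝ)..y, q 0 t := fun y => by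
        simpa using hqodd 0 y
      have h1 : Monotone (q 1) ∧ ∀ t, 0 ≤ t → 0 ≤ q 1 t := by
        constructor
        · intro a b hab
          rw [he, he]
          exact primitive_mono h0.1 h0.2 hab
        · intro t ht
          rw [he]
          exact intervalIntegral.integral_nonneg ht (fun u _ => h0.2 u)
      simpa using ⟨h0, h1⟩
    | succ j ih =>
      rw [show 2*(j+1) = 2*j+2 from by omega]
      have hae : 0 ≤ᵐ[μ] q (2*j+1) := by
        filter_upwards [hμae] with t ht
        exact ih.2.2 t ht.1
      have heven : Monotone (q (2*j+2)) ∧ ∀ t, 0 ≤ q (2*j+2) t := by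
        constructor
        · intro a b hab
          rw [hqeven, hqeven]
          exact muprim_mono μ ih.2.1 hae hab
        · intro t
          rw [hqeven]
          exact muprim_nonneg μ hae t
      refine ⟨heven, ?_⟩
      have he : ∀ y : ℝ, q (2*j+2+1) y = ∫ t in (0:ℝ)..y, q (2*j+2) t := fun y => by
        have := hqodd (j+1) y
        rw [show 2*(j+1)+1 = 2*j+2+1 from by omega, show 2*(j+1) = 2*j+2 from by omega] at this
        exact this
      constructor
      · intro a b hab
        rw [he, he]
        exact primitive_mono heven.1 heven.2 hab
      · intro t ht
        rw [he]
        exact intervalIntegral.integral_nonneg ht (fun u _ => heven.2 u)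
  have qmono : ∀ m, Monotone (q m) := by
    intro m
    rcases Nat.even_or_odd m with ⟨j, hj⟩ | ⟨j, hj⟩
    · rw [show m = 2*j from by omega]; exact (qpair j).1.1
    · rw [show m = 2*j+1 from by omega]; exact (qpair j).2.1
  have qae : ∀ m, 0 ≤ᵐ[μ] q m := by
    intro m
    rcases Nat.even_or_odd m with ⟨j, hj⟩ | ⟨j, hj⟩
    · rw [show m = 2*j from by omega]; exact ae_of_all _ (qpair j).1.2
    · rw [show m = 2*j+1 from by omega]
      filter_upwards [hμae] with t ht
      exact (qpair j).2.2 t ht.1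
  intro k n hkn x hx
  have hx0 : (0:ℝ) ≤ x := hx.1
  have hP : ∀ m : ℕ, m ≤ n →
      (∫ t in Set.Icc (0:ℝ) x, p (2*m) t * p (2*n-2*m) t ∂μ) =
        ∑ j ∈ Finset.range (2*m+1), (-1:ℝ)^j * p j x * p (2*n+1-j) x := by
    intro m
    induction m with
    | zero =>
      intro _
      simp only [Nat.mul_zero, Nat.sub_zero, Nat.zero_add, Finset.sum_range_one, pow_zero,
        one_mul, hp0]
      rw [← hpodd n x]
    | succ k ih =>
      intro hk1
      obtain ⟨r, rfl⟩ : ∃ r, n = k + 1 + r := ⟨n - (k+1), by omega⟩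
      have ih' := ih (by omega)
      rw [show 2*(k+1+r) - 2*k = 2*r+2 from by omega] at ih'
      have ibp1 := ibp μ (f := p (2*k)) (g := p (2*r+1)) (pmono _) (pmono _)
        (ae_of_all _ (pnn (2*k))) hx0
      simp only [← hpeven r] at ibp1
      simp only [← hpodd k] at ibp1
      have ibp2 := ibp μ (f := p (2*r)) (g := p (2*k+1)) (pmono _) (pmono _)
        (ae_of_all _ (pnn (2*r))) hx0
      simp only [← hpeven k] at ibp2
      simp only [← hpodd r] at ibp2
      rw [show 2*(k+1+r) - 2*(k+1) = 2*r from by omega, show 2*(k+1) = 2*k+2 from by omega]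
      have comm1 : ∫ t in Icc (0:ℝ) x, p (2*k+2) t * p (2*r) t ∂μ
          = ∫ t in Icc (0:ℝ) x, p (2*r) t * p (2*k+2) t ∂μ :=
        setIntegral_congr_fun measurableSet_Icc fun t _ => mul_comm _ _
      rw [comm1, ibp2]
      have comm2 : ∫ s in (0:ℝ)..x, p (2*k+1) s * p (2*r+1) s
          = ∫ s in (0:ℝ)..x, p (2*r+1) s * p (2*k+1) s :=
        intervalIntegral.integral_congr fun s _ => mul_comm _ _
      rw [comm2]
      have key1 : ∫ s in (0:ℝ)..x, p (2*r+1) s * p (2*k+1) s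
          = p (2*k+1) x * p (2*r+2) x
            - ∑ j ∈ Finset.range (2*k+1), (-1:ℝ)^j * p j x * p (2*(k+1+r)+1-j) x := by
        rw [← ih']
        linarith [ibp1]
      have expand : ∑ j ∈ Finset.range (2*k+2+1), (-1:ℝ)^j * p j x * p (2*(k+1+r)+1-j) x
          = (∑ j ∈ Finset.range (2*k+1), (-1:ℝ)^j * p j x * p (2*(k+1+r)+1-j) x)
            - p (2*k+1) x * p (2*r+2) x + p (2*k+2) x * p (2*r+1) x := by
        rw [show 2*k+2+1 = (2*k+1)+1+1 from by omega, Finset.sum_range_succ,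
          Finset.sum_range_succ]
        rw [show 2*k+1+1 = 2*k+2 from by omega]
        rw [show 2*(k+1+r)+1 - (2*k+1) = 2*r+2 from by omega,
          show 2*(k+1+r)+1 - (2*k+2) = 2*r+1 from by omega]
        rw [show ((-1:ℝ))^(2*k+1) = -1 from Odd.neg_one_pow ⟨k, rfl⟩,
          show ((-1:ℝ))^(2*k+2) = 1 from Even.neg_one_pow ⟨k+1, by ring⟩]
        ring
      rw [key1, expand]
      ring
  have hqodd3 : ∀ (m : ℕ) (y : ℝ), q (2*m+3) y = ∫ t in (0:ℝ)..y, q (2*m+2) t := fun m y => by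
    have := hqodd (m+1) y
    rwa [show 2*(m+1)+1 = 2*m+3 from by omega, show 2*(m+1) = 2*m+2 from by omega] at this
  have hQ : ∀ m : ℕ, m ≤ n →
      (∫ t in Set.Icc (0:ℝ) x, q (2*m+1) t * q (2*n+1-2*m) t ∂μ) =
        ∑ j ∈ Finset.range (2*m+2), (-1:ℝ)^(j+1) * q j x * q (2*n+3-j) x := by
    intro m
    induction m with
    | zero =>
      intro _
      simp only [Nat.mul_zero, Nat.sub_zero, Nat.zero_add, zero_add]
      have hq1 : ∀ y : ℝ, q 1 y = ∫ t in (0:ℝ)..y, q 0 t := fun y => by simpa using hqodd 0 y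
      have ibp0 := ibp μ (f := q (2*n+1)) (g := q 0) (qmono _) (qmono _) (qae _) hx0
      simp only [← hq1] at ibp0
      simp only [← hqeven n] at ibp0
      have h3 : ∫ s in (0:ℝ)..x, q 0 s * q (2*n+2) s = q (2*n+3) x := by
        rw [hqodd3 n x]
        exact intervalIntegral.integral_congr fun s _ => by rw [hq0, one_mul]
      have comm : ∫ t in Icc (0:ℝ) x, q 1 t * q (2*n+1) t ∂μ
          = ∫ t in Icc (0:ℝ) x, q (2*n+1) t * q 1 t ∂μ :=
        setIntegral_congr_fun measurableSet_Icc fun t _ => mul_comm _ _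
      rw [comm, ibp0, h3]
      rw [Finset.sum_range_succ, Finset.sum_range_one]
      rw [hq0]
      rw [show 2*n+3-0 = 2*n+3 from by omega, show 2*n+3-1 = 2*n+2 from by omega]
      norm_num
      ring
    | succ k ih =>
      intro hk1
      obtain ⟨r, rfl⟩ : ∃ r, n = k + 1 + r := ⟨n - (k+1), by omega⟩
      have ih' := ih (by omega)
      rw [show 2*(k+1+r)+1 - 2*k = 2*r+3 from by omega] at ih'
      have ibp1 := ibp μ (f := q (2*k+1)) (g := q (2*r+2)) (qmono _) (qmono _) (qae _) hx0
      simp only [← hqodd3 r] at ibp1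
      simp only [← hqeven k] at ibp1
      have ibp2 := ibp μ (f := q (2*r+1)) (g := q (2*k+2)) (qmono _) (qmono _) (qae _) hx0
      simp only [← hqodd3 k] at ibp2
      simp only [← hqeven r] at ibp2
      rw [show 2*(k+1+r)+1 - 2*(k+1) = 2*r+1 from by omega,
        show 2*(k+1)+1 = 2*k+3 from by omega,
        show 2*(k+1)+2 = (2*k+2)+1+1 from by omega]
      have comm1 : ∫ t in Icc (0:ℝ) x, q (2*k+3) t * q (2*r+1) t ∂μ
          = ∫ t in Icc (0:ℝ) x, q (2*r+1) t * q (2*k+3) t ∂μ :=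
        setIntegral_congr_fun measurableSet_Icc fun t _ => mul_comm _ _
      rw [comm1, ibp2]
      have comm2 : ∫ s in (0:ℝ)..x, q (2*k+2) s * q (2*r+2) s
          = ∫ s in (0:ℝ)..x, q (2*r+2) s * q (2*k+2) s :=
        intervalIntegral.integral_congr fun s _ => mul_comm _ _
      rw [comm2]
      have key1 : ∫ s in (0:ℝ)..x, q (2*r+2) s * q (2*k+2) s
          = q (2*k+2) x * q (2*r+3) x
            - ∑ j ∈ Finset.range (2*k+2), (-1:ℝ)^(j+1) * q j x * q (2*(k+1+r)+3-j) x := by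
        rw [← ih']
        linarith [ibp1]
      have expand : ∑ j ∈ Finset.range ((2*k+2)+1+1), (-1:ℝ)^(j+1) * q j x * q (2*(k+1+r)+3-j) x
          = (∑ j ∈ Finset.range (2*k+2), (-1:ℝ)^(j+1) * q j x * q (2*(k+1+r)+3-j) x)
            - q (2*k+2) x * q (2*r+3) x + q (2*k+3) x * q (2*r+2) x := by
        rw [Finset.sum_range_succ, Finset.sum_range_succ]
        rw [show 2*k+2+1 = 2*k+3 from by omega]
        rw [show 2*(k+1+r)+3 - (2*k+2) = 2*r+3 from by omega,
          show 2*(k+1+r)+3 - (2*k+3) = 2*r+2 from by omega]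
        rw [show ((-1:ℝ))^(2*k+2+1) = -1 from Odd.neg_one_pow ⟨k+1, by ring⟩,
          show ((-1:ℝ))^(2*k+3+1) = 1 from Even.neg_one_pow ⟨k+2, by ring⟩]
        ring
      rw [key1, expand]
      ring
  exact ⟨hP k hkn, hQ k hkn⟩
end

section
/- For all k, n ∈ ℕ with 1 ≤ k ≤ n and all x ∈ [0,1]: ∫_{[0,x]} q_{2k−1}(t) p_{2n−2k}(t) dμ(t) = Σ_{j=0}^{2k−1} (−1)^{j+1} q_j(x) p_{2n−j}(x). -/
open MeasureTheory

open Set in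
private lemma meas_cumul {μ : Measure ℝ} [IsFiniteMeasure μ] {f : ℝ → ℝ}
    (hf : Measurable f) (hfi : Integrable f μ) :
    Measurable (fun x => ∫ t in Icc (0:ℝ) x, f t ∂μ) := by
  have key : ∀ g : ℝ → ℝ, Measurable g → Integrable g μ → (∀ t, 0 ≤ g t) →
      Measurable (fun x => ∫ t in Icc (0:ℝ) x, g t ∂μ) := by
    intro g _ hgi hgpos
    apply Monotone.measurable
    intro a b hab
    exact setIntegral_mono_set hgi.integrableOn
      (Filter.Eventually.of_forall hgpos)
      (HasSubset.Subset.eventuallyLE (Icc_subset_Icc_right hab))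
  have h1 := key (fun t => max (f t) 0) (hf.max measurable_const)
    hfi.pos_part (fun t => le_max_right _ _)
  have h2 := key (fun t => max (-f t) 0) (hf.neg.max measurable_const)
    hfi.neg.pos_part (fun t => le_max_right _ _)
  have heq : (fun x => ∫ t in Icc (0:ℝ) x, f t ∂μ)
      = fun x => (∫ t in Icc (0:ℝ) x, max (f t) 0 ∂μ)
          - ∫ t in Icc (0:ℝ) x, max (-f t) 0 ∂μ := by
    funext x
    have hsplit : ∫ t in Icc (0:ℝ) x, f t ∂μ
        = ∫ t in Icc (0:ℝ) x, (max (f t) 0 - max (-f t) 0) ∂μ := by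
      congr 1
      funext t
      simp [max_zero_sub_eq_self]
    have hnint : Integrable (fun t => max (-f t) 0) μ := hfi.neg.pos_part
    rw [hsplit, integral_sub hfi.pos_part.integrableOn hnint.integrableOn]
  rw [heq]
  exact h1.sub h2

private lemma intInt_of_bound {f : ℝ → ℝ} (hf : Measurable f) {B : ℝ → ℝ}
    (hb : ∀ R : ℝ, 1 ≤ R → ∀ y : ℝ, |y| ≤ R → |f y| ≤ B R) (a b : ℝ) :
    IntervalIntegrable f volume a b := by
  set R := max 1 (max |a| |b|) with hR
  have hR1 : (1:ℝ) ≤ R := le_max_left _ _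
  have hmem : ∀ y ∈ Set.uIcc a b, |y| ≤ R := by
    intro y hy
    rcases le_total a b with hab | hab
    · rw [Set.uIcc_of_le hab] at hy
      have := abs_le_max_abs_abs hy.1 hy.2
      calc |y| ≤ max |a| |b| := this
        _ ≤ R := le_max_right _ _
    · rw [Set.uIcc_of_ge hab] at hy
      have := abs_le_max_abs_abs hy.1 hy.2
      calc |y| ≤ max |b| |a| := this
        _ ≤ max |a| |b| := by rw [max_comm]
        _ ≤ R := le_max_right _ _
  have hfin : volume (Set.uIcc a b) ≠ ⊤ := by
    rw [Set.uIcc]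
    exact measure_Icc_lt_top.ne
  refine (Measure.integrableOn_of_bounded (M := B R) hfin hf.aestronglyMeasurable ?_).intervalIntegrable
  filter_upwards [ae_restrict_mem measurableSet_uIcc] with y hy
  rw [Real.norm_eq_abs]
  exact hb R hR1 y (hmem y hy)

/-- Integration by parts, first form: the absolutely continuous factor is
differentiated, the `μ`-cumulative factor is integrated. -/
private lemma partsA (μ : Measure ℝ) [IsProbabilityMeasure μ] [NullSingletonClass μ]
    {x C : ℝ} (hx : 0 ≤ x)
    {f h : ℝ → ℝ} (hf : Measurable f) (hh : Measurable h)
    (hfb : ∀ᵐ t ∂μ, |f t| ≤ C) (hhb : ∀ t ∈ Set.Icc (0:ℝ) x, |h t| ≤ C) :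
    ∫ t in Set.Icc (0:ℝ) x, (∫ s in (0:ℝ)..t, h s) * f t ∂μ
      = (∫ s in (0:ℝ)..x, h s) * (∫ t in Set.Icc (0:ℝ) x, f t ∂μ)
        - ∫ s in (0:ℝ)..x, h s * (∫ t in Set.Icc (0:ℝ) s, f t ∂μ) := by
  have hC0 : 0 ≤ C := le_trans (abs_nonneg _) (hhb 0 ⟨le_refl _, hx⟩)
  have hfnorm : ∀ᵐ t ∂μ, ‖f t‖ ≤ C := by
    filter_upwards [hfb] with t ht using by rwa [Real.norm_eq_abs]
  have hfi : Integrable f μ := ⟨hf.aestronglyMeasurable, HasFiniteIntegral.of_bounded hfnorm⟩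
  have hPb : ∀ u : ℝ, |∫ t in Set.Icc (0:ℝ) u, f t ∂μ| ≤ C := by
    intro u
    have h1 := norm_integral_le_of_norm_le_const
      (μ := μ.restrict (Set.Icc (0:ℝ) u)) (ae_restrict_of_ae hfnorm)
    rw [Real.norm_eq_abs] at h1
    refine h1.trans ?_
    rw [measureReal_def, Measure.restrict_apply_univ]
    have h2 : (μ (Set.Icc (0:ℝ) u)).toReal ≤ 1 := by
      rw [← ENNReal.toReal_one]
      exact ENNReal.toReal_mono ENNReal.one_ne_top prob_le_one
    calc C * (μ (Set.Icc (0:ℝ) u)).toReal ≤ C * 1 := by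
          exact mul_le_mul_of_nonneg_left h2 hC0
      _ = C := mul_one C
  have hPm : Measurable (fun u => ∫ t in Set.Icc (0:ℝ) u, f t ∂μ) := meas_cumul hf hfi
  haveI : IsFiniteMeasure (volume.restrict (Set.Ioc (0:ℝ) x)) :=
    ⟨by rw [Measure.restrict_apply_univ]; exact measure_Ioc_lt_top⟩
  set F : ℝ → ℝ → ℝ := fun t s => if s ≤ t then h s * f t else 0 with hF
  have hFm : Measurable (Function.uncurry F) := by
    apply Measurable.ite (measurableSet_le measurable_snd measurable_fst)
      ((hh.comp measurable_snd).mul (hf.comp measurable_fst)) measurable_const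
  have hprod : (μ.restrict (Set.Icc (0:ℝ) x)).prod (volume.restrict (Set.Ioc (0:ℝ) x))
      = (μ.prod volume).restrict ((Set.Icc (0:ℝ) x) ×ˢ (Set.Ioc (0:ℝ) x)) :=
    Measure.prod_restrict _ _
  have hmem : ∀ᵐ p : ℝ × ℝ ∂(μ.restrict (Set.Icc (0:ℝ) x)).prod
      (volume.restrict (Set.Ioc (0:ℝ) x)), p ∈ (Set.Icc (0:ℝ) x) ×ˢ (Set.Ioc (0:ℝ) x) := by
    rw [hprod]
    exact ae_restrict_mem (measurableSet_Icc.prod measurableSet_Ioc)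
  have hfae : ∀ᵐ p : ℝ × ℝ ∂(μ.restrict (Set.Icc (0:ℝ) x)).prod
      (volume.restrict (Set.Ioc (0:ℝ) x)), |f p.1| ≤ C := by
    rw [ae_iff]
    have hset : {p : ℝ × ℝ | ¬ |f p.1| ≤ C} = {t : ℝ | ¬ |f t| ≤ C} ×ˢ (Set.univ : Set ℝ) := by
      ext ⟨t, s⟩; simp
    rw [hset, Measure.prod_prod]
    have h0 : μ.restrict (Set.Icc (0:ℝ) x) {t | ¬ |f t| ≤ C} = 0 :=
      ae_iff.mp (ae_restrict_of_ae hfb)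
    rw [h0, zero_mul]
  have hFi : Integrable (Function.uncurry F)
      ((μ.restrict (Set.Icc (0:ℝ) x)).prod (volume.restrict (Set.Ioc (0:ℝ) x))) := by
    refine ⟨hFm.aestronglyMeasurable, HasFiniteIntegral.of_bounded (C := C * C) ?_⟩
    filter_upwards [hmem, hfae] with p hp hfp
    obtain ⟨hp1, hp2⟩ := hp
    show ‖if p.2 ≤ p.1 then h p.2 * f p.1 else 0‖ ≤ C * C
    split_ifs
    · rw [Real.norm_eq_abs, abs_mul]
      exact mul_le_mul (hhb _ (Set.Ioc_subset_Icc_self hp2)) hfp (abs_nonneg _) hC0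
    · simpa using mul_nonneg hC0 hC0
  have hswap := integral_integral_swap hFi
  -- left side of the swap
  have L1 : (∫ t in Set.Icc (0:ℝ) x, ∫ s in Set.Ioc (0:ℝ) x, F t s ∂volume ∂μ)
      = ∫ t in Set.Icc (0:ℝ) x, (∫ s in (0:ℝ)..t, h s) * f t ∂μ := by
    apply setIntegral_congr_ae measurableSet_Icc
    apply Filter.Eventually.of_forall
    intro t ht
    calc ∫ s in Set.Ioc (0:ℝ) x, F t s
        = ∫ s in Set.Ioc (0:ℝ) x, (Set.Iic t).indicator (fun s => h s * f t) s := by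
          apply setIntegral_congr_ae measurableSet_Ioc
          apply Filter.Eventually.of_forall
          intro s _
          simp [hF, Set.indicator_apply]
      _ = ∫ s in Set.Ioc (0:ℝ) x ∩ Set.Iic t, h s * f t := setIntegral_indicator measurableSet_Iic
      _ = ∫ s in Set.Ioc (0:ℝ) t, h s * f t := by
          rw [Set.Ioc_inter_Iic, inf_eq_right.mpr ht.2]
      _ = (∫ s in Set.Ioc (0:ℝ) t, h s) * f t := by rw [integral_mul_const]
      _ = (∫ s in (0:ℝ)..t, h s) * f t := by rw [intervalIntegral.integral_of_le ht.1]
  -- right side of the swap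
  have R1 : (∫ s in Set.Ioc (0:ℝ) x, ∫ t in Set.Icc (0:ℝ) x, F t s ∂μ ∂volume)
      = ∫ s in Set.Ioc (0:ℝ) x,
          h s * ((∫ t in Set.Icc (0:ℝ) x, f t ∂μ) - ∫ t in Set.Icc (0:ℝ) s, f t ∂μ) := by
    apply setIntegral_congr_ae measurableSet_Ioc
    apply Filter.Eventually.of_forall
    intro s hs
    have hIcap : Set.Icc (0:ℝ) x ∩ Set.Ici s = Set.Icc s x := by
      ext u
      simp only [Set.mem_inter_iff, Set.mem_Icc, Set.mem_Ici]
      constructor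
      · rintro ⟨⟨_, h2⟩, h3⟩; exact ⟨h3, h2⟩
      · rintro ⟨h1, h2⟩; exact ⟨⟨le_trans hs.1.le h1, h2⟩, h1⟩
    have hsplit : ∫ t in Set.Icc s x, f t ∂μ
        = (∫ t in Set.Icc (0:ℝ) x, f t ∂μ) - ∫ t in Set.Icc (0:ℝ) s, f t ∂μ := by
      have h1 : ∫ t in Set.Ico (0:ℝ) s, f t ∂μ = ∫ t in Set.Icc (0:ℝ) s, f t ∂μ :=
        setIntegral_congr_set Ico_ae_eq_Icc
      have hd : Disjoint (Set.Ico (0:ℝ) s) (Set.Icc s x) := by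
        apply Set.disjoint_left.mpr
        rintro u ⟨_, hu2⟩ ⟨hu3, _⟩
        exact absurd hu3 (not_le.mpr hu2)
      have h3 := setIntegral_union hd measurableSet_Icc
        (hfi.integrableOn (s := Set.Ico (0:ℝ) s)) (hfi.integrableOn (s := Set.Icc s x))
      rw [Set.Ico_union_Icc_eq_Icc hs.1.le hs.2] at h3
      rw [h1] at h3
      linarith
    calc ∫ t in Set.Icc (0:ℝ) x, F t s ∂μ
        = ∫ t in Set.Icc (0:ℝ) x, (Set.Ici s).indicator (fun t => h s * f t) t ∂μ := by
          apply setIntegral_congr_ae measurableSet_Icc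
          apply Filter.Eventually.of_forall
          intro t _
          simp [hF, Set.indicator_apply]
      _ = ∫ t in Set.Icc (0:ℝ) x ∩ Set.Ici s, h s * f t ∂μ := setIntegral_indicator measurableSet_Ici
      _ = ∫ t in Set.Icc s x, h s * f t ∂μ := by rw [hIcap]
      _ = h s * ∫ t in Set.Icc s x, f t ∂μ := by rw [integral_const_mul]
      _ = h s * ((∫ t in Set.Icc (0:ℝ) x, f t ∂μ) - ∫ t in Set.Icc (0:ℝ) s, f t ∂μ) := by
          rw [hsplit]
  -- integrability on the Lebesgue side
  have hIh : IntegrableOn h (Set.Ioc (0:ℝ) x) volume := by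
    refine Measure.integrableOn_of_bounded (M := C) measure_Ioc_lt_top.ne hh.aestronglyMeasurable ?_
    filter_upwards [ae_restrict_mem measurableSet_Ioc] with s hs
    rw [Real.norm_eq_abs]
    exact hhb s (Set.Ioc_subset_Icc_self hs)
  have hIhP : IntegrableOn (fun s => h s * (∫ t in Set.Icc (0:ℝ) s, f t ∂μ))
      (Set.Ioc (0:ℝ) x) volume := by
    refine Measure.integrableOn_of_bounded (M := C * C) measure_Ioc_lt_top.ne
      ((hh.mul hPm).aestronglyMeasurable) ?_
    filter_upwards [ae_restrict_mem measurableSet_Ioc] with s hs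
    rw [Real.norm_eq_abs, abs_mul]
    exact mul_le_mul (hhb s (Set.Ioc_subset_Icc_self hs)) (hPb s) (abs_nonneg _) hC0
  -- assemble
  rw [L1, R1] at hswap
  rw [hswap]
  have hfinal : ∫ s in Set.Ioc (0:ℝ) x,
      h s * ((∫ t in Set.Icc (0:ℝ) x, f t ∂μ) - ∫ t in Set.Icc (0:ℝ) s, f t ∂μ)
      = (∫ s in Set.Ioc (0:ℝ) x, h s) * (∫ t in Set.Icc (0:ℝ) x, f t ∂μ)
        - ∫ s in Set.Ioc (0:ℝ) x, h s * (∫ t in Set.Icc (0:ℝ) s, f t ∂μ) := by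
    simp only [mul_sub]
    rw [integral_sub (hIh.mul_const _) hIhP, integral_mul_const]
  rw [hfinal, intervalIntegral.integral_of_le hx, intervalIntegral.integral_of_le hx]

/-- Integration by parts, second form: the `μ`-cumulative factor is differentiated,
the absolutely continuous one is integrated. -/
private lemma partsB (μ : Measure ℝ) [IsProbabilityMeasure μ] [NullSingletonClass μ]
    {x C : ℝ} (hx : 0 ≤ x)
    {g h : ℝ → ℝ} (hg : Measurable g) (hh : Measurable h)
    (hhi : ∀ a b : ℝ, IntervalIntegrable h volume a b)
    (hgb : ∀ᵐ t ∂μ, |g t| ≤ C) (hhb : ∀ t ∈ Set.Icc (0:ℝ) x, |h t| ≤ C) :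
    ∫ s in (0:ℝ)..x, (∫ t in Set.Icc (0:ℝ) s, g t ∂μ) * h s
      = (∫ t in Set.Icc (0:ℝ) x, g t ∂μ) * (∫ s in (0:ℝ)..x, h s)
        - ∫ t in Set.Icc (0:ℝ) x, g t * (∫ s in (0:ℝ)..t, h s) ∂μ := by
  have hC0 : 0 ≤ C := le_trans (abs_nonneg _) (hhb 0 ⟨le_refl _, hx⟩)
  have hgnorm : ∀ᵐ t ∂μ, ‖g t‖ ≤ C := by
    filter_upwards [hgb] with t ht using by rwa [Real.norm_eq_abs]
  have hgi : Integrable g μ := ⟨hg.aestronglyMeasurable, HasFiniteIntegral.of_bounded hgnorm⟩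
  have hHm : Measurable (fun u => ∫ s in (0:ℝ)..u, h s) :=
    (intervalIntegral.continuous_primitive hhi 0).measurable
  have hHb : ∀ u ∈ Set.Icc (0:ℝ) x, |∫ s in (0:ℝ)..u, h s| ≤ C * x := by
    intro u hu
    have hb : ∀ s ∈ Set.uIoc (0:ℝ) u, ‖h s‖ ≤ C := by
      intro s hs
      rw [Real.norm_eq_abs]
      rcases Set.mem_uIoc.mp hs with ⟨h1, h2⟩ | ⟨h1, h2⟩
      · exact hhb s ⟨h1.le, h2.trans hu.2⟩
      · exact hhb s ⟨by linarith [hu.1], by linarith [hu.1, hu.2]⟩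
    have h1 := intervalIntegral.norm_integral_le_of_norm_le_const hb
    rw [Real.norm_eq_abs, sub_zero] at h1
    refine h1.trans ?_
    rw [abs_of_nonneg hu.1]
    exact mul_le_mul_of_nonneg_left hu.2 hC0
  haveI : IsFiniteMeasure (volume.restrict (Set.Ioc (0:ℝ) x)) :=
    ⟨by rw [Measure.restrict_apply_univ]; exact measure_Ioc_lt_top⟩
  set F : ℝ → ℝ → ℝ := fun t s => if t ≤ s then g t * h s else 0 with hF
  have hFm : Measurable (Function.uncurry F) := by
    apply Measurable.ite (measurableSet_le measurable_fst measurable_snd)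
      ((hg.comp measurable_fst).mul (hh.comp measurable_snd)) measurable_const
  have hprod : (μ.restrict (Set.Icc (0:ℝ) x)).prod (volume.restrict (Set.Ioc (0:ℝ) x))
      = (μ.prod volume).restrict ((Set.Icc (0:ℝ) x) ×ˢ (Set.Ioc (0:ℝ) x)) :=
    Measure.prod_restrict _ _
  have hmem : ∀ᵐ p : ℝ × ℝ ∂(μ.restrict (Set.Icc (0:ℝ) x)).prod
      (volume.restrict (Set.Ioc (0:ℝ) x)), p ∈ (Set.Icc (0:ℝ) x) ×ˢ (Set.Ioc (0:ℝ) x) := by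
    rw [hprod]
    exact ae_restrict_mem (measurableSet_Icc.prod measurableSet_Ioc)
  have hgae : ∀ᵐ p : ℝ × ℝ ∂(μ.restrict (Set.Icc (0:ℝ) x)).prod
      (volume.restrict (Set.Ioc (0:ℝ) x)), |g p.1| ≤ C := by
    rw [ae_iff]
    have hset : {p : ℝ × ℝ | ¬ |g p.1| ≤ C} = {t : ℝ | ¬ |g t| ≤ C} ×ˢ (Set.univ : Set ℝ) := by
      ext ⟨t, s⟩; simp
    rw [hset, Measure.prod_prod]
    have h0 : μ.restrict (Set.Icc (0:ℝ) x) {t | ¬ |g t| ≤ C} = 0 :=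
      ae_iff.mp (ae_restrict_of_ae hgb)
    rw [h0, zero_mul]
  have hFi : Integrable (Function.uncurry F)
      ((μ.restrict (Set.Icc (0:ℝ) x)).prod (volume.restrict (Set.Ioc (0:ℝ) x))) := by
    refine ⟨hFm.aestronglyMeasurable, HasFiniteIntegral.of_bounded (C := C * C) ?_⟩
    filter_upwards [hmem, hgae] with p hp hgp
    obtain ⟨hp1, hp2⟩ := hp
    show ‖if p.1 ≤ p.2 then g p.1 * h p.2 else 0‖ ≤ C * C
    split_ifs
    · rw [Real.norm_eq_abs, abs_mul]
      exact mul_le_mul hgp (hhb _ (Set.Ioc_subset_Icc_self hp2)) (abs_nonneg _) hC0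
    · simpa using mul_nonneg hC0 hC0
  have hswap := integral_integral_swap hFi
  have hne0 : ∀ᵐ t ∂μ, t ≠ (0:ℝ) := by
    rw [ae_iff]
    have : {t : ℝ | ¬ t ≠ 0} = {(0:ℝ)} := by ext t; simp
    rw [this]
    exact measure_singleton 0
  -- μ-side of the swap
  have L1 : (∫ t in Set.Icc (0:ℝ) x, ∫ s in Set.Ioc (0:ℝ) x, F t s ∂volume ∂μ)
      = ∫ t in Set.Icc (0:ℝ) x,
          g t * ((∫ s in (0:ℝ)..x, h s) - ∫ s in (0:ℝ)..t, h s) ∂μ := by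
    apply integral_congr_ae
    filter_upwards [ae_restrict_mem measurableSet_Icc, ae_restrict_of_ae hne0] with t ht ht0
    have ht' : 0 < t := lt_of_le_of_ne ht.1 (Ne.symm ht0)
    have hIcap : Set.Ioc (0:ℝ) x ∩ Set.Ici t = Set.Icc t x := by
      ext u
      simp only [Set.mem_inter_iff, Set.mem_Ioc, Set.mem_Ici, Set.mem_Icc]
      constructor
      · rintro ⟨⟨_, h2⟩, h3⟩; exact ⟨h3, h2⟩
      · rintro ⟨h1, h2⟩; exact ⟨⟨lt_of_lt_of_le ht' h1, h2⟩, h1⟩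
    calc ∫ s in Set.Ioc (0:ℝ) x, F t s
        = ∫ s in Set.Ioc (0:ℝ) x, (Set.Ici t).indicator (fun s => g t * h s) s := by
          apply setIntegral_congr_ae measurableSet_Ioc
          apply Filter.Eventually.of_forall
          intro s _
          simp [hF, Set.indicator_apply]
      _ = ∫ s in Set.Ioc (0:ℝ) x ∩ Set.Ici t, g t * h s := setIntegral_indicator measurableSet_Ici
      _ = ∫ s in Set.Icc t x, g t * h s := by rw [hIcap]
      _ = g t * ∫ s in Set.Icc t x, h s := by rw [integral_const_mul]
      _ = g t * ∫ s in Set.Ioc t x, h s := by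
          rw [setIntegral_congr_set Ioc_ae_eq_Icc]
      _ = g t * ∫ s in t..x, h s := by rw [intervalIntegral.integral_of_le ht.2]
      _ = g t * ((∫ s in (0:ℝ)..x, h s) - ∫ s in (0:ℝ)..t, h s) := by
          rw [intervalIntegral.integral_interval_sub_left (hhi 0 x) (hhi 0 t)]
  -- Lebesgue side of the swap
  have R1 : (∫ s in Set.Ioc (0:ℝ) x, ∫ t in Set.Icc (0:ℝ) x, F t s ∂μ ∂volume)
      = ∫ s in Set.Ioc (0:ℝ) x, (∫ t in Set.Icc (0:ℝ) s, g t ∂μ) * h s := by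
    apply setIntegral_congr_ae measurableSet_Ioc
    apply Filter.Eventually.of_forall
    intro s hs
    have hIcap : Set.Icc (0:ℝ) x ∩ Set.Iic s = Set.Icc (0:ℝ) s := by
      ext u
      simp only [Set.mem_inter_iff, Set.mem_Icc, Set.mem_Iic]
      constructor
      · rintro ⟨⟨h1, _⟩, h3⟩; exact ⟨h1, h3⟩
      · rintro ⟨h1, h2⟩; exact ⟨⟨h1, h2.trans hs.2⟩, h2⟩
    calc ∫ t in Set.Icc (0:ℝ) x, F t s ∂μ
        = ∫ t in Set.Icc (0:ℝ) x, (Set.Iic s).indicator (fun t => g t * h s) t ∂μ := by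
          apply setIntegral_congr_ae measurableSet_Icc
          apply Filter.Eventually.of_forall
          intro t _
          simp [hF, Set.indicator_apply]
      _ = ∫ t in Set.Icc (0:ℝ) x ∩ Set.Iic s, g t * h s ∂μ := setIntegral_indicator measurableSet_Iic
      _ = ∫ t in Set.Icc (0:ℝ) s, g t * h s ∂μ := by rw [hIcap]
      _ = (∫ t in Set.Icc (0:ℝ) s, g t ∂μ) * h s := by rw [integral_mul_const]
  -- integrability on the μ side
  have hIg : IntegrableOn g (Set.Icc (0:ℝ) x) μ := hgi.integrableOn
  have hIgH : IntegrableOn (fun t => g t * (∫ s in (0:ℝ)..t, h s)) (Set.Icc (0:ℝ) x) μ := by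
    refine Measure.integrableOn_of_bounded (M := C * (C * x)) (measure_ne_top μ _)
      ((hg.mul hHm).aestronglyMeasurable) ?_
    filter_upwards [ae_restrict_mem measurableSet_Icc, ae_restrict_of_ae hgb] with t ht hgt
    rw [Real.norm_eq_abs, abs_mul]
    exact mul_le_mul hgt (hHb t ht) (abs_nonneg _) hC0
  rw [L1, R1] at hswap
  rw [intervalIntegral.integral_of_le hx, ← hswap]
  simp only [mul_sub]
  rw [integral_sub (hIg.mul_const _) hIgH, integral_mul_const]

theorem stmt_4
    (μ : Measure ℝ) [IsProbabilityMeasure μ] [NullSingletonClass μ]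
    (hsupp : μ (Set.Icc (0:ℝ) 1)ᶜ = 0)
    (p q : ℕ → ℝ → ℝ)
    (hp0 : ∀ x : ℝ, p 0 x = 1) (hq0 : ∀ x : ℝ, q 0 x = 1)
    (hpodd : ∀ (n : ℕ) (x : ℝ), p (2*n+1) x = ∫ t in Set.Icc (0:ℝ) x, p (2*n) t ∂μ)
    (hpeven : ∀ (n : ℕ) (x : ℝ), p (2*n+2) x = ∫ t in (0:ℝ)..x, p (2*n+1) t)
    (hqodd : ∀ (n : ℕ) (x : ℝ), q (2*n+1) x = ∫ t in (0:ℝ)..x, q (2*n) t)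
    (hqeven : ∀ (n : ℕ) (x : ℝ), q (2*n+2) x = ∫ t in Set.Icc (0:ℝ) x, q (2*n+1) t ∂μ) :
    ∀ (k n : ℕ), 1 ≤ k → k ≤ n → ∀ x ∈ Set.Icc (0:ℝ) 1,
      (∫ t in Set.Icc (0:ℝ) x, q (2*k-1) t * p (2*n-2*k) t ∂μ) =
        ∑ j ∈ Finset.range (2*k), (-1:ℝ)^(j+1) * q j x * p (2*n-j) x := by
  have hae : ∀ᵐ t ∂μ, t ∈ Set.Icc (0:ℝ) 1 := by
    rw [ae_iff]
    have : {t : ℝ | ¬ t ∈ Set.Icc (0:ℝ) 1} = (Set.Icc (0:ℝ) 1)ᶜ := rfl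
    rw [this]
    exact hsupp
  -- measurability and bounds
  have master : ∀ j : ℕ, Measurable (p j) ∧ Measurable (q j) ∧
      ∀ R : ℝ, 1 ≤ R → ∀ y : ℝ, |y| ≤ R → |p j y| ≤ R ^ j ∧ |q j y| ≤ R ^ j := by
    intro j
    induction j with
    | zero =>
      have hpe : p 0 = fun _ => (1:ℝ) := funext hp0
      have hqe : q 0 = fun _ => (1:ℝ) := funext hq0
      refine ⟨hpe ▸ measurable_const, hqe ▸ measurable_const, ?_⟩
      intro R hR y hy
      rw [hp0, hq0]
      simp
    | succ j ih =>
      obtain ⟨hpm, hqm, hbd⟩ := ih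
      have hb1p : ∀ y, |y| ≤ 1 → |p j y| ≤ 1 := fun y hy => by
        simpa using (hbd 1 le_rfl y hy).1
      have hb1q : ∀ y, |y| ≤ 1 → |q j y| ≤ 1 := fun y hy => by
        simpa using (hbd 1 le_rfl y hy).2
      have muStep : ∀ f : ℝ → ℝ, Measurable f → (∀ y, |y| ≤ 1 → |f y| ≤ 1) →
          Measurable (fun y => ∫ t in Set.Icc (0:ℝ) y, f t ∂μ) ∧
          ∀ y : ℝ, |∫ t in Set.Icc (0:ℝ) y, f t ∂μ| ≤ 1 := by
        intro f hf hfb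
        have hb : ∀ᵐ t ∂μ, ‖f t‖ ≤ 1 := by
          filter_upwards [hae] with t ht
          rw [Real.norm_eq_abs]
          exact hfb t (abs_le.mpr ⟨by linarith [ht.1], ht.2⟩)
        have hfi : Integrable f μ := ⟨hf.aestronglyMeasurable, HasFiniteIntegral.of_bounded hb⟩
        refine ⟨meas_cumul hf hfi, fun y => ?_⟩
        have h1 := norm_integral_le_of_norm_le_const
          (μ := μ.restrict (Set.Icc (0:ℝ) y)) (ae_restrict_of_ae hb)
        rw [Real.norm_eq_abs] at h1
        refine h1.trans ?_
        rw [measureReal_def, Measure.restrict_apply_univ, one_mul, ← ENNReal.toReal_one]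
        exact ENNReal.toReal_mono ENNReal.one_ne_top prob_le_one
      have lebStep : ∀ f : ℝ → ℝ, Measurable f →
          (∀ R : ℝ, 1 ≤ R → ∀ y, |y| ≤ R → |f y| ≤ R ^ j) →
          Measurable (fun y => ∫ t in (0:ℝ)..y, f t) ∧
          ∀ R : ℝ, 1 ≤ R → ∀ y, |y| ≤ R → |∫ t in (0:ℝ)..y, f t| ≤ R ^ (j+1) := by
        intro f hf hfb
        have hii : ∀ a b : ℝ, IntervalIntegrable f volume a b :=
          intInt_of_bound hf hfb
        refine ⟨(intervalIntegral.continuous_primitive hii 0).measurable, fun R hR y hy => ?_⟩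
        have hb : ∀ t ∈ Set.uIoc (0:ℝ) y, ‖f t‖ ≤ R ^ j := by
          intro t ht
          rw [Real.norm_eq_abs]
          apply hfb R hR
          obtain ⟨hy1, hy2⟩ := abs_le.mp hy
          rcases Set.mem_uIoc.mp ht with ⟨h1, h2⟩ | ⟨h1, h2⟩ <;>
            exact abs_le.mpr ⟨by linarith, by linarith⟩
        have h1 := intervalIntegral.norm_integral_le_of_norm_le_const hb
        rw [Real.norm_eq_abs, sub_zero] at h1
        refine h1.trans ?_
        calc R ^ j * |y| ≤ R ^ j * R :=
              mul_le_mul_of_nonneg_left hy (pow_nonneg (by linarith) j)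
          _ = R ^ (j+1) := (pow_succ R j).symm
      rcases Nat.even_or_odd j with hj | hj
      · obtain ⟨m', hm'⟩ := hj
        obtain ⟨m, rfl⟩ : ∃ m, j = 2*m := ⟨m', by omega⟩
        have hpEq : p (2*m+1) = fun y => ∫ t in Set.Icc (0:ℝ) y, p (2*m) t ∂μ :=
          funext (hpodd m)
        have hqEq : q (2*m+1) = fun y => ∫ t in (0:ℝ)..y, q (2*m) t :=
          funext (hqodd m)
        obtain ⟨hPm', hPb'⟩ := muStep (p (2*m)) hpm hb1p
        obtain ⟨hQm', hQb'⟩ := lebStep (q (2*m)) hqm (fun R hR y hy => (hbd R hR y hy).2)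
        refine ⟨hpEq ▸ hPm', hqEq ▸ hQm', fun R hR y hy => ⟨?_, ?_⟩⟩
        · rw [hpodd m y]
          exact (hPb' y).trans (one_le_pow₀ hR)
        · rw [hqodd m y]
          exact hQb' R hR y hy
      · obtain ⟨m', hm'⟩ := hj
        obtain ⟨m, rfl⟩ : ∃ m, j = 2*m+1 := ⟨m', by omega⟩
        have e : 2*m+1+1 = 2*m+2 := by omega
        have hpEq : p (2*m+1+1) = fun y => ∫ t in (0:ℝ)..y, p (2*m+1) t := by
          rw [e]; exact funext (hpeven m)
        have hqEq : q (2*m+1+1) = fun y => ∫ t in Set.Icc (0:ℝ) y, q (2*m+1) t ∂μ := by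
          rw [e]; exact funext (hqeven m)
        obtain ⟨hQm', hQb'⟩ := muStep (q (2*m+1)) hqm hb1q
        obtain ⟨hPm', hPb'⟩ := lebStep (p (2*m+1)) hpm (fun R hR y hy => (hbd R hR y hy).1)
        refine ⟨hpEq ▸ hPm', hqEq ▸ hQm', fun R hR y hy => ⟨?_, ?_⟩⟩
        · rw [show p (2*m+1+1) y = ∫ t in (0:ℝ)..y, p (2*m+1) t from congrFun hpEq y]
          exact hPb' R hR y hy
        · rw [show q (2*m+1+1) y = ∫ t in Set.Icc (0:ℝ) y, q (2*m+1) t ∂μ from congrFun hqEq y]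
          exact (hQb' y).trans (one_le_pow₀ hR)
  have hb1 : ∀ (j : ℕ) (x : ℝ), x ∈ Set.Icc (0:ℝ) 1 →
      ∀ t ∈ Set.Icc (0:ℝ) x, |p j t| ≤ 1 ∧ |q j t| ≤ 1 := by
    intro j x hx t ht
    have : |t| ≤ 1 := abs_le.mpr ⟨by linarith [ht.1], by linarith [ht.2, hx.2]⟩
    simpa using (master j).2.2 1 le_rfl t this
  have hbae : ∀ j : ℕ, (∀ᵐ t ∂μ, |p j t| ≤ 1) ∧ ∀ᵐ t ∂μ, |q j t| ≤ 1 := by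
    intro j
    constructor <;>
    · filter_upwards [hae] with t ht
      have : |t| ≤ 1 := abs_le.mpr ⟨by linarith [ht.1], ht.2⟩
      first
      | exact by simpa using ((master j).2.2 1 le_rfl t this).1
      | exact by simpa using ((master j).2.2 1 le_rfl t this).2
  -- the two integration-by-parts steps
  have stepA : ∀ (a b : ℕ) (x : ℝ), x ∈ Set.Icc (0:ℝ) 1 →
      ∫ t in Set.Icc (0:ℝ) x, q (2*a+1) t * p (2*b) t ∂μ
        = q (2*a+1) x * p (2*b+1) x - ∫ s in (0:ℝ)..x, q (2*a) s * p (2*b+1) s := by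
    intro a b x hx
    have key := partsA μ (C := 1) hx.1 (master (2*b)).1 (master (2*a)).2.1
      (hbae (2*b)).1 (fun t ht => (hb1 (2*a) x hx t ht).2)
    calc ∫ t in Set.Icc (0:ℝ) x, q (2*a+1) t * p (2*b) t ∂μ
        = ∫ t in Set.Icc (0:ℝ) x, (∫ s in (0:ℝ)..t, q (2*a) s) * p (2*b) t ∂μ := by
          simp only [hqodd]
      _ = (∫ s in (0:ℝ)..x, q (2*a) s) * (∫ t in Set.Icc (0:ℝ) x, p (2*b) t ∂μ)
            - ∫ s in (0:ℝ)..x, q (2*a) s * (∫ t in Set.Icc (0:ℝ) s, p (2*b) t ∂μ) := key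
      _ = q (2*a+1) x * p (2*b+1) x - ∫ s in (0:ℝ)..x, q (2*a) s * p (2*b+1) s := by
          rw [← hqodd]
          simp only [← hpodd]
  have stepB : ∀ (a b : ℕ) (x : ℝ), x ∈ Set.Icc (0:ℝ) 1 →
      ∫ s in (0:ℝ)..x, q (2*a+2) s * p (2*b+1) s
        = q (2*a+2) x * p (2*b+2) x
          - ∫ t in Set.Icc (0:ℝ) x, q (2*a+1) t * p (2*b+2) t ∂μ := by
    intro a b x hx
    have hhi : ∀ u v : ℝ, IntervalIntegrable (p (2*b+1)) volume u v :=
      intInt_of_bound (master (2*b+1)).1 (fun R hR y hy => ((master (2*b+1)).2.2 R hR y hy).1)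
    have key := partsB μ (C := 1) hx.1 (master (2*a+1)).2.1 (master (2*b+1)).1 hhi
      (hbae (2*a+1)).2 (fun t ht => (hb1 (2*b+1) x hx t ht).1)
    calc ∫ s in (0:ℝ)..x, q (2*a+2) s * p (2*b+1) s
        = ∫ s in (0:ℝ)..x, (∫ t in Set.Icc (0:ℝ) s, q (2*a+1) t ∂μ) * p (2*b+1) s := by
          simp only [hqeven]
      _ = (∫ t in Set.Icc (0:ℝ) x, q (2*a+1) t ∂μ) * (∫ s in (0:ℝ)..x, p (2*b+1) s)
            - ∫ t in Set.Icc (0:ℝ) x, q (2*a+1) t * (∫ s in (0:ℝ)..t, p (2*b+1) s) ∂μ := key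
      _ = q (2*a+2) x * p (2*b+2) x
            - ∫ t in Set.Icc (0:ℝ) x, q (2*a+1) t * p (2*b+2) t ∂μ := by
          rw [← hqeven]
          simp only [← hpeven]
  -- the key induction
  have key : ∀ (k : ℕ) (m : ℕ) (x : ℝ), x ∈ Set.Icc (0:ℝ) 1 →
      (∫ t in Set.Icc (0:ℝ) x, q (2*k+1) t * p (2*m) t ∂μ) =
        ∑ j ∈ Finset.range (2*k+2), (-1:ℝ)^(j+1) * q j x * p (2*(k+m) + 2 - j) x := by
    intro k
    induction k with
    | zero =>
      intro m x hx
      rw [stepA 0 m x hx]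
      have h1 : ∫ s in (0:ℝ)..x, q (2*0) s * p (2*m+1) s = p (2*m+2) x := by
        rw [hpeven m x]
        congr 1
        funext s
        rw [show (2*0 : ℕ) = 0 from by omega, hq0, one_mul]
      rw [h1]
      have e0 : 2*(0+m)+2 - 0 = 2*m+2 := by omega
      have e1 : 2*(0+m)+2 - 1 = 2*m+1 := by omega
      rw [show (2*0+2 : ℕ) = 2 from by omega]
      rw [Finset.sum_range_succ, Finset.sum_range_one]
      rw [e0, e1, hq0]
      ring
    | succ k ih =>
      intro m x hx
      have hA := stepA (k+1) m x hx
      have hB := stepB k m x hx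
      have hI := ih (m+1) x hx
      rw [show 2*(m+1) = 2*m+2 from by omega] at hI
      rw [show k+(m+1) = k+1+m from by omega] at hI
      rw [hA, show 2*(k+1) = 2*k+2 from by omega, hB]
      rw [show 2*k+2+2 = (2*k+2+1)+1 from by omega, Finset.sum_range_succ,
        Finset.sum_range_succ, hI]
      rw [show 2*(k+1+m)+2 - (2*k+2) = 2*m+2 from by omega]
      rw [show 2*(k+1+m)+2 - (2*k+2+1) = 2*m+1 from by omega]
      rw [show ((-1:ℝ))^(2*k+2+1) = -1 from Odd.neg_one_pow ⟨k+1, by ring⟩,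
        show ((-1:ℝ))^(2*k+2+1+1) = 1 from Even.neg_one_pow ⟨k+2, by ring⟩]
      ring
  intro k n hk hkn x hx
  obtain ⟨k', rfl⟩ : ∃ k', k = k'+1 := ⟨k-1, by omega⟩
  obtain ⟨m, rfl⟩ : ∃ m, n = k'+1+m := ⟨n-(k'+1), by omega⟩
  have e1 : 2*(k'+1) - 1 = 2*k'+1 := by omega
  have e2 : 2*(k'+1+m) - 2*(k'+1) = 2*m := by omega
  have e3 : 2*(k'+1+m) = 2*(k'+m)+2 := by omega
  rw [e1, e2, e3]
  exact key k' m x hx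
end

section
/- For every n ∈ ℕ with n ≥ 1 and every x ∈ [0,1]: Σ_{j=0}^{2n} (−1)^j q_j(x) p_{2n−j}(x) = 0. -/
open MeasureTheory

open Set

-- integration by parts via Fubini
lemma parts_aux
    (μ : Measure ℝ) [IsProbabilityMeasure μ] [NullSingletonClass μ]
    (hsupp : μ (Set.Icc (0:ℝ) 1)ᶜ = 0)
    (f g : ℝ → ℝ) (hf : Monotone f) (hg : Monotone g)
    (hgb : ∀ t ∈ Icc (0:ℝ) 1, |g t| ≤ 1)
    (x : ℝ) (hx : x ∈ Icc (0:ℝ) 1) :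
    (∫ s in (0:ℝ)..x, f s) * (∫ t in Icc (0:ℝ) x, g t ∂μ)
      = (∫ t in Icc (0:ℝ) x, (∫ s in (0:ℝ)..t, f s) * g t ∂μ)
        + ∫ s in (0:ℝ)..x, (∫ t in Icc (0:ℝ) s, g t ∂μ) * f s := by
  obtain ⟨hx0, hx1⟩ := hx
  set ν₁ : Measure ℝ := volume.restrict (Ioc (0:ℝ) x) with hν₁
  set ν₂ : Measure ℝ := μ.restrict (Icc (0:ℝ) x) with hν₂
  have hfm : Measurable f := hf.measurable
  have hgm : Measurable g := hg.measurable
  have hfi : Integrable f ν₁ := by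
    have : IntervalIntegrable f volume 0 x := hf.intervalIntegrable
    rw [intervalIntegrable_iff_integrableOn_Ioc_of_le hx0] at this
    exact this
  have hgi : Integrable g ν₂ := by
    refine Integrable.mono' (integrable_const 1) hgm.aestronglyMeasurable ?_
    have hmem : ∀ᵐ t ∂μ, t ∈ Icc (0:ℝ) 1 := by
      rw [MeasureTheory.ae_iff]
      have : {a : ℝ | ¬ a ∈ Icc (0:ℝ) 1} = (Icc (0:ℝ) 1)ᶜ := rfl
      rw [this]; exact hsupp
    exact ae_restrict_of_ae (hmem.mono fun t ht => hgb t ht)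
  have hI : Integrable (fun z : ℝ × ℝ => f z.1 * g z.2) (ν₁.prod ν₂) :=
    hfi.mul_prod hgi
  have hA : MeasurableSet {z : ℝ × ℝ | z.1 ≤ z.2} :=
    measurableSet_le measurable_fst measurable_snd
  have hsplit : (∫ z in {z : ℝ × ℝ | z.1 ≤ z.2}, f z.1 * g z.2 ∂(ν₁.prod ν₂))
      + ∫ z in {z : ℝ × ℝ | z.1 ≤ z.2}ᶜ, f z.1 * g z.2 ∂(ν₁.prod ν₂)
      = ∫ z : ℝ × ℝ, f z.1 * g z.2 ∂(ν₁.prod ν₂) :=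
    integral_add_compl hA hI
  have htot : (∫ z : ℝ × ℝ, f z.1 * g z.2 ∂(ν₁.prod ν₂))
      = (∫ s in (0:ℝ)..x, f s) * (∫ t in Icc (0:ℝ) x, g t ∂μ) := by
    rw [integral_prod_mul, intervalIntegral.integral_of_le hx0]
  -- term 1
  have hT1 : (∫ z in {z : ℝ × ℝ | z.1 ≤ z.2}, f z.1 * g z.2 ∂(ν₁.prod ν₂))
      = ∫ t in Icc (0:ℝ) x, (∫ s in (0:ℝ)..t, f s) * g t ∂μ := by
    rw [← integral_indicator hA]
    rw [integral_prod_symm _ ((integrable_indicator_iff hA).2 hI.integrableOn)]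
    refine integral_congr_ae ?_
    filter_upwards [ae_restrict_mem measurableSet_Icc] with t ht
    have h1 : ∀ s : ℝ, ({z : ℝ × ℝ | z.1 ≤ z.2}.indicator (fun z => f z.1 * g z.2)) (s, t)
        = (Iic t).indicator (fun s => f s * g t) s := by
      intro s
      by_cases h : s ≤ t <;> simp [Set.indicator, h]
    simp only [h1]
    rw [integral_indicator measurableSet_Iic, hν₁, Measure.restrict_restrict measurableSet_Iic]
    have h2 : Iic t ∩ Ioc 0 x = Ioc 0 t := by
      ext s; simp only [mem_inter_iff, mem_Iic, mem_Ioc]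
      constructor
      · rintro ⟨h3, h4, h5⟩; exact ⟨h4, h3⟩
      · rintro ⟨h4, h3⟩; exact ⟨h3, h4, le_trans h3 ht.2⟩
    rw [h2, ← intervalIntegral.integral_of_le ht.1, intervalIntegral.integral_mul_const]
  -- term 2
  have hT2 : (∫ z in {z : ℝ × ℝ | z.1 ≤ z.2}ᶜ, f z.1 * g z.2 ∂(ν₁.prod ν₂))
      = ∫ s in (0:ℝ)..x, (∫ t in Icc (0:ℝ) s, g t ∂μ) * f s := by
    rw [← integral_indicator hA.compl]
    rw [integral_prod _ ((integrable_indicator_iff hA.compl).2 hI.integrableOn)]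
    rw [intervalIntegral.integral_of_le hx0]
    refine integral_congr_ae ?_
    filter_upwards [ae_restrict_mem measurableSet_Ioc] with s hs
    have h1 : ∀ t : ℝ, ({z : ℝ × ℝ | z.1 ≤ z.2}ᶜ.indicator (fun z => f z.1 * g z.2)) (s, t)
        = (Iio s).indicator (fun t => f s * g t) t := by
      intro t
      by_cases h : s ≤ t
      · simp [Set.indicator, h, not_lt.2 h]
      · simp [Set.indicator, h, lt_of_not_ge h]
    simp only [h1]
    rw [integral_indicator measurableSet_Iio, hν₂, Measure.restrict_restrict measurableSet_Iio]
    have h2 : Iio s ∩ Icc 0 x = Ico 0 s := by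
      ext t; simp only [mem_inter_iff, mem_Iio, mem_Icc, mem_Ico]
      constructor
      · rintro ⟨h3, h4, h5⟩; exact ⟨h4, h3⟩
      · rintro ⟨h4, h3⟩; exact ⟨h3, h4, le_trans h3.le hs.2⟩
    rw [h2, integral_const_mul]
    rw [Measure.restrict_congr_set Ico_ae_eq_Icc]
    ring
  rw [← hsplit, hT1, hT2] at htot
  linarith [htot]

lemma ae_mem01 (μ : Measure ℝ) (hsupp : μ (Set.Icc (0:ℝ) 1)ᶜ = 0) :
    ∀ᵐ t ∂μ, t ∈ Icc (0:ℝ) 1 := by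
  rw [MeasureTheory.ae_iff]
  have : {a : ℝ | ¬ a ∈ Icc (0:ℝ) 1} = (Icc (0:ℝ) 1)ᶜ := rfl
  rw [this]; exact hsupp

-- properties of the μ-antiderivative
lemma Mmu_props (μ : Measure ℝ) [IsProbabilityMeasure μ]
    (hsupp : μ (Set.Icc (0:ℝ) 1)ᶜ = 0)
    (g : ℝ → ℝ) (hg : Monotone g) (hgb : ∀ t ∈ Icc (0:ℝ) 1, g t ∈ Icc (0:ℝ) 1) :
    Monotone (fun x => ∫ t in Icc (0:ℝ) x, g t ∂μ)
      ∧ ∀ x : ℝ, (∫ t in Icc (0:ℝ) x, g t ∂μ) ∈ Icc (0:ℝ) 1 := by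
  have hgm : Measurable g := hg.measurable
  have h0 : 0 ≤ᵐ[μ] g := (ae_mem01 μ hsupp).mono fun t ht => (hgb t ht).1
  have h1 : g ≤ᵐ[μ] fun _ => (1:ℝ) := (ae_mem01 μ hsupp).mono fun t ht => (hgb t ht).2
  have hgi : Integrable g μ := by
    refine Integrable.mono' (integrable_const 1) hgm.aestronglyMeasurable ?_
    exact (ae_mem01 μ hsupp).mono fun t ht => abs_le.2 ⟨by linarith [(hgb t ht).1], (hgb t ht).2⟩
  constructor
  · intro a b hab
    refine setIntegral_mono_set hgi.integrableOn (ae_restrict_of_ae h0) ?_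
    exact HasSubset.Subset.eventuallyLE (Icc_subset_Icc le_rfl hab)
  · intro x
    constructor
    · exact setIntegral_nonneg_ae measurableSet_Icc (h0.mono fun t ht => fun _ => ht)
    · calc (∫ t in Icc (0:ℝ) x, g t ∂μ) ≤ ∫ _ in Icc (0:ℝ) x, (1:ℝ) ∂μ :=
            integral_mono_ae hgi.integrableOn (integrable_const 1) (ae_restrict_of_ae h1)
        _ ≤ 1 := by
            rw [setIntegral_const, smul_eq_mul, mul_one]
            exact ENNReal.toReal_le_of_le_ofReal one_pos.le (by simpa using prob_le_one)

-- properties of the Lebesgue antiderivative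
lemma ML_props (f : ℝ → ℝ) (hf : Monotone f) (hf0 : ∀ t, 0 ≤ f t)
    (hfb : ∀ t ∈ Icc (0:ℝ) 1, f t ≤ 1) :
    Monotone (fun x => ∫ t in (0:ℝ)..x, f t)
      ∧ ∀ x ∈ Icc (0:ℝ) 1, (∫ t in (0:ℝ)..x, f t) ∈ Icc (0:ℝ) 1 := by
  constructor
  · intro a b hab
    have := intervalIntegral.integral_add_adjacent_intervals
      (a := (0:ℝ)) (b := a) (c := b) (μ := volume) (f := f)
      hf.intervalIntegrable hf.intervalIntegrable
    have hnn : 0 ≤ ∫ t in a..b, f t :=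
      intervalIntegral.integral_nonneg hab fun t _ => hf0 t
    simp only [← this]
    linarith
  · intro x hx
    constructor
    · exact intervalIntegral.integral_nonneg hx.1 fun t _ => hf0 t
    · calc (∫ t in (0:ℝ)..x, f t) ≤ ∫ _ in (0:ℝ)..x, (1:ℝ) := by
            refine intervalIntegral.integral_mono_on hx.1 hf.intervalIntegrable
              intervalIntegrable_const fun t ht => hfb t ⟨ht.1, le_trans ht.2 hx.2⟩
        _ = x := by simp
        _ ≤ 1 := hx.2

lemma pq_props
    (μ : Measure ℝ) [IsProbabilityMeasure μ] [NullSingletonClass μ]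
    (hsupp : μ (Set.Icc (0:ℝ) 1)ᶜ = 0)
    (p q : ℕ → ℝ → ℝ)
    (hp0 : ∀ x : ℝ, p 0 x = 1) (hq0 : ∀ x : ℝ, q 0 x = 1)
    (hpodd : ∀ (n : ℕ) (x : ℝ), p (2*n+1) x = ∫ t in Set.Icc (0:ℝ) x, p (2*n) t ∂μ)
    (hpeven : ∀ (n : ℕ) (x : ℝ), p (2*n+2) x = ∫ t in (0:ℝ)..x, p (2*n+1) t)
    (hqodd : ∀ (n : ℕ) (x : ℝ), q (2*n+1) x = ∫ t in (0:ℝ)..x, q (2*n) t)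
    (hqeven : ∀ (n : ℕ) (x : ℝ), q (2*n+2) x = ∫ t in Set.Icc (0:ℝ) x, q (2*n+1) t ∂μ) :
    ∀ m : ℕ,
      (Monotone (p (2*m)) ∧ (∀ t ∈ Icc (0:ℝ) 1, p (2*m) t ∈ Icc (0:ℝ) 1)) ∧
      (Monotone (p (2*m+1)) ∧ (∀ t : ℝ, p (2*m+1) t ∈ Icc (0:ℝ) 1)) ∧
      (Monotone (q (2*m)) ∧ (∀ t : ℝ, q (2*m) t ∈ Icc (0:ℝ) 1)) ∧
      (Monotone (q (2*m+1)) ∧ (∀ t ∈ Icc (0:ℝ) 1, q (2*m+1) t ∈ Icc (0:ℝ) 1)) := by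
  have key : ∀ m : ℕ,
      ((Monotone (p (2*m)) ∧ (∀ t ∈ Icc (0:ℝ) 1, p (2*m) t ∈ Icc (0:ℝ) 1)) ∧
      (Monotone (q (2*m)) ∧ (∀ t : ℝ, q (2*m) t ∈ Icc (0:ℝ) 1))) →
      ((Monotone (p (2*m+1)) ∧ (∀ t : ℝ, p (2*m+1) t ∈ Icc (0:ℝ) 1)) ∧
      (Monotone (q (2*m+1)) ∧ (∀ t ∈ Icc (0:ℝ) 1, q (2*m+1) t ∈ Icc (0:ℝ) 1))) := by
    rintro m ⟨⟨hpm, hpb⟩, ⟨hqm, hqb⟩⟩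
    constructor
    · have hfe : p (2*m+1) = fun x => ∫ t in Icc (0:ℝ) x, p (2*m) t ∂μ :=
        funext (hpodd m)
      rw [hfe]
      exact Mmu_props μ hsupp _ hpm hpb
    · have hfe : q (2*m+1) = fun x => ∫ t in (0:ℝ)..x, q (2*m) t :=
        funext (hqodd m)
      rw [hfe]
      exact ML_props _ hqm (fun t => (hqb t).1) (fun t _ => (hqb t).2)
  intro m
  induction m with
  | zero =>
      have base : (Monotone (p 0) ∧ ∀ t ∈ Icc (0:ℝ) 1, p 0 t ∈ Icc (0:ℝ) 1) ∧
          (Monotone (q 0) ∧ ∀ t : ℝ, q 0 t ∈ Icc (0:ℝ) 1) := by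
        rw [funext hp0, funext hq0]
        exact ⟨⟨monotone_const, fun t _ => ⟨zero_le_one, le_rfl⟩⟩,
          ⟨monotone_const, fun t => ⟨zero_le_one, le_rfl⟩⟩⟩
      have base' := base
      rw [show (0:ℕ) = 2*0 by ring] at base
      exact ⟨base.1, (key 0 base).1, base.2, (key 0 base).2⟩
  | succ m ih =>
      obtain ⟨-, ⟨hpm1, hpb1⟩, -, ⟨hqm1, hqb1⟩⟩ := ih
      have hnext : (Monotone (p (2*(m+1))) ∧
            (∀ t ∈ Icc (0:ℝ) 1, p (2*(m+1)) t ∈ Icc (0:ℝ) 1)) ∧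
          (Monotone (q (2*(m+1))) ∧ (∀ t : ℝ, q (2*(m+1)) t ∈ Icc (0:ℝ) 1)) := by
        have e : 2*(m+1) = 2*m+2 := by ring
        rw [e]
        constructor
        · have hfe : p (2*m+2) = fun x => ∫ t in (0:ℝ)..x, p (2*m+1) t :=
            funext (hpeven m)
          rw [hfe]
          exact ML_props _ hpm1 (fun t => (hpb1 t).1) (fun t _ => (hpb1 t).2)
        · have hfe : q (2*m+2) = fun x => ∫ t in Icc (0:ℝ) x, q (2*m+1) t ∂μ :=
            funext (hqeven m)
          rw [hfe]
          exact Mmu_props μ hsupp _ hqm1 hqb1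
      exact ⟨hnext.1, (key (m+1) hnext).1, hnext.2, (key (m+1) hnext).2⟩

lemma sum_split (c : ℕ → ℝ) (n : ℕ) :
    ∑ j ∈ Finset.range (2*n+1), c j
      = (∑ m ∈ Finset.range n, (c (2*m) + c (2*m+1))) + c (2*n) := by
  induction n with
  | zero => simp
  | succ n ih =>
      have e : 2*(n+1)+1 = (2*n+1)+1+1 := by ring
      rw [e, Finset.sum_range_succ, Finset.sum_range_succ, ih, Finset.sum_range_succ]
      have e2 : 2*n+1+1 = 2*(n+1) := by ring
      rw [e2]
      ring

theorem stmt_5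
    (μ : Measure ℝ) [IsProbabilityMeasure μ] [NullSingletonClass μ]
    (hsupp : μ (Set.Icc (0:ℝ) 1)ᶜ = 0)
    (p q : ℕ → ℝ → ℝ)
    (hp0 : ∀ x : ℝ, p 0 x = 1) (hq0 : ∀ x : ℝ, q 0 x = 1)
    (hpodd : ∀ (n : ℕ) (x : ℝ), p (2*n+1) x = ∫ t in Set.Icc (0:ℝ) x, p (2*n) t ∂μ)
    (hpeven : ∀ (n : ℕ) (x : ℝ), p (2*n+2) x = ∫ t in (0:ℝ)..x, p (2*n+1) t)
    (hqodd : ∀ (n : ℕ) (x : ℝ), q (2*n+1) x = ∫ t in (0:ℝ)..x, q (2*n) t)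
    (hqeven : ∀ (n : ℕ) (x : ℝ), q (2*n+2) x = ∫ t in Set.Icc (0:ℝ) x, q (2*n+1) t ∂μ) :
    ∀ n : ℕ, 1 ≤ n → ∀ x ∈ Set.Icc (0:ℝ) 1,
      ∑ j ∈ Finset.range (2*n+1), (-1:ℝ)^j * q j x * p (2*n-j) x = 0 := by
  intro n hn x hx
  have props := pq_props μ hsupp p q hp0 hq0 hpodd hpeven hqodd hqeven
  -- the telescoping quantities
  set MM : ℕ → ℝ := fun m => ∫ t in Icc (0:ℝ) x, q (2*m+1) t * p (2*(n-1-m)) t ∂μ with hMM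
  set N : ℕ → ℝ := fun m => if m = 0 then 0 else MM (m-1) with hN
  set L : ℕ → ℝ := fun m => ∫ t in (0:ℝ)..x, q (2*m) t * p (2*(n-m-1)+1) t with hL
  set c : ℕ → ℝ := fun j => (-1:ℝ)^j * q j x * p (2*n-j) x with hc
  -- Claim 1 : even terms
  have claim1 : ∀ m, m < n → q (2*m) x * p (2*n-2*m) x = N m + L m := by
    intro m hm
    rcases Nat.eq_zero_or_pos m with hm0 | hm0
    · subst hm0
      have e1 : 2*n - 2*0 = 2*(n-0-1)+2 := by omega
      rw [e1, hpeven (n-0-1) x]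
      have : (∫ t in (0:ℝ)..x, p (2*(n-0-1)+1) t)
          = ∫ t in (0:ℝ)..x, q (2*0) t * p (2*(n-0-1)+1) t := by
        refine intervalIntegral.integral_congr fun t _ => ?_
        rw [hq0 t, one_mul]
      rw [hq0 x, one_mul, this]
      simp [hN, hL]
    · -- m ≥ 1 : integrate by parts
      have hfmono : Monotone (p (2*(n-m-1)+1)) := (props (n-m-1)).2.1.1
      have hgmono : Monotone (q (2*(m-1)+1)) := (props (m-1)).2.2.2.1
      have hgb : ∀ t ∈ Icc (0:ℝ) 1, |q (2*(m-1)+1) t| ≤ 1 := by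
        intro t ht
        have := (props (m-1)).2.2.2.2 t ht
        exact abs_le.2 ⟨by linarith [this.1], this.2⟩
      have hparts := parts_aux μ hsupp (p (2*(n-m-1)+1)) (q (2*(m-1)+1))
        hfmono hgmono hgb x hx
      -- identify the pieces
      have eF : ∀ s : ℝ, (∫ u in (0:ℝ)..s, p (2*(n-m-1)+1) u) = p (2*n-2*m) s := by
        intro s
        have e1 : 2*n - 2*m = 2*(n-m-1)+2 := by omega
        rw [e1, hpeven (n-m-1) s]
      have eG : ∀ s : ℝ, (∫ t in Icc (0:ℝ) s, q (2*(m-1)+1) t ∂μ) = q (2*m) s := by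
        intro s
        have e1 : 2*m = 2*(m-1)+2 := by omega
        rw [e1, hqeven (m-1) s]
      rw [eF x, eG x] at hparts
      have eT1 : (∫ t in Icc (0:ℝ) x, (∫ u in (0:ℝ)..t, p (2*(n-m-1)+1) u) * q (2*(m-1)+1) t ∂μ)
          = N m := by
        rw [hN]
        simp only [if_neg (Nat.pos_iff_ne_zero.mp hm0)]
        rw [hMM]
        refine setIntegral_congr_fun measurableSet_Icc fun t _ => ?_
        rw [eF t, mul_comm]
        have e2 : 2*n - 2*m = 2*(n-1-(m-1)) := by omega
        rw [e2]
      have eT2 : (∫ s in (0:ℝ)..x, (∫ t in Icc (0:ℝ) s, q (2*(m-1)+1) t ∂μ) * p (2*(n-m-1)+1) s)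
          = L m := by
        rw [hL]
        refine intervalIntegral.integral_congr fun s _ => ?_
        rw [eG s]
      rw [eT1, eT2] at hparts
      rw [mul_comm] at hparts
      exact hparts
  -- Claim 2 : odd terms
  have claim2 : ∀ m, m < n → q (2*m+1) x * p (2*n-(2*m+1)) x = N (m+1) + L m := by
    intro m hm
    have hfmono : Monotone (q (2*m)) := (props m).2.2.1.1
    have hgmono : Monotone (p (2*(n-m-1))) := (props (n-m-1)).1.1
    have hgb : ∀ t ∈ Icc (0:ℝ) 1, |p (2*(n-m-1)) t| ≤ 1 := by
      intro t ht
      have := (props (n-m-1)).1.2 t ht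
      exact abs_le.2 ⟨by linarith [this.1], this.2⟩
    have hparts := parts_aux μ hsupp (q (2*m)) (p (2*(n-m-1)))
      hfmono hgmono hgb x hx
    have eF : ∀ s : ℝ, (∫ u in (0:ℝ)..s, q (2*m) u) = q (2*m+1) s := by
      intro s; rw [hqodd m s]
    have eG : ∀ s : ℝ, (∫ t in Icc (0:ℝ) s, p (2*(n-m-1)) t ∂μ) = p (2*n-(2*m+1)) s := by
      intro s
      have e1 : 2*n - (2*m+1) = 2*(n-m-1)+1 := by omega
      rw [e1, hpodd (n-m-1) s]
    rw [eF x, eG x] at hparts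
    have eT1 : (∫ t in Icc (0:ℝ) x, (∫ u in (0:ℝ)..t, q (2*m) u) * p (2*(n-m-1)) t ∂μ)
        = N (m+1) := by
      rw [hN]
      simp only [Nat.succ_ne_zero, if_neg, Nat.add_sub_cancel]
      rw [hMM]
      refine setIntegral_congr_fun measurableSet_Icc fun t _ => ?_
      rw [eF t]
      have e2 : 2*(n-m-1) = 2*(n-1-m) := by omega
      rw [e2]
    have eT2 : (∫ s in (0:ℝ)..x, (∫ t in Icc (0:ℝ) s, p (2*(n-m-1)) t ∂μ) * q (2*m) s)
        = L m := by
      rw [hL]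
      refine intervalIntegral.integral_congr fun s _ => ?_
      rw [eG s, mul_comm]
      have e2 : 2*n - (2*m+1) = 2*(n-m-1)+1 := by omega
      rw [e2]
    rw [eT1, eT2] at hparts
    exact hparts
  -- last term
  have claimlast : q (2*n) x * p (2*n-2*n) x = N n := by
    have e0 : 2*n - 2*n = 0 := by omega
    rw [e0, hp0 x, mul_one]
    have e1 : 2*n = 2*(n-1)+2 := by omega
    rw [e1, hqeven (n-1) x]
    rw [hN]
    simp only [if_neg (by omega : n ≠ 0)]
    rw [hMM]
    refine setIntegral_congr_fun measurableSet_Icc fun t _ => ?_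
    rw [Nat.sub_self, Nat.mul_zero, hp0 t, mul_one]
  -- assemble
  rw [sum_split]
  have s1 : ∀ k:ℕ, (-1:ℝ)^(2*k) = 1 := fun k => by rw [pow_mul]; norm_num
  have s2 : ∀ k:ℕ, (-1:ℝ)^(2*k+1) = -1 := fun k => by rw [pow_succ, s1]; ring
  have hpair : ∀ m ∈ Finset.range n, c (2*m) + c (2*m+1) = N m - N (m+1) := by
    intro m hm
    rw [Finset.mem_range] at hm
    simp only [hc]
    rw [s1 m, s2 m, one_mul, claim1 m hm]
    have := claim2 m hm
    nlinarith [claim2 m hm]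
  rw [Finset.sum_congr rfl hpair, Finset.sum_range_sub' N n]
  rw [s1 n, one_mul, claimlast, hN]
  simp
end

section
/- For all x ∈ [0,1] and z ∈ ℝ the generalized trigonometric identity c_{μ,λ}(z,x)·c_{λ,μ}(z,x) + s_{λ,μ}(z,x)·s_{μ,λ}(z,x) = 1 holds. -/
open MeasureTheory Set

set_option linter.unusedSectionVars false
set_option maxHeartbeats 1000000

section AuxSC

variable {μ : Measure ℝ} [IsProbabilityMeasure μ] [NullSingletonClass μ]

lemma monoAbsBoundSC {f : ℝ → ℝ} (hf : Monotone f) {a b t : ℝ} (ht : t ∈ Icc a b) :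
    |f t| ≤ |f a| ⊔ |f b| := abs_le_max_abs_abs (hf ht.1) (hf ht.2)

lemma monoIntOnSC {f : ℝ → ℝ} (hf : Monotone f) (a b : ℝ) :
    IntegrableOn f (Icc a b) μ := by
  refine Integrable.mono' (integrable_const (|f a| ⊔ |f b|))
    hf.measurable.aestronglyMeasurable ?_
  filter_upwards [ae_restrict_mem measurableSet_Icc] with t ht
  exact monoAbsBoundSC hf ht

lemma monoIISC {f : ℝ → ℝ} (hf : Monotone f) (a b : ℝ) :
    IntervalIntegrable f volume a b := (hf.monotoneOn _).intervalIntegrable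

lemma muPrimMonoSC {f : ℝ → ℝ} (hf : Monotone f) (hf0 : ∀ t, 0 ≤ t → 0 ≤ f t) :
    Monotone (fun x => ∫ t in Icc (0:ℝ) x, f t ∂μ) := by
  intro x y hxy
  refine setIntegral_mono_set (monoIntOnSC hf 0 y) ?_ ?_
  · filter_upwards [ae_restrict_mem measurableSet_Icc] with t ht
    exact hf0 t ht.1
  · exact HasSubset.Subset.eventuallyLE (Icc_subset_Icc_right hxy)

lemma muPrimNonnegSC {f : ℝ → ℝ} (hf0 : ∀ t, 0 ≤ t → 0 ≤ f t) (x : ℝ) :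
    0 ≤ ∫ t in Icc (0:ℝ) x, f t ∂μ :=
  setIntegral_nonneg measurableSet_Icc (fun t ht => hf0 t ht.1)

lemma lebPrimMonoSC {f : ℝ → ℝ} (hf : Monotone f) (hf0 : ∀ t, 0 ≤ f t) :
    Monotone (fun x => ∫ t in (0:ℝ)..x, f t) := by
  intro x y hxy
  have h := intervalIntegral.integral_add_adjacent_intervals (μ := volume)
    (monoIISC hf 0 x) (monoIISC hf x y)
  have h2 : 0 ≤ ∫ t in x..y, f t :=
    intervalIntegral.integral_nonneg hxy (fun u _ => hf0 u)
  simp only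
  linarith

lemma lebPrimNonnegSC {f : ℝ → ℝ} (hf0 : ∀ t, 0 ≤ f t) {x : ℝ} (hx : 0 ≤ x) :
    0 ≤ ∫ t in (0:ℝ)..x, f t :=
  intervalIntegral.integral_nonneg hx (fun u _ => hf0 u)

lemma partsSC {f g : ℝ → ℝ} (hf : Monotone f) (hg : Monotone g) {x : ℝ} (hx : 0 ≤ x) :
    (∫ t in Icc (0:ℝ) x, f t ∂μ) * (∫ s in (0:ℝ)..x, g s) =
      (∫ t in Icc (0:ℝ) x, (f t * ∫ s in (0:ℝ)..t, g s) ∂μ)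
        + ∫ s in (0:ℝ)..x, (g s * ∫ t in Icc (0:ℝ) s, f t ∂μ) := by
  set L : Measure ℝ := volume.restrict (Ioc 0 x) with hL
  set F : ℝ → ℝ → ℝ := fun t s => f t * (Ioc t x).indicator g s with hF
  have hSmeas : MeasurableSet {p : ℝ × ℝ | p.1 < p.2 ∧ p.2 ≤ x} :=
    (measurableSet_lt measurable_fst measurable_snd).inter
      (measurable_snd measurableSet_Iic)
  have hFeq : (Function.uncurry F) =
      ({p : ℝ × ℝ | p.1 < p.2 ∧ p.2 ≤ x}).indicator (fun p => f p.1 * g p.2) := by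
    funext p
    by_cases h : p.1 < p.2 ∧ p.2 ≤ x
    · have h1 : p.2 ∈ Ioc p.1 x := ⟨h.1, h.2⟩
      simp [Function.uncurry, hF, indicator_of_mem h1, indicator_of_mem, h]
    · have h1 : p.2 ∉ Ioc p.1 x := by simp only [mem_Ioc]; tauto
      simp [Function.uncurry, hF, indicator_of_notMem h1, indicator_of_notMem, h]
  have hFmeas : Measurable (Function.uncurry F) := by
    rw [hFeq]
    exact ((hf.measurable.comp measurable_fst).mul
      (hg.measurable.comp measurable_snd)).indicator hSmeas
  have hFint : Integrable (Function.uncurry F) ((μ.restrict (Icc 0 x)).prod L) := by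
    refine Integrable.mono' (integrable_const ((|f 0| ⊔ |f x|) * (|g 0| ⊔ |g x|)))
      hFmeas.aestronglyMeasurable ?_
    rw [hL, Measure.prod_restrict]
    filter_upwards [ae_restrict_mem (measurableSet_Icc.prod measurableSet_Ioc)] with p hp
    have h1 : |f p.1| ≤ |f 0| ⊔ |f x| := monoAbsBoundSC hf hp.1
    have h2 : |(Ioc p.1 x).indicator g p.2| ≤ |g 0| ⊔ |g x| := by
      by_cases hm : p.2 ∈ Ioc p.1 x
      · rw [indicator_of_mem hm]
        exact monoAbsBoundSC hg ⟨hp.2.1.le, hp.2.2⟩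
      · rw [indicator_of_notMem hm, abs_zero]
        positivity
    calc ‖Function.uncurry F p‖ = |f p.1| * |(Ioc p.1 x).indicator g p.2| := by
          simp [Function.uncurry, hF, abs_mul]
      _ ≤ (|f 0| ⊔ |f x|) * (|g 0| ⊔ |g x|) :=
          mul_le_mul h1 h2 (abs_nonneg _) (le_trans (abs_nonneg _) h1)
  have hGeq : ∀ t ∈ Icc (0:ℝ) x, (∫ s, F t s ∂L) = f t * ∫ s in t..x, g s := by
    intro t ht
    simp only [hF]
    rw [integral_const_mul]
    congr 1
    rw [hL, setIntegral_indicator measurableSet_Ioc]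
    have hinter : Ioc (0:ℝ) x ∩ Ioc t x = Ioc t x := by
      rw [Set.Ioc_inter_Ioc, sup_eq_right.mpr ht.1, inf_idem]
    rw [hinter, intervalIntegral.integral_of_le ht.2]
  have hGint : IntegrableOn (fun t => ∫ s, F t s ∂L) (Icc 0 x) μ := hFint.integral_prod_left
  have hswap : ∫ t in Icc (0:ℝ) x, (∫ s, F t s ∂L) ∂μ
      = ∫ s, (∫ t in Icc (0:ℝ) x, F t s ∂μ) ∂L :=
    integral_integral_swap hFint
  have hinner : ∀ s ∈ Ioc (0:ℝ) x,
      (∫ t in Icc (0:ℝ) x, F t s ∂μ) = g s * ∫ t in Icc (0:ℝ) s, f t ∂μ := by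
    intro s hs
    have hptw : EqOn (fun t => F t s) ((Iio s).indicator (fun t => f t * g s)) (Icc 0 x) := by
      intro t ht
      by_cases h : t < s
      · have h1 : s ∈ Ioc t x := ⟨h, hs.2⟩
        simp [hF, indicator_of_mem h1, indicator_of_mem, mem_Iio.mpr h]
      · have h1 : s ∉ Ioc t x := fun hc => h hc.1
        have h2 : t ∉ Iio s := by simpa using h
        simp [hF, indicator_of_notMem h1, indicator_of_notMem h2]
    rw [setIntegral_congr_fun measurableSet_Icc hptw,
      setIntegral_indicator measurableSet_Iio]
    have hinter : Icc (0:ℝ) x ∩ Iio s = Ico 0 s := by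
      ext t
      simp only [mem_inter_iff, mem_Icc, mem_Iio, mem_Ico]
      exact ⟨fun h => ⟨h.1.1, h.2⟩, fun h => ⟨⟨h.1, h.2.le.trans hs.2⟩, h.2⟩⟩
    rw [hinter, setIntegral_congr_set Ico_ae_eq_Icc, integral_mul_const, mul_comm]
  have hsecond : ∫ s in (0:ℝ)..x, (g s * ∫ t in Icc (0:ℝ) s, f t ∂μ)
      = ∫ t in Icc (0:ℝ) x, (∫ s, F t s ∂L) ∂μ := by
    rw [hswap, intervalIntegral.integral_of_le hx]
    exact (setIntegral_congr_fun measurableSet_Ioc hinner).symm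
  have hfirst : ∫ t in Icc (0:ℝ) x, (f t * ∫ s in (0:ℝ)..t, g s) ∂μ
      = (∫ t in Icc (0:ℝ) x, f t ∂μ) * (∫ s in (0:ℝ)..x, g s)
        - ∫ t in Icc (0:ℝ) x, (∫ s, F t s ∂L) ∂μ := by
    have hptw : EqOn (fun t => f t * ∫ s in (0:ℝ)..t, g s)
        (fun t => f t * (∫ s in (0:ℝ)..x, g s) - (∫ s, F t s ∂L)) (Icc 0 x) := by
      intro t ht
      have hadj := intervalIntegral.integral_add_adjacent_intervals (μ := volume)
        (monoIISC hg 0 t) (monoIISC hg t x)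
      have h3 := hGeq t ht
      simp only at h3 ⊢
      rw [h3, ← hadj]; ring
    rw [setIntegral_congr_fun measurableSet_Icc hptw,
      integral_sub ((monoIntOnSC hf 0 x).mul_const _) hGint, integral_mul_const]
  rw [hfirst, hsecond]; ring

end AuxSC

theorem stmt_6
    (μ : Measure ℝ) [IsProbabilityMeasure μ] [NullSingletonClass μ]
    (hsupp : μ (Set.Icc (0:ℝ) 1)ᶜ = 0)
    (p q : ℕ → ℝ → ℝ)
    (hp0 : ∀ x : ℝ, p 0 x = 1) (hq0 : ∀ x : ℝ, q 0 x = 1)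
    (hpodd : ∀ (n : ℕ) (x : ℝ), p (2*n+1) x = ∫ t in Set.Icc (0:ℝ) x, p (2*n) t ∂μ)
    (hpeven : ∀ (n : ℕ) (x : ℝ), p (2*n+2) x = ∫ t in (0:ℝ)..x, p (2*n+1) t)
    (hqodd : ∀ (n : ℕ) (x : ℝ), q (2*n+1) x = ∫ t in (0:ℝ)..x, q (2*n) t)
    (hqeven : ∀ (n : ℕ) (x : ℝ), q (2*n+2) x = ∫ t in Set.Icc (0:ℝ) x, q (2*n+1) t ∂μ)
    (Sp Sq Cp Cq : ℝ → ℝ → ℝ)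
    (hSp : ∀ (z x : ℝ), Sp z x = ∑' n : ℕ, (-1:ℝ)^n * z^(2*n+1) * p (2*n+1) x)
    (hSq : ∀ (z x : ℝ), Sq z x = ∑' n : ℕ, (-1:ℝ)^n * z^(2*n+1) * q (2*n+1) x)
    (hCp : ∀ (z x : ℝ), Cp z x = ∑' n : ℕ, (-1:ℝ)^n * z^(2*n) * p (2*n) x)
    (hCq : ∀ (z x : ℝ), Cq z x = ∑' n : ℕ, (-1:ℝ)^n * z^(2*n) * q (2*n) x) :
    ∀ x ∈ Set.Icc (0:ℝ) 1, ∀ z : ℝ,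
      Cq z x * Cp z x + Sq z x * Sp z x = 1 := by
  -- monotonicity and nonnegativity
  have master : ∀ k : ℕ, (Monotone (p (2*k)) ∧ ∀ t : ℝ, 0 ≤ t → 0 ≤ p (2*k) t)
      ∧ (Monotone (p (2*k+1)) ∧ ∀ t : ℝ, 0 ≤ p (2*k+1) t)
      ∧ (Monotone (q (2*k)) ∧ ∀ t : ℝ, 0 ≤ q (2*k) t)
      ∧ (Monotone (q (2*k+1)) ∧ ∀ t : ℝ, 0 ≤ t → 0 ≤ q (2*k+1) t) := by
    intro k
    induction k with
    | zero =>
      have hp0' : Monotone (p 0) ∧ ∀ t : ℝ, 0 ≤ p 0 t :=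
        ⟨fun a b _ => by rw [hp0, hp0], fun t => by rw [hp0]; norm_num⟩
      have hq0' : Monotone (q 0) ∧ ∀ t : ℝ, 0 ≤ q 0 t :=
        ⟨fun a b _ => by rw [hq0, hq0], fun t => by rw [hq0]; norm_num⟩
      have ep : p (2*0+1) = fun y => ∫ t in Icc (0:ℝ) y, p (2*0) t ∂μ := funext (hpodd 0)
      have eq1 : q (2*0+1) = fun y => ∫ t in (0:ℝ)..y, q (2*0) t := funext (hqodd 0)
      refine ⟨⟨hp0'.1, fun t _ => hp0'.2 t⟩, ⟨?_, ?_⟩, hq0', ⟨?_, ?_⟩⟩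
      · rw [ep]; exact muPrimMonoSC hp0'.1 (fun t _ => hp0'.2 t)
      · intro t; rw [ep]; exact muPrimNonnegSC (fun s _ => hp0'.2 s) t
      · rw [eq1]; exact lebPrimMonoSC hq0'.1 hq0'.2
      · intro t ht; rw [eq1]; exact lebPrimNonnegSC hq0'.2 ht
    | succ k ih =>
      obtain ⟨-, ⟨hpom, hpon⟩, -, ⟨hqom, hqon⟩⟩ := ih
      have h2 : 2*(k+1) = 2*k+2 := by ring
      have ep : p (2*(k+1)) = fun y => ∫ t in (0:ℝ)..y, p (2*k+1) t := by
        rw [h2]; exact funext (hpeven k)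
      have hpe : Monotone (p (2*(k+1))) ∧ ∀ t : ℝ, 0 ≤ t → 0 ≤ p (2*(k+1)) t := by
        constructor
        · rw [ep]; exact lebPrimMonoSC hpom hpon
        · intro t ht; rw [ep]; exact lebPrimNonnegSC hpon ht
      have eqv : q (2*(k+1)) = fun y => ∫ t in Icc (0:ℝ) y, q (2*k+1) t ∂μ := by
        rw [h2]; exact funext (hqeven k)
      have hqe : Monotone (q (2*(k+1))) ∧ ∀ t : ℝ, 0 ≤ q (2*(k+1)) t := by
        constructor
        · rw [eqv]; exact muPrimMonoSC hqom hqon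
        · intro t; rw [eqv]; exact muPrimNonnegSC hqon t
      have ep1 : p (2*(k+1)+1) = fun y => ∫ t in Icc (0:ℝ) y, p (2*(k+1)) t ∂μ :=
        funext (hpodd (k+1))
      have eq1 : q (2*(k+1)+1) = fun y => ∫ t in (0:ℝ)..y, q (2*(k+1)) t :=
        funext (hqodd (k+1))
      refine ⟨hpe, ⟨?_, ?_⟩, hqe, ⟨?_, ?_⟩⟩
      · rw [ep1]; exact muPrimMonoSC hpe.1 hpe.2
      · intro t; rw [ep1]; exact muPrimNonnegSC hpe.2 t
      · rw [eq1]; exact lebPrimMonoSC hqe.1 hqe.2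
      · intro t ht; rw [eq1]; exact lebPrimNonnegSC hqe.2 ht
  have hPem : ∀ n, Monotone (p (2*n)) := fun n => (master n).1.1
  have hPen : ∀ n, ∀ t : ℝ, 0 ≤ t → 0 ≤ p (2*n) t := fun n => (master n).1.2
  have hPom : ∀ n, Monotone (p (2*n+1)) := fun n => (master n).2.1.1
  have hPon : ∀ n, ∀ t : ℝ, 0 ≤ p (2*n+1) t := fun n => (master n).2.1.2
  have hQem : ∀ n, Monotone (q (2*n)) := fun n => (master n).2.2.1.1
  have hQen : ∀ n, ∀ t : ℝ, 0 ≤ q (2*n) t := fun n => (master n).2.2.1.2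
  have hQom : ∀ n, Monotone (q (2*n+1)) := fun n => (master n).2.2.2.1
  have hQon : ∀ n, ∀ t : ℝ, 0 ≤ t → 0 ≤ q (2*n+1) t := fun n => (master n).2.2.2.2
  have hμ1 : ∀ s : Set ℝ, (μ s).toReal ≤ 1 := fun s => by
    simpa using ENNReal.toReal_mono (by simp) (prob_le_one (μ := μ) (s := s))
  -- the bounds
  have bounds : ∀ k : ℕ, ∀ y ∈ Icc (0:ℝ) 1,
      p (2*k) y ≤ y^k / k.factorial ∧ p (2*k+1) y ≤ y^k / k.factorial
        ∧ q (2*k) y ≤ y^k / k.factorial ∧ q (2*k+1) y ≤ y^(k+1) / (k+1).factorial := by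
    intro k
    induction k with
    | zero =>
      intro y hy
      refine ⟨by simp [hp0], ?_, by simp [hq0], ?_⟩
      · have h1 : p (2*0+1) y = (μ (Icc (0:ℝ) y)).toReal := by
          rw [hpodd 0 y,
            setIntegral_congr_fun measurableSet_Icc (fun t _ => hp0 t)]
          simp [measureReal_def]
        rw [h1]; simpa using hμ1 (Icc 0 y)
      · have h1 : q (2*0+1) y = y := by
          rw [hqodd 0 y,
            intervalIntegral.integral_congr (g := fun _ => (1:ℝ)) (fun t _ => hq0 t)]
          simp
        rw [h1]; simp
    | succ k ih =>
      have hcast : ((k+1).factorial : ℝ) = (k+1) * k.factorial := by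
        rw [Nat.factorial_succ]; push_cast; ring
      have hcast2 : ((k+2).factorial : ℝ) = (k+2) * (k+1).factorial := by
        rw [show k+2 = (k+1)+1 by ring, Nat.factorial_succ]; push_cast; ring
      have hfk : (0:ℝ) < k.factorial := by exact_mod_cast k.factorial_pos
      have hfk1 : (0:ℝ) < (k+1).factorial := by exact_mod_cast (k+1).factorial_pos
      have hPe2 : ∀ y ∈ Icc (0:ℝ) 1, p (2*k+2) y ≤ y^(k+1) / (k+1).factorial := by
        intro y hy
        rw [hpeven k y]
        have hint : (∫ t in (0:ℝ)..y, (t^k / k.factorial))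
            = y^(k+1) / (k+1).factorial := by
          rw [intervalIntegral.integral_div, integral_pow, hcast]
          rw [zero_pow (Nat.succ_ne_zero k)]
          field_simp
          try ring
        rw [← hint]
        refine intervalIntegral.integral_mono_on hy.1 (monoIISC (hPom k) 0 y)
          (((continuous_pow k).div_const _).intervalIntegrable 0 y) ?_
        intro t ht
        exact (ih t ⟨ht.1, ht.2.trans hy.2⟩).2.1
      have hQe2 : ∀ y ∈ Icc (0:ℝ) 1, q (2*k+2) y ≤ y^(k+1) / (k+1).factorial := by
        intro y hy
        rw [hqeven k y]
        calc ∫ t in Icc (0:ℝ) y, q (2*k+1) t ∂μ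
            ≤ ∫ _t in Icc (0:ℝ) y, (y^(k+1) / (k+1).factorial) ∂μ := by
              refine setIntegral_mono_on (monoIntOnSC (hQom k) 0 y) (integrable_const _)
                measurableSet_Icc ?_
              intro t ht
              refine ((ih t ⟨ht.1, ht.2.trans hy.2⟩).2.2.2).trans ?_
              gcongr
              exacts [ht.1, ht.2]
          _ ≤ y^(k+1) / (k+1).factorial := by
              rw [setIntegral_const, smul_eq_mul]
              exact mul_le_of_le_one_left
                (div_nonneg (pow_nonneg hy.1 _) hfk1.le) (hμ1 _)
      intro y hy
      have h2 : 2*(k+1) = 2*k+2 := by ring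
      refine ⟨?_, ?_, ?_, ?_⟩
      · rw [h2]; exact hPe2 y hy
      · rw [hpodd (k+1) y]
        calc ∫ t in Icc (0:ℝ) y, p (2*(k+1)) t ∂μ
            ≤ ∫ _t in Icc (0:ℝ) y, (y^(k+1) / (k+1).factorial) ∂μ := by
              refine setIntegral_mono_on (monoIntOnSC (hPem (k+1)) 0 y) (integrable_const _)
                measurableSet_Icc ?_
              intro t ht
              rw [h2]
              refine (hPe2 t ⟨ht.1, ht.2.trans hy.2⟩).trans ?_
              gcongr
              exacts [ht.1, ht.2]
          _ ≤ y^(k+1) / (k+1).factorial := by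
              rw [setIntegral_const, smul_eq_mul]
              exact mul_le_of_le_one_left
                (div_nonneg (pow_nonneg hy.1 _) hfk1.le) (hμ1 _)
      · rw [h2]; exact hQe2 y hy
      · rw [hqodd (k+1) y]
        have hint : (∫ t in (0:ℝ)..y, (t^(k+1) / (k+1).factorial))
            = y^(k+1+1) / (k+1+1).factorial := by
          rw [intervalIntegral.integral_div, integral_pow]
          rw [show ((k+1+1).factorial:ℝ) = (k+1+1) * (k+1).factorial from by
            rw [Nat.factorial_succ]; push_cast; ring]
          rw [zero_pow (Nat.succ_ne_zero (k+1))]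
          field_simp
          push_cast; ring
        rw [← hint]
        refine intervalIntegral.integral_mono_on hy.1 (monoIISC (hQem (k+1)) 0 y)
          (((continuous_pow (k+1)).div_const _).intervalIntegrable 0 y) ?_
        intro t ht
        rw [h2]
        exact hQe2 t ⟨ht.1, ht.2.trans hy.2⟩
  -- main computation
  intro x hx z
  have hx0 : (0:ℝ) ≤ x := hx.1
  have hx1 : x ≤ 1 := hx.2
  -- coefficient identity
  have L1 : ∀ i j : ℕ, q (2*i+1) x * p (2*j+1) x
      = (∫ t in Icc (0:ℝ) x, (q (2*i+1) t * p (2*j) t) ∂μ)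
        + ∫ s in (0:ℝ)..x, (q (2*i) s * p (2*j+1) s) := by
    intro i j
    have h := partsSC (μ := μ) (hPem j) (hQem i) hx0
    simp only [← hpodd, ← hqodd] at h
    rw [mul_comm] at h
    rw [h]
    congr 1
    refine setIntegral_congr_fun measurableSet_Icc ?_
    intro t _
    exact mul_comm _ _
  have L2 : ∀ i j : ℕ, q (2*i+2) x * p (2*j+2) x
      = (∫ t in Icc (0:ℝ) x, (q (2*i+1) t * p (2*j+2) t) ∂μ)
        + ∫ s in (0:ℝ)..x, (q (2*i+2) s * p (2*j+1) s) := by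
    intro i j
    have h := partsSC (μ := μ) (hQom i) (hPom j) hx0
    simp only [← hpeven, ← hqeven] at h
    rw [h]
    congr 1
    refine intervalIntegral.integral_congr ?_
    intro s _
    exact mul_comm _ _
  have coeff : ∀ N : ℕ, (∑ k ∈ Finset.range (N+2), q (2*k) x * p (2*(N+1-k)) x)
      = ∑ k ∈ Finset.range (N+1), q (2*k+1) x * p (2*(N-k)+1) x := by
    intro N
    set A : ℕ → ℝ := fun i => ∫ s in (0:ℝ)..x, (q (2*i) s * p (2*(N-i)+1) s) with hA
    set B : ℕ → ℝ := fun i => ∫ t in Icc (0:ℝ) x, (q (2*i+1) t * p (2*(N-i)) t) ∂μ with hB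
    have hRHS : (∑ k ∈ Finset.range (N+1), q (2*k+1) x * p (2*(N-k)+1) x)
        = ∑ k ∈ Finset.range (N+1), (B k + A k) := by
      refine Finset.sum_congr rfl ?_
      intro k _
      rw [L1 k (N-k), hA, hB]
    have hfirstterm : q (2*0) x * p (2*(N+1-0)) x = A 0 := by
      simp only [hA, Nat.mul_zero, Nat.sub_zero]
      rw [hq0, one_mul, show 2*(N+1) = 2*N+2 from by ring, hpeven N x]
      refine intervalIntegral.integral_congr ?_
      intro s _
      simp [hq0]
    have hlastterm : q (2*(N+1)) x * p (2*(N+1-(N+1))) x = B N := by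
      simp only [hB, Nat.sub_self, Nat.mul_zero]
      rw [show (2*(N+1) : ℕ) = 2*N+2 from by ring, hp0, mul_one, hqeven N x]
      refine setIntegral_congr_fun measurableSet_Icc ?_
      intro t _
      simp [hp0]
    have hmid : ∀ i ∈ Finset.range N,
        q (2*(i+1)) x * p (2*(N+1-(i+1))) x = B i + A (i+1) := by
      intro i hi
      have hiN : i < N := Finset.mem_range.mp hi
      rw [show 2*(i+1) = 2*i+2 from by ring,
        show 2*(N+1-(i+1)) = 2*(N-1-i)+2 from by omega]
      rw [L2 i (N-1-i)]
      congr 1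
      · simp only [hB]
        rw [show 2*(N-i) = 2*(N-1-i)+2 from by omega]
      · simp only [hA]
        rw [show 2*(i+1) = 2*i+2 from by ring,
          show N-(i+1) = N-1-i from by omega]
    calc (∑ k ∈ Finset.range (N+2), q (2*k) x * p (2*(N+1-k)) x)
        = (∑ i ∈ Finset.range (N+1), q (2*(i+1)) x * p (2*(N+1-(i+1))) x)
            + q (2*0) x * p (2*(N+1-0)) x := by
          rw [show N+2 = (N+1)+1 from rfl]
          exact Finset.sum_range_succ' _ (N+1)
      _ = ((∑ i ∈ Finset.range N, q (2*(i+1)) x * p (2*(N+1-(i+1))) x)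
            + q (2*(N+1)) x * p (2*(N+1-(N+1))) x) + q (2*0) x * p (2*(N+1-0)) x := by
          rw [Finset.sum_range_succ]
      _ = ((∑ i ∈ Finset.range N, (B i + A (i+1))) + B N) + A 0 := by
          rw [Finset.sum_congr rfl hmid, hlastterm, hfirstterm]
      _ = ((∑ i ∈ Finset.range N, B i) + B N)
            + ((∑ i ∈ Finset.range N, A (i+1)) + A 0) := by
          rw [Finset.sum_add_distrib]; ring
      _ = (∑ i ∈ Finset.range (N+1), B i) + (∑ i ∈ Finset.range (N+1), A i) := by
          rw [← Finset.sum_range_succ, ← Finset.sum_range_succ']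
      _ = ∑ k ∈ Finset.range (N+1), (B k + A k) := by
          rw [Finset.sum_add_distrib]
      _ = _ := hRHS.symm
  -- summability bounds
  have habs_qe : ∀ n : ℕ, |q (2*n) x| ≤ 1 / n.factorial := by
    intro n
    rw [abs_of_nonneg (hQen n x)]
    refine ((bounds n x hx).2.2.1).trans ?_
    exact div_le_div₀ zero_le_one (pow_le_one₀ hx0 hx1)
      (by exact_mod_cast n.factorial_pos) le_rfl
  have habs_pe : ∀ n : ℕ, |p (2*n) x| ≤ 1 / n.factorial := by
    intro n
    rw [abs_of_nonneg (hPen n x hx0)]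
    refine ((bounds n x hx).1).trans ?_
    exact div_le_div₀ zero_le_one (pow_le_one₀ hx0 hx1)
      (by exact_mod_cast n.factorial_pos) le_rfl
  have habs_po : ∀ n : ℕ, |p (2*n+1) x| ≤ 1 / n.factorial := by
    intro n
    rw [abs_of_nonneg (hPon n x)]
    refine ((bounds n x hx).2.1).trans ?_
    exact div_le_div₀ zero_le_one (pow_le_one₀ hx0 hx1)
      (by exact_mod_cast n.factorial_pos) le_rfl
  have habs_qo : ∀ n : ℕ, |q (2*n+1) x| ≤ 1 / n.factorial := by
    intro n
    rw [abs_of_nonneg (hQon n x hx0)]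
    refine ((bounds n x hx).2.2.2).trans ?_
    have h1 : (n.factorial : ℝ) ≤ (n+1).factorial := by
      exact_mod_cast Nat.factorial_le (Nat.le_succ n)
    have h2 : x^(n+1) ≤ 1 := pow_le_one₀ hx0 hx1
    have h3 : (0:ℝ) < n.factorial := by exact_mod_cast n.factorial_pos
    exact div_le_div₀ zero_le_one h2 h3 h1
  -- summability of the four norm series
  have hsum_qe : Summable (fun n : ℕ => ‖(-1:ℝ)^n * z^(2*n) * q (2*n) x‖) := by
    refine Summable.of_nonneg_of_le (fun n => norm_nonneg _) ?_
      (Real.summable_pow_div_factorial (z^2))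
    intro n
    calc ‖(-1:ℝ)^n * z^(2*n) * q (2*n) x‖
        = |(-1:ℝ)^n| * |z^(2*n)| * |q (2*n) x| := by
          rw [Real.norm_eq_abs, abs_mul, abs_mul]
      _ = |z|^(2*n) * |q (2*n) x| := by simp [abs_pow]
      _ ≤ |z|^(2*n) * (1 / n.factorial) := by
          gcongr
          exact habs_qe n
      _ = (z^2)^n / n.factorial := by
          rw [pow_mul, sq_abs]; ring
  have hsum_pe : Summable (fun n : ℕ => ‖(-1:ℝ)^n * z^(2*n) * p (2*n) x‖) := by
    refine Summable.of_nonneg_of_le (fun n => norm_nonneg _) ?_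
      (Real.summable_pow_div_factorial (z^2))
    intro n
    calc ‖(-1:ℝ)^n * z^(2*n) * p (2*n) x‖
        = |(-1:ℝ)^n| * |z^(2*n)| * |p (2*n) x| := by
          rw [Real.norm_eq_abs, abs_mul, abs_mul]
      _ = |z|^(2*n) * |p (2*n) x| := by simp [abs_pow]
      _ ≤ |z|^(2*n) * (1 / n.factorial) := by
          gcongr
          exact habs_pe n
      _ = (z^2)^n / n.factorial := by
          rw [pow_mul, sq_abs]; ring
  have hsum_qo : Summable (fun n : ℕ => ‖(-1:ℝ)^n * z^(2*n+1) * q (2*n+1) x‖) := by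
    refine Summable.of_nonneg_of_le (fun n => norm_nonneg _)
      ?_ ((Real.summable_pow_div_factorial (z^2)).mul_left |z|)
    intro n
    calc ‖(-1:ℝ)^n * z^(2*n+1) * q (2*n+1) x‖
        = |(-1:ℝ)^n| * |z^(2*n+1)| * |q (2*n+1) x| := by
          rw [Real.norm_eq_abs, abs_mul, abs_mul]
      _ = |z|^(2*n+1) * |q (2*n+1) x| := by simp [abs_pow]
      _ ≤ |z|^(2*n+1) * (1 / n.factorial) := by
          gcongr
          exact habs_qo n
      _ = |z| * ((z^2)^n / n.factorial) := by
          rw [pow_succ, pow_mul, sq_abs]; ring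
  have hsum_po : Summable (fun n : ℕ => ‖(-1:ℝ)^n * z^(2*n+1) * p (2*n+1) x‖) := by
    refine Summable.of_nonneg_of_le (fun n => norm_nonneg _)
      ?_ ((Real.summable_pow_div_factorial (z^2)).mul_left |z|)
    intro n
    calc ‖(-1:ℝ)^n * z^(2*n+1) * p (2*n+1) x‖
        = |(-1:ℝ)^n| * |z^(2*n+1)| * |p (2*n+1) x| := by
          rw [Real.norm_eq_abs, abs_mul, abs_mul]
      _ = |z|^(2*n+1) * |p (2*n+1) x| := by simp [abs_pow]
      _ ≤ |z|^(2*n+1) * (1 / n.factorial) := by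
          gcongr
          exact habs_po n
      _ = |z| * ((z^2)^n / n.factorial) := by
          rw [pow_succ, pow_mul, sq_abs]; ring
  -- Cauchy products
  set u : ℕ → ℝ := fun n =>
    (-1:ℝ)^n * z^(2*n) * ∑ k ∈ Finset.range (n+1), q (2*k) x * p (2*(n-k)) x with hu
  have huterm : ∀ n : ℕ, (∑ kl ∈ Finset.HasAntidiagonal.antidiagonal n,
      ((-1:ℝ)^kl.1 * z^(2*kl.1) * q (2*kl.1) x)
        * ((-1:ℝ)^kl.2 * z^(2*kl.2) * p (2*kl.2) x)) = u n := by
    intro n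
    rw [Finset.Nat.sum_antidiagonal_eq_sum_range_succ_mk]
    simp only [hu]
    rw [Finset.mul_sum]
    refine Finset.sum_congr rfl ?_
    intro k hk
    have hkn : k ≤ n := Nat.lt_succ_iff.mp (Finset.mem_range.mp hk)
    have h1 : ((-1:ℝ))^k * (-1:ℝ)^(n-k) = (-1:ℝ)^n := by
      rw [← pow_add]; congr 1; omega
    have h2 : z^(2*k) * z^(2*(n-k)) = z^(2*n) := by
      rw [← pow_add]; congr 1; omega
    calc ((-1:ℝ)^k * z^(2*k) * q (2*k) x) * ((-1:ℝ)^(n-k) * z^(2*(n-k)) * p (2*(n-k)) x)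
        = (((-1:ℝ))^k * (-1:ℝ)^(n-k)) * (z^(2*k) * z^(2*(n-k)))
            * (q (2*k) x * p (2*(n-k)) x) := by ring
      _ = (-1:ℝ)^n * z^(2*n) * (q (2*k) x * p (2*(n-k)) x) := by rw [h1, h2]
  have he1 : Cq z x * Cp z x = ∑' n, u n := by
    rw [hCq, hCp, tsum_mul_tsum_eq_tsum_sum_antidiagonal_of_summable_norm hsum_qe hsum_pe]
    exact tsum_congr huterm
  have he2 : Sq z x * Sp z x = ∑' n, -(u (n+1)) := by
    rw [hSq, hSp, tsum_mul_tsum_eq_tsum_sum_antidiagonal_of_summable_norm hsum_qo hsum_po]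
    refine tsum_congr ?_
    intro n
    have hstep : (∑ kl ∈ Finset.HasAntidiagonal.antidiagonal n,
        ((-1:ℝ)^kl.1 * z^(2*kl.1+1) * q (2*kl.1+1) x)
          * ((-1:ℝ)^kl.2 * z^(2*kl.2+1) * p (2*kl.2+1) x))
        = (-1:ℝ)^n * z^(2*n+2)
            * ∑ k ∈ Finset.range (n+1), q (2*k+1) x * p (2*(n-k)+1) x := by
      rw [Finset.Nat.sum_antidiagonal_eq_sum_range_succ_mk, Finset.mul_sum]
      refine Finset.sum_congr rfl ?_
      intro k hk
      have hkn : k ≤ n := Nat.lt_succ_iff.mp (Finset.mem_range.mp hk)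
      have h1 : ((-1:ℝ))^k * (-1:ℝ)^(n-k) = (-1:ℝ)^n := by
        rw [← pow_add]; congr 1; omega
      have h2 : z^(2*k+1) * z^(2*(n-k)+1) = z^(2*n+2) := by
        rw [← pow_add]; congr 1; omega
      calc ((-1:ℝ)^k * z^(2*k+1) * q (2*k+1) x)
            * ((-1:ℝ)^(n-k) * z^(2*(n-k)+1) * p (2*(n-k)+1) x)
          = (((-1:ℝ))^k * (-1:ℝ)^(n-k)) * (z^(2*k+1) * z^(2*(n-k)+1))
              * (q (2*k+1) x * p (2*(n-k)+1) x) := by ring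
        _ = (-1:ℝ)^n * z^(2*n+2) * (q (2*k+1) x * p (2*(n-k)+1) x) := by rw [h1, h2]
    rw [hstep, ← coeff n]
    simp only [hu]
    rw [show 2*(n+1) = 2*n+2 from by omega, show n+1+1 = n+2 from by omega, pow_succ]
    ring
  have hsum_u : Summable u := by
    have h := summable_norm_sum_mul_antidiagonal_of_summable_norm hsum_qe hsum_pe
    exact (h.of_norm).congr huterm
  have hsum_u1 : Summable (fun n => u (n+1)) := (summable_nat_add_iff 1).mpr hsum_u
  have hu0 : u 0 = 1 := by
    rw [hu]
    simp [hq0, hp0]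
  rw [he1, he2, tsum_neg, hsum_u.tsum_eq_zero_add, hu0]
  ring
end

section
/- Suppose μ is symmetric. Then for every x ∈ [0,1]: (i) for all n ∈ ℕ₀, p_{2n+1}(x) = Σ_{k=0}^n p_{2k+1} q_{2n−2k}(x) − Σ_{k=1}^n p_{2k} p_{2n−2k+1}(x) − p_{2n+1}(1−x); (ii) for all n ∈ ℕ with n ≥ 1, p_{2n}(x) = Σ_{k=0}^{n−1} p_{2k+1} q_{2n−2k−1}(x) − Σ_{k=1}^n p_{2k} p_{2n−2k}(x) + p_{2n}(1−x). Here p_j := p_j(1), and a sum over an empty index range is 0. -/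
open MeasureTheory
open Set
set_option linter.unusedSectionVars false
set_option maxHeartbeats 1000000


namespace Stmt7Aux

variable {μ : Measure ℝ} [IsProbabilityMeasure μ] [NullSingletonClass μ]

noncomputable def cl (t : ℝ) : ℝ := max 0 (min 1 t)

lemma cl_mono : Monotone cl := fun s t hst => by
  unfold cl; exact max_le_max le_rfl (min_le_min le_rfl hst)

lemma cl_mem (t : ℝ) : cl t ∈ Icc (0:ℝ) 1 := by
  constructor
  · exact le_max_left _ _
  · unfold cl
    exact max_le (by norm_num) (min_le_left _ _)

lemma cl_eq {t : ℝ} (ht : t ∈ Icc (0:ℝ) 1) : cl t = t := by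
  unfold cl
  rw [min_eq_right ht.2, max_eq_right ht.1]

lemma ae_mem (hsupp : μ (Set.Icc (0:ℝ) 1)ᶜ = 0) : ∀ᵐ t ∂μ, t ∈ Icc (0:ℝ) 1 := by
  rw [ae_iff]
  have : {a : ℝ | ¬a ∈ Icc (0:ℝ) 1} = (Icc (0:ℝ) 1)ᶜ := rfl
  rw [this]; exact hsupp

lemma integrable_of_monotoneOn (hsupp : μ (Set.Icc (0:ℝ) 1)ᶜ = 0) {f : ℝ → ℝ}
    (hf : MonotoneOn f (Icc 0 1)) : Integrable f μ := by
  have hg : Monotone (fun t => f (cl t)) :=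
    fun s t hst => hf (cl_mem s) (cl_mem t) (cl_mono hst)
  have hbd : ∀ t, ‖f (cl t)‖ ≤ max ‖f 0‖ ‖f 1‖ := by
    intro t
    have h1 : f 0 ≤ f (cl t) := hf ⟨le_rfl, zero_le_one⟩ (cl_mem t) (cl_mem t).1
    have h2 : f (cl t) ≤ f 1 := hf (cl_mem t) ⟨zero_le_one, le_rfl⟩ (cl_mem t).2
    simp only [Real.norm_eq_abs]
    rw [abs_le]
    constructor
    · calc -(max |f 0| |f 1|) ≤ -|f 0| := by simp [le_max_left]
        _ ≤ f 0 := neg_abs_le _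
        _ ≤ f (cl t) := h1
    · calc f (cl t) ≤ f 1 := h2
        _ ≤ |f 1| := le_abs_self _
        _ ≤ max |f 0| |f 1| := le_max_right _ _
  have hint : Integrable (fun t => f (cl t)) μ :=
    ⟨hg.measurable.aestronglyMeasurable, HasFiniteIntegral.of_bounded (ae_of_all _ hbd)⟩
  refine hint.congr ?_
  filter_upwards [ae_mem hsupp] with t ht
  rw [cl_eq ht]

lemma intervalIntegrable_of_monotoneOn {f : ℝ → ℝ} (hf : MonotoneOn f (Icc 0 1))
    {a b : ℝ} (ha : a ∈ Icc (0:ℝ) 1) (hb : b ∈ Icc (0:ℝ) 1) :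
    IntervalIntegrable f volume a b := by
  refine MonotoneOn.intervalIntegrable (hf.mono ?_)
  rw [← uIcc_of_le (zero_le_one (α := ℝ))]
  exact uIcc_subset_uIcc (by rwa [uIcc_of_le zero_le_one]) (by rwa [uIcc_of_le zero_le_one])

lemma antitoneOn_comp {f : ℝ → ℝ} (hf : MonotoneOn f (Icc 0 1)) :
    AntitoneOn (fun t => f (1 - t)) (Icc (0:ℝ) 1) := by
  intro s hs t ht hst
  exact hf ⟨by linarith [ht.2], by linarith [ht.1]⟩ ⟨by linarith [hs.2], by linarith [hs.1]⟩
    (by linarith)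

lemma intervalIntegrable_comp {f : ℝ → ℝ} (hf : MonotoneOn f (Icc 0 1))
    {a b : ℝ} (ha : a ∈ Icc (0:ℝ) 1) (hb : b ∈ Icc (0:ℝ) 1) :
    IntervalIntegrable (fun t => f (1 - t)) volume a b := by
  refine AntitoneOn.intervalIntegrable ((antitoneOn_comp hf).mono ?_)
  rw [← uIcc_of_le (zero_le_one (α := ℝ))]
  exact uIcc_subset_uIcc (by rwa [uIcc_of_le zero_le_one]) (by rwa [uIcc_of_le zero_le_one])

end Stmt7Aux

namespace Stmt7Aux
lemma iiSum {ι : Type*} (s : Finset ι) {f : ι → ℝ → ℝ} {a b : ℝ}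
    (h : ∀ i ∈ s, IntervalIntegrable (f i) volume a b) :
    IntervalIntegrable (fun t => ∑ i ∈ s, f i t) volume a b := by
  have h0 := IntervalIntegrable.sum s h
  have heq : (∑ i ∈ s, f i) = fun t => ∑ i ∈ s, f i t := by funext t; simp
  rwa [heq] at h0
end Stmt7Aux

namespace Stmt7Aux2
open Stmt7Aux

variable {μ : Measure ℝ} [IsProbabilityMeasure μ] [NullSingletonClass μ]

lemma step_mu (hsupp : μ (Set.Icc (0:ℝ) 1)ᶜ = 0) {g : ℝ → ℝ}
    (hm : MonotoneOn g (Icc 0 1)) (h0 : ∀ t ∈ Icc (0:ℝ) 1, 0 ≤ g t)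
    {F : ℝ → ℝ} (hF : ∀ x, F x = ∫ t in Icc (0:ℝ) x, g t ∂μ) :
    MonotoneOn F (Icc 0 1) ∧ ∀ x ∈ Icc (0:ℝ) 1, 0 ≤ F x := by
  have hint : Integrable g μ := Stmt7Aux.integrable_of_monotoneOn hsupp hm
  have hnn : ∀ s : Set ℝ, MeasurableSet s → 0 ≤ ∫ t in s, g t ∂μ := by
    intro s hs
    refine setIntegral_nonneg_ae hs ?_
    filter_upwards [Stmt7Aux.ae_mem hsupp] with t ht _
    exact h0 t ht
  constructor
  · intro x hx y hy hxy
    rw [hF, hF]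
    have hu : Icc (0:ℝ) y = Icc 0 x ∪ Ioc x y := (Icc_union_Ioc_eq_Icc hx.1 hxy).symm
    have hdisj : Disjoint (Icc (0:ℝ) x) (Ioc x y) := by
      rw [Set.disjoint_left]
      intro t ht1 ht2
      exact absurd ht1.2 (not_le.mpr ht2.1)
    rw [hu, setIntegral_union hdisj measurableSet_Ioc hint.integrableOn hint.integrableOn]
    linarith [hnn (Ioc x y) measurableSet_Ioc]
  · intro x hx
    rw [hF]
    exact hnn _ measurableSet_Icc

lemma step_vol {g : ℝ → ℝ}
    (hm : MonotoneOn g (Icc 0 1)) (h0 : ∀ t ∈ Icc (0:ℝ) 1, 0 ≤ g t)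
    {F : ℝ → ℝ} (hF : ∀ x, F x = ∫ t in (0:ℝ)..x, g t) :
    MonotoneOn F (Icc 0 1) ∧ ∀ x ∈ Icc (0:ℝ) 1, 0 ≤ F x := by
  have hnn : ∀ a b : ℝ, a ∈ Icc (0:ℝ) 1 → b ∈ Icc (0:ℝ) 1 → a ≤ b →
      0 ≤ ∫ t in a..b, g t := by
    intro a b ha hb hab
    refine intervalIntegral.integral_nonneg hab ?_
    intro u hu
    exact h0 u ⟨le_trans ha.1 hu.1, le_trans hu.2 hb.2⟩
  constructor
  · intro x hx y hy hxy
    rw [hF, hF]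
    have hadd : (∫ t in (0:ℝ)..x, g t) + ∫ t in x..y, g t = ∫ t in (0:ℝ)..y, g t :=
      intervalIntegral.integral_add_adjacent_intervals
        (Stmt7Aux.intervalIntegrable_of_monotoneOn hm (by norm_num) hx)
        (Stmt7Aux.intervalIntegrable_of_monotoneOn hm hx ⟨le_trans hx.1 hxy, hy.2⟩)
    linarith [hnn x y hx hy hxy]
  · intro x hx
    rw [hF]
    exact hnn 0 x (by norm_num) hx hx.1

lemma map_eq (hsupp : μ (Set.Icc (0:ℝ) 1)ᶜ = 0)
    (hsym : ∀ x ∈ Set.Icc (0:ℝ) 1, μ (Set.Icc (0:ℝ) x) = μ (Set.Icc (1-x) 1)) :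
    μ.map (fun t : ℝ => 1 - t) = μ := by
  have hmeas : Measurable (fun t : ℝ => 1 - t) := measurable_const.sub measurable_id
  haveI : IsProbabilityMeasure (μ.map (fun t : ℝ => 1 - t)) :=
    Measure.isProbabilityMeasure_map hmeas.aemeasurable
  have key : ∀ s : Set ℝ, μ s = μ (s ∩ Icc 0 1) := fun s =>
    (measure_inter_conull hsupp).symm
  refine MeasureTheory.Measure.ext_of_Iic (μ.map _) μ ?_
  intro a
  rw [Measure.map_apply hmeas measurableSet_Iic]
  have hpre : (fun t:ℝ => 1 - t) ⁻¹' Iic a = Ici (1 - a) := by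
    ext t
    simp only [mem_preimage, mem_Iic, mem_Ici]
    constructor <;> intro h <;> linarith
  rw [hpre, key (Ici (1-a)), key (Iic a)]
  rcases lt_or_ge a 0 with ha | ha
  · have h1 : Ici (1-a) ∩ Icc (0:ℝ) 1 = ∅ := by
      ext t; simp only [mem_inter_iff, mem_Ici, mem_Icc, mem_empty_iff_false, iff_false]
      intro ⟨h1, h2, h3⟩; linarith
    have h2 : Iic a ∩ Icc (0:ℝ) 1 = ∅ := by
      ext t; simp only [mem_inter_iff, mem_Iic, mem_Icc, mem_empty_iff_false, iff_false]
      intro ⟨h1, h2, h3⟩; linarith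
    rw [h1, h2]
  rcases le_or_gt a 1 with ha' | ha'
  · have h1 : Ici (1-a) ∩ Icc (0:ℝ) 1 = Icc (1-a) 1 := by
      ext t; simp only [mem_inter_iff, mem_Ici, mem_Icc]
      constructor
      · rintro ⟨h1, h2, h3⟩; exact ⟨h1, h3⟩
      · rintro ⟨h1, h2⟩; exact ⟨h1, by linarith, h2⟩
    have h2 : Iic a ∩ Icc (0:ℝ) 1 = Icc 0 a := by
      ext t; simp only [mem_inter_iff, mem_Iic, mem_Icc]
      constructor
      · rintro ⟨h1, h2, h3⟩; exact ⟨h2, h1⟩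
      · rintro ⟨h1, h2⟩; exact ⟨h2, h1, by linarith⟩
    rw [h1, h2]
    exact (hsym a ⟨ha, ha'⟩).symm
  · have h1 : Ici (1-a) ∩ Icc (0:ℝ) 1 = Icc 0 1 := by
      ext t; simp only [mem_inter_iff, mem_Ici, mem_Icc]
      constructor
      · rintro ⟨h1, h2, h3⟩; exact ⟨h2, h3⟩
      · rintro ⟨h1, h2⟩; exact ⟨by linarith, h1, h2⟩
    have h2 : Iic a ∩ Icc (0:ℝ) 1 = Icc 0 1 := by
      ext t; simp only [mem_inter_iff, mem_Iic, mem_Icc]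
      constructor
      · rintro ⟨h1, h2, h3⟩; exact ⟨h2, h3⟩
      · rintro ⟨h1, h2⟩; exact ⟨by linarith, h1, h2⟩
    rw [h1, h2]

end Stmt7Aux2
namespace Stmt7Aux3
open Stmt7Aux Stmt7Aux2

variable {μ : Measure ℝ} [IsProbabilityMeasure μ] [NullSingletonClass μ]

lemma integrable_comp (hsupp : μ (Set.Icc (0:ℝ) 1)ᶜ = 0)
    (hsym : ∀ x ∈ Set.Icc (0:ℝ) 1, μ (Set.Icc (0:ℝ) x) = μ (Set.Icc (1-x) 1))
    {f : ℝ → ℝ} (hf : MonotoneOn f (Icc 0 1)) :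
    Integrable (fun t => f (1 - t)) μ := by
  have hemb : MeasurableEmbedding (fun t : ℝ => 1 - t) :=
    (MeasurableEquiv.subLeft (1:ℝ)).measurableEmbedding
  have h := hemb.integrable_map_iff (μ := μ) (g := f)
  rw [map_eq hsupp hsym] at h
  exact h.mp (integrable_of_monotoneOn hsupp hf)

lemma subst_mu (hsupp : μ (Set.Icc (0:ℝ) 1)ᶜ = 0)
    (hsym : ∀ x ∈ Set.Icc (0:ℝ) 1, μ (Set.Icc (0:ℝ) x) = μ (Set.Icc (1-x) 1))
    {f : ℝ → ℝ} (hf : MonotoneOn f (Icc 0 1)) {x : ℝ} (hx : x ∈ Icc (0:ℝ) 1) :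
    ∫ t in Icc (0:ℝ) x, f (1 - t) ∂μ
      = (∫ t in Icc (0:ℝ) 1, f t ∂μ) - ∫ t in Icc (0:ℝ) (1-x), f t ∂μ := by
  have hemb : MeasurableEmbedding (fun t : ℝ => 1 - t) :=
    (MeasurableEquiv.subLeft (1:ℝ)).measurableEmbedding
  have h1 : ∫ t in Icc (0:ℝ) x, f (1-t) ∂μ = ∫ t in Icc (1-x) 1, f t ∂μ := by
    have h := hemb.setIntegral_map (μ := μ) f (Icc (1-x) 1)
    rw [map_eq hsupp hsym] at h
    have hpre : (fun t : ℝ => 1 - t) ⁻¹' Icc (1-x) 1 = Icc 0 x := by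
      ext t
      simp only [Set.mem_preimage, Set.mem_Icc]
      constructor <;> intro h <;> constructor <;> linarith [h.1, h.2]
    rw [hpre] at h
    exact h.symm
  rw [h1]
  have hint : Integrable f μ := integrable_of_monotoneOn hsupp hf
  have hsplit : Icc (0:ℝ) 1 = Icc 0 (1-x) ∪ Ioc (1-x) 1 :=
    (Icc_union_Ioc_eq_Icc (by linarith [hx.2]) (by linarith [hx.1])).symm
  have hdisj : Disjoint (Icc (0:ℝ) (1-x)) (Ioc (1-x) 1) := by
    rw [Set.disjoint_left]
    intro t ht1 ht2
    exact absurd ht1.2 (not_le.mpr ht2.1)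
  rw [hsplit, setIntegral_union hdisj measurableSet_Ioc hint.integrableOn hint.integrableOn,
    setIntegral_congr_set (Ioc_ae_eq_Icc (μ := μ) (a := 1-x) (b := 1))]
  ring

lemma subst_vol {f : ℝ → ℝ} (hf : MonotoneOn f (Icc 0 1)) {x : ℝ} (hx : x ∈ Icc (0:ℝ) 1) :
    (∫ t in (0:ℝ)..x, f (1 - t)) = (∫ t in (0:ℝ)..1, f t) - ∫ t in (0:ℝ)..(1-x), f t := by
  have h1 : (∫ t in (0:ℝ)..x, f (1 - t)) = ∫ t in (1-x)..(1-(0:ℝ)), f t :=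
    intervalIntegral.integral_comp_sub_left f 1
  rw [h1, sub_zero]
  exact (intervalIntegral.integral_interval_sub_left
    (intervalIntegrable_of_monotoneOn hf (by norm_num) (by norm_num))
    (intervalIntegrable_of_monotoneOn hf (by norm_num)
      ⟨by linarith [hx.2], by linarith [hx.1]⟩)).symm

end Stmt7Aux3
namespace Stmt7Aux4
open Stmt7Aux Stmt7Aux2

variable {μ : Measure ℝ} [IsProbabilityMeasure μ] [NullSingletonClass μ]

lemma pq_props (hsupp : μ (Set.Icc (0:ℝ) 1)ᶜ = 0) (p q : ℕ → ℝ → ℝ)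
    (hp0 : ∀ x : ℝ, p 0 x = 1) (hq0 : ∀ x : ℝ, q 0 x = 1)
    (hpodd : ∀ (n : ℕ) (x : ℝ), p (2*n+1) x = ∫ t in Set.Icc (0:ℝ) x, p (2*n) t ∂μ)
    (hpeven : ∀ (n : ℕ) (x : ℝ), p (2*n+2) x = ∫ t in (0:ℝ)..x, p (2*n+1) t)
    (hqodd : ∀ (n : ℕ) (x : ℝ), q (2*n+1) x = ∫ t in (0:ℝ)..x, q (2*n) t)
    (hqeven : ∀ (n : ℕ) (x : ℝ), q (2*n+2) x = ∫ t in Set.Icc (0:ℝ) x, q (2*n+1) t ∂μ) :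
    ∀ n : ℕ, (MonotoneOn (p n) (Icc 0 1) ∧ ∀ x ∈ Icc (0:ℝ) 1, 0 ≤ p n x)
      ∧ (MonotoneOn (q n) (Icc 0 1) ∧ ∀ x ∈ Icc (0:ℝ) 1, 0 ≤ q n x) := by
  intro n
  induction n with
  | zero =>
    refine ⟨⟨?_, ?_⟩, ?_, ?_⟩
    · intro a _ b _ _; rw [hp0, hp0]
    · intro x _; rw [hp0]; norm_num
    · intro a _ b _ _; rw [hq0, hq0]
    · intro x _; rw [hq0]; norm_num
  | succ n ih =>
    rcases Nat.even_or_odd n with he | ho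
    · obtain ⟨m, hm⟩ := he
      have hFp : ∀ x, p (n+1) x = ∫ t in Icc (0:ℝ) x, p n t ∂μ := by
        intro x
        rw [show n + 1 = 2*m+1 by omega, hpodd m x, show 2*m = n by omega]
      have hFq : ∀ x, q (n+1) x = ∫ t in (0:ℝ)..x, q n t := by
        intro x
        rw [show n + 1 = 2*m+1 by omega, hqodd m x, show 2*m = n by omega]
      exact ⟨step_mu hsupp ih.1.1 ih.1.2 hFp, step_vol ih.2.1 ih.2.2 hFq⟩
    · obtain ⟨m, hm⟩ := ho
      have hFp : ∀ x, p (n+1) x = ∫ t in (0:ℝ)..x, p n t := by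
        intro x
        rw [show n + 1 = 2*m+2 by omega, hpeven m x, show 2*m+1 = n by omega]
      have hFq : ∀ x, q (n+1) x = ∫ t in Icc (0:ℝ) x, q n t ∂μ := by
        intro x
        rw [show n + 1 = 2*m+2 by omega, hqeven m x, show 2*m+1 = n by omega]
      exact ⟨step_vol ih.1.1 ih.1.2 hFp, step_mu hsupp ih.2.1 ih.2.2 hFq⟩

end Stmt7Aux4

theorem stmt_7
    (μ : Measure ℝ) [IsProbabilityMeasure μ] [NullSingletonClass μ]
    (hsupp : μ (Set.Icc (0:ℝ) 1)ᶜ = 0)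
    (p q : ℕ → ℝ → ℝ)
    (hp0 : ∀ x : ℝ, p 0 x = 1) (hq0 : ∀ x : ℝ, q 0 x = 1)
    (hpodd : ∀ (n : ℕ) (x : ℝ), p (2*n+1) x = ∫ t in Set.Icc (0:ℝ) x, p (2*n) t ∂μ)
    (hpeven : ∀ (n : ℕ) (x : ℝ), p (2*n+2) x = ∫ t in (0:ℝ)..x, p (2*n+1) t)
    (hqodd : ∀ (n : ℕ) (x : ℝ), q (2*n+1) x = ∫ t in (0:ℝ)..x, q (2*n) t)
    (hqeven : ∀ (n : ℕ) (x : ℝ), q (2*n+2) x = ∫ t in Set.Icc (0:ℝ) x, q (2*n+1) t ∂μ)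
    (hsym : ∀ x ∈ Set.Icc (0:ℝ) 1, μ (Set.Icc (0:ℝ) x) = μ (Set.Icc (1-x) 1)) :
    ∀ x ∈ Set.Icc (0:ℝ) 1,
      (∀ n : ℕ,
        p (2*n+1) x =
          (∑ k ∈ Finset.range (n+1), p (2*k+1) 1 * q (2*n-2*k) x)
          - (∑ k ∈ Finset.Icc 1 n, p (2*k) 1 * p (2*n-2*k+1) x)
          - p (2*n+1) (1-x)) ∧
      (∀ n : ℕ, 1 ≤ n →
        p (2*n) x =
          (∑ k ∈ Finset.range n, p (2*k+1) 1 * q (2*n-2*k-1) x)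
          - (∑ k ∈ Finset.Icc 1 n, p (2*k) 1 * p (2*n-2*k) x)
          + p (2*n) (1-x)) := by
  have props := Stmt7Aux4.pq_props hsupp p q hp0 hq0 hpodd hpeven hqodd hqeven
  have pmono : ∀ n, MonotoneOn (p n) (Icc 0 1) := fun n => (props n).1.1
  have qmono : ∀ n, MonotoneOn (q n) (Icc 0 1) := fun n => (props n).2.1
  -- base case
  have P0 : ∀ y ∈ Set.Icc (0:ℝ) 1,
      p (2*0+1) y = (∑ k ∈ Finset.range (0+1), p (2*k+1) 1 * q (2*0-2*k) y)
        - (∑ k ∈ Finset.Icc 1 0, p (2*k) 1 * p (2*0-2*k+1) y) - p (2*0+1) (1-y) := by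
    intro x hx
    have hsub := Stmt7Aux3.subst_mu hsupp hsym (pmono 0) hx
    rw [show (fun t : ℝ => p 0 (1 - t)) = p 0 from funext fun t => by rw [hp0, hp0]] at hsub
    have h1 : p (2*0+1) x = (∫ t in Icc (0:ℝ) 1, p 0 t ∂μ) - ∫ t in Icc (0:ℝ) (1-x), p 0 t ∂μ := by
      rw [hpodd 0 x]; exact hsub
    rw [h1, ← hpodd 0 1, ← hpodd 0 (1-x)]
    rw [Finset.sum_range_one, show (2*0-2*0 : ℕ) = 0 by norm_num, hq0,
      show Finset.Icc 1 0 = (∅ : Finset ℕ) from rfl, Finset.sum_empty]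
    ring
  -- step P n → Q n
  have PQ : ∀ n : ℕ,
      (∀ y ∈ Set.Icc (0:ℝ) 1,
        p (2*n+1) y = (∑ k ∈ Finset.range (n+1), p (2*k+1) 1 * q (2*n-2*k) y)
          - (∑ k ∈ Finset.Icc 1 n, p (2*k) 1 * p (2*n-2*k+1) y) - p (2*n+1) (1-y)) →
      (∀ y ∈ Set.Icc (0:ℝ) 1,
        p (2*n+2) y = (∑ k ∈ Finset.range (n+1), p (2*k+1) 1 * q (2*n+1-2*k) y)
          - (∑ k ∈ Finset.Icc 1 (n+1), p (2*k) 1 * p (2*n+2-2*k) y) + p (2*n+2) (1-y)) := by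
    intro n ihP x hx
    have h0mem : (0:ℝ) ∈ Icc (0:ℝ) 1 := by norm_num
    have hIq : ∀ j, IntervalIntegrable (q j) volume 0 x :=
      fun j => Stmt7Aux.intervalIntegrable_of_monotoneOn (qmono j) h0mem hx
    have hIp : ∀ j, IntervalIntegrable (p j) volume 0 x :=
      fun j => Stmt7Aux.intervalIntegrable_of_monotoneOn (pmono j) h0mem hx
    have hIw : IntervalIntegrable (fun t => p (2*n+1) (1-t)) volume 0 x :=
      Stmt7Aux.intervalIntegrable_comp (pmono (2*n+1)) h0mem hx
    have hS1i : IntervalIntegrable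
        (fun t => ∑ k ∈ Finset.range (n+1), p (2*k+1) 1 * q (2*n-2*k) t) volume 0 x :=
      Stmt7Aux.iiSum _ (fun k _ => (hIq _).const_mul _)
    have hS2i : IntervalIntegrable
        (fun t => ∑ k ∈ Finset.Icc 1 n, p (2*k) 1 * p (2*n-2*k+1) t) volume 0 x :=
      Stmt7Aux.iiSum _ (fun k _ => (hIp _).const_mul _)
    have e0 : p (2*n+2) x =
        (∫ t in (0:ℝ)..x, ∑ k ∈ Finset.range (n+1), p (2*k+1) 1 * q (2*n-2*k) t)
        - (∫ t in (0:ℝ)..x, ∑ k ∈ Finset.Icc 1 n, p (2*k) 1 * p (2*n-2*k+1) t)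
        - ∫ t in (0:ℝ)..x, p (2*n+1) (1-t) := by
      rw [hpeven n x]
      rw [intervalIntegral.integral_congr (g := fun t =>
        (∑ k ∈ Finset.range (n+1), p (2*k+1) 1 * q (2*n-2*k) t)
        - (∑ k ∈ Finset.Icc 1 n, p (2*k) 1 * p (2*n-2*k+1) t) - p (2*n+1) (1-t)) ?_]
      · rw [intervalIntegral.integral_sub (hS1i.sub hS2i) hIw,
          intervalIntegral.integral_sub hS1i hS2i]
      · intro t ht
        rw [uIcc_of_le hx.1] at ht
        exact ihP t ⟨ht.1, le_trans ht.2 hx.2⟩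
    have e1 : (∫ t in (0:ℝ)..x, ∑ k ∈ Finset.range (n+1), p (2*k+1) 1 * q (2*n-2*k) t)
        = ∑ k ∈ Finset.range (n+1), p (2*k+1) 1 * q (2*n+1-2*k) x := by
      rw [intervalIntegral.integral_finset_sum (fun k _ => (hIq _).const_mul _)]
      refine Finset.sum_congr rfl fun k hk => ?_
      have hk' : k ≤ n := by
        have := Finset.mem_range.mp hk; omega
      rw [intervalIntegral.integral_const_mul]
      congr 1
      rw [show 2*n-2*k = 2*(n-k) by omega, show 2*n+1-2*k = 2*(n-k)+1 by omega]
      exact (hqodd (n-k) x).symm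
    have e2 : (∫ t in (0:ℝ)..x, ∑ k ∈ Finset.Icc 1 n, p (2*k) 1 * p (2*n-2*k+1) t)
        = ∑ k ∈ Finset.Icc 1 n, p (2*k) 1 * p (2*n+2-2*k) x := by
      rw [intervalIntegral.integral_finset_sum (fun k _ => (hIp _).const_mul _)]
      refine Finset.sum_congr rfl fun k hk => ?_
      have hk' : 1 ≤ k ∧ k ≤ n := by
        have := Finset.mem_Icc.mp hk; omega
      rw [intervalIntegral.integral_const_mul]
      congr 1
      rw [show 2*n-2*k+1 = 2*(n-k)+1 by omega, show 2*n+2-2*k = 2*(n-k)+2 by omega]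
      exact (hpeven (n-k) x).symm
    have e3 : (∫ t in (0:ℝ)..x, p (2*n+1) (1-t)) = p (2*n+2) 1 - p (2*n+2) (1-x) := by
      rw [Stmt7Aux3.subst_vol (pmono (2*n+1)) hx, ← hpeven n 1, ← hpeven n (1-x)]
    rw [e1, e2, e3] at e0
    rw [Finset.sum_Icc_succ_top (by omega : 1 ≤ n + 1)]
    rw [show 2*n+2-2*(n+1) = 0 by omega, hp0, show 2*(n+1) = 2*n+2 by ring]
    linarith
  -- step Q n → P (n+1)
  have QP : ∀ n : ℕ,
      (∀ y ∈ Set.Icc (0:ℝ) 1,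
        p (2*n+2) y = (∑ k ∈ Finset.range (n+1), p (2*k+1) 1 * q (2*n+1-2*k) y)
          - (∑ k ∈ Finset.Icc 1 (n+1), p (2*k) 1 * p (2*n+2-2*k) y) + p (2*n+2) (1-y)) →
      (∀ y ∈ Set.Icc (0:ℝ) 1,
        p (2*(n+1)+1) y = (∑ k ∈ Finset.range (n+1+1), p (2*k+1) 1 * q (2*(n+1)-2*k) y)
          - (∑ k ∈ Finset.Icc 1 (n+1), p (2*k) 1 * p (2*(n+1)-2*k+1) y)
          - p (2*(n+1)+1) (1-y)) := by
    intro n ihQ x hx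
    have hIq : ∀ j, IntegrableOn (q j) (Icc 0 x) μ :=
      fun j => (Stmt7Aux.integrable_of_monotoneOn hsupp (qmono j)).integrableOn
    have hIp : ∀ j, IntegrableOn (p j) (Icc 0 x) μ :=
      fun j => (Stmt7Aux.integrable_of_monotoneOn hsupp (pmono j)).integrableOn
    have hIw : IntegrableOn (fun t => p (2*n+2) (1-t)) (Icc 0 x) μ :=
      (Stmt7Aux3.integrable_comp hsupp hsym (pmono (2*n+2))).integrableOn
    have hS1i : IntegrableOn
        (fun t => ∑ k ∈ Finset.range (n+1), p (2*k+1) 1 * q (2*n+1-2*k) t) (Icc 0 x) μ :=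
      integrable_finset_sum _ (fun k _ => (hIq _).const_mul _)
    have hS2i : IntegrableOn
        (fun t => ∑ k ∈ Finset.Icc 1 (n+1), p (2*k) 1 * p (2*n+2-2*k) t) (Icc 0 x) μ :=
      integrable_finset_sum _ (fun k _ => (hIp _).const_mul _)
    have e0 : p (2*(n+1)+1) x =
        (∫ t in Icc (0:ℝ) x, ∑ k ∈ Finset.range (n+1), p (2*k+1) 1 * q (2*n+1-2*k) t ∂μ)
        - (∫ t in Icc (0:ℝ) x, ∑ k ∈ Finset.Icc 1 (n+1), p (2*k) 1 * p (2*n+2-2*k) t ∂μ)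
        + ∫ t in Icc (0:ℝ) x, p (2*n+2) (1-t) ∂μ := by
      rw [hpodd (n+1) x, show 2*(n+1) = 2*n+2 by ring]
      rw [setIntegral_congr_ae (measurableSet_Icc) (g := fun t =>
        (∑ k ∈ Finset.range (n+1), p (2*k+1) 1 * q (2*n+1-2*k) t)
        - (∑ k ∈ Finset.Icc 1 (n+1), p (2*k) 1 * p (2*n+2-2*k) t) + p (2*n+2) (1-t)) ?_]
      · have hsub : IntegrableOn (fun t =>
            (∑ k ∈ Finset.range (n+1), p (2*k+1) 1 * q (2*n+1-2*k) t)
            - ∑ k ∈ Finset.Icc 1 (n+1), p (2*k) 1 * p (2*n+2-2*k) t) (Icc 0 x) μ :=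
          hS1i.sub hS2i
        rw [integral_add hsub hIw, integral_sub hS1i hS2i]
      · filter_upwards [Stmt7Aux.ae_mem hsupp] with t ht _
        exact ihQ t ht
    have e1 : (∫ t in Icc (0:ℝ) x, ∑ k ∈ Finset.range (n+1), p (2*k+1) 1 * q (2*n+1-2*k) t ∂μ)
        = ∑ k ∈ Finset.range (n+1), p (2*k+1) 1 * q (2*(n+1)-2*k) x := by
      rw [integral_finset_sum _ (fun k _ => (hIq _).const_mul _)]
      refine Finset.sum_congr rfl fun k hk => ?_
      have hk' : k ≤ n := by
        have := Finset.mem_range.mp hk; omega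
      rw [integral_const_mul]
      congr 1
      rw [show 2*n+1-2*k = 2*(n-k)+1 by omega, show 2*(n+1)-2*k = 2*(n-k)+2 by omega]
      exact (hqeven (n-k) x).symm
    have e2 : (∫ t in Icc (0:ℝ) x, ∑ k ∈ Finset.Icc 1 (n+1), p (2*k) 1 * p (2*n+2-2*k) t ∂μ)
        = ∑ k ∈ Finset.Icc 1 (n+1), p (2*k) 1 * p (2*(n+1)-2*k+1) x := by
      rw [integral_finset_sum _ (fun k _ => (hIp _).const_mul _)]
      refine Finset.sum_congr rfl fun k hk => ?_
      have hk' : 1 ≤ k ∧ k ≤ n + 1 := by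
        have := Finset.mem_Icc.mp hk; omega
      rw [integral_const_mul]
      congr 1
      rw [show 2*n+2-2*k = 2*(n+1-k) by omega, show 2*(n+1)-2*k+1 = 2*(n+1-k)+1 by omega]
      exact (hpodd (n+1-k) x).symm
    have e3 : (∫ t in Icc (0:ℝ) x, p (2*n+2) (1-t) ∂μ)
        = p (2*(n+1)+1) 1 - p (2*(n+1)+1) (1-x) := by
      rw [Stmt7Aux3.subst_mu hsupp hsym (pmono (2*n+2)) hx,
        show (2*n+2 : ℕ) = 2*(n+1) by ring, ← hpodd (n+1) 1, ← hpodd (n+1) (1-x)]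
    rw [e1, e2, e3] at e0
    rw [Finset.sum_range_succ, show 2*(n+1)-2*(n+1) = 0 by omega, hq0]
    linarith
  have key : ∀ n : ℕ,
      (∀ y ∈ Set.Icc (0:ℝ) 1,
        p (2*n+1) y = (∑ k ∈ Finset.range (n+1), p (2*k+1) 1 * q (2*n-2*k) y)
          - (∑ k ∈ Finset.Icc 1 n, p (2*k) 1 * p (2*n-2*k+1) y) - p (2*n+1) (1-y))
      ∧ (∀ y ∈ Set.Icc (0:ℝ) 1,
        p (2*n+2) y = (∑ k ∈ Finset.range (n+1), p (2*k+1) 1 * q (2*n+1-2*k) y)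
          - (∑ k ∈ Finset.Icc 1 (n+1), p (2*k) 1 * p (2*n+2-2*k) y) + p (2*n+2) (1-y)) := by
    intro n
    induction n with
    | zero => exact ⟨P0, PQ 0 P0⟩
    | succ n ih =>
      have hP := QP n ih.2
      exact ⟨hP, PQ (n+1) hP⟩
  intro x hx
  constructor
  · intro n
    exact (key n).1 x hx
  · intro n hn
    obtain ⟨m, rfl⟩ : ∃ m, n = m + 1 := ⟨n-1, by omega⟩
    have h := (key m).2 x hx
    rw [show 2*(m+1) = 2*m+2 by ring]
    have hsum : (∑ k ∈ Finset.range (m+1), p (2*k+1) 1 * q (2*m+2-2*k-1) x)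
        = ∑ k ∈ Finset.range (m+1), p (2*k+1) 1 * q (2*m+1-2*k) x :=
      Finset.sum_congr rfl fun k _ => by rw [show 2*m+2-2*k-1 = 2*m+1-2*k by omega]
    rw [hsum]
    exact h
end
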